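/- arXiv:math/0506092 — 4 statements merged into one kernel-verified Lean document; each statement's English description precedes it below -/
import Mathlib

section
/- Let p ≥ 1 be an integer, α > 0, and g : ℝ^p → ℝ a bounded Lipschitz function with |g| ≤ 1 and g(z_1,…,z_p) = 0 whenever |z_i| ≤ α for all i. Let π be a Borel measure on (0,∞) with ∫ min(r, r²) π(dr) < ∞, and (ν^{(a)})_{a>0} measures on (0,∞) supported on (0,a] with ∫ r² ν^{(a)}(dr) < ∞ satisfying Assumption (H). For (y_1,…,y_p) with 0 ≤ y_1 ≤ ⋯ ≤ y_p ≤ a define φ_a(y_1,…,y_p) = ∫ ν^{(a)}(dr) ∫_0^a du · g(r(1_{u ≤ y_1} − y_1/a), …, r(1_{u ≤ y_p} − y_p/a)). Then: (i) |φ_a(y_1,…,y_p)| ≤ (2/α) y_p ∫ ν^{(a)}(dr) r 1_{r > α}; and (ii) for every M > 0, sup over {0 ≤ y_1 ≤ ⋯ ≤ y_p ≤ M} of | φ_a(y_1,…,y_p) − ∫ π(dr) ∫_0^∞ du · g(r 1_{u ≤ y_1}, …, r 1_{u ≤ y_p}) | → 0 as a → ∞. -/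
open MeasureTheory Filter

/-- The integral of the test function `g` against the jump kernel of the
rescaled generalized Fleming-Viot process associated with the measure `ν` on
`(0,a]`:
`φ_a(y) = ∫ ν(dr) ∫_0^a du g(r(1_{u≤y₁} - y₁/a), …, r(1_{u≤y_p} - y_p/a))`. -/
noncomputable def phiChar {p : ℕ} (g : (Fin p → ℝ) → ℝ) (ν : Measure ℝ)
    (a : ℝ) (y : Fin p → ℝ) : ℝ :=
  ∫ r, (∫ u in Set.Ioc (0 : ℝ) a,
      g (fun i => r * ((if u ≤ y i then (1 : ℝ) else 0) - y i / a))) ∂ν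


open Set

private lemma aux_ae_mem {μ : Measure ℝ} {s : Set ℝ} (h : μ sᶜ = 0) : ∀ᵐ r ∂μ, r ∈ s := by
  rw [ae_iff]; exact h

private lemma aux_int_sq {μ : Measure ℝ} (hmom : ∫⁻ r, ENNReal.ofReal (r ^ 2) ∂μ < ⊤) :
    Integrable (fun r : ℝ => r ^ 2) μ := by
  refine ⟨(measurable_id.pow_const 2).aestronglyMeasurable, ?_⟩
  rw [hasFiniteIntegral_iff_norm]
  have : ∀ r : ℝ, ENNReal.ofReal ‖r ^ 2‖ = ENNReal.ofReal (r ^ 2) := fun r => by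
    rw [Real.norm_eq_abs, abs_of_nonneg (sq_nonneg r)]
  simpa only [this] using hmom

private lemma aux_integrable_dom {μ : Measure ℝ} {a : ℝ}
    (hsupp : μ (Set.Ioc 0 a)ᶜ = 0)
    (hmom : ∫⁻ r, ENNReal.ofReal (r ^ 2) ∂μ < ⊤)
    {h : ℝ → ℝ} (hm : AEStronglyMeasurable h μ) {c C : ℝ} (hc : 0 < c) (hC : 0 ≤ C)
    (hbd : ∀ r, 0 < r → r ≤ a → |h r| ≤ C ∧ (r ≤ c → h r = 0)) :
    Integrable h μ := by
  refine ((aux_int_sq hmom).const_mul (C / c ^ 2)).mono' hm ?_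
  filter_upwards [aux_ae_mem hsupp] with r hr
  obtain ⟨hb, hz⟩ := hbd r hr.1 hr.2
  rw [Real.norm_eq_abs]
  rcases le_or_gt r c with h1 | h1
  · rw [hz h1, abs_zero]
    positivity
  · refine hb.trans ?_
    rw [← sub_nonneg]
    have h2 : c ^ 2 ≤ r ^ 2 := by nlinarith
    have heq : C / c ^ 2 * r ^ 2 - C = C * ((r ^ 2 - c ^ 2) / c ^ 2) := by field_simp
    rw [heq]
    exact mul_nonneg hC (div_nonneg (by linarith) (by positivity))

private lemma aux_meas_u {n : ℕ} {g : (Fin (n+1) → ℝ) → ℝ} (hg : Continuous g)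
    (c d : Fin (n+1) → ℝ) (r : ℝ) :
    Measurable fun u : ℝ => g (fun i => r * ((if u ≤ c i then (1:ℝ) else 0) - d i)) := by
  refine hg.measurable.comp (measurable_pi_lambda _ fun i => ?_)
  refine measurable_const.mul (Measurable.sub ?_ measurable_const)
  exact Measurable.ite measurableSet_Iic measurable_const measurable_const

private lemma aux_arg_bd {r u ci di : ℝ} (hr : 0 ≤ r) (h0 : 0 ≤ di) (h1 : di ≤ 1) :
    |r * ((if u ≤ ci then (1:ℝ) else 0) - di)| ≤ r := by
  rw [abs_mul, abs_of_nonneg hr]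
  have h2 : |(if u ≤ ci then (1:ℝ) else 0) - di| ≤ 1 := by
    split_ifs <;> rw [abs_le] <;> constructor <;> linarith
  calc r * |(if u ≤ ci then (1:ℝ) else 0) - di| ≤ r * 1 := mul_le_mul_of_nonneg_left h2 hr
    _ = r := mul_one r

private lemma aux_meas_I {n : ℕ} {g : (Fin (n+1) → ℝ) → ℝ} (hg : Continuous g)
    (y : Fin (n+1) → ℝ) (a b c : ℝ) :
    StronglyMeasurable fun r : ℝ => ∫ u in Set.Ioc b c,
      g (fun i => r * ((if u ≤ y i then (1:ℝ) else 0) - y i / a)) := by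
  have : Measurable fun p : ℝ × ℝ =>
      g (fun i => p.1 * ((if p.2 ≤ y i then (1:ℝ) else 0) - y i / a)) := by
    refine hg.measurable.comp (measurable_pi_lambda _ fun i => ?_)
    refine measurable_fst.mul (Measurable.sub ?_ measurable_const)
    exact Measurable.ite (measurableSet_le measurable_snd measurable_const)
      measurable_const measurable_const
  exact this.stronglyMeasurable.integral_prod_right'

private lemma aux_int_u {f : ℝ → ℝ} (hm : Measurable f) (hb : ∀ u, |f u| ≤ 1) (b c : ℝ) :
    IntegrableOn f (Set.Ioc b c) := by
  refine Integrable.mono' (integrableOn_const (C := (1:ℝ)) measure_Ioc_lt_top.ne)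
    hm.aestronglyMeasurable ?_
  exact Eventually.of_forall fun u => by simpa [Real.norm_eq_abs] using hb u

private def auxw {n : ℕ} (y : Fin (n+1) → ℝ) : ℕ → ℝ :=
  fun k => if k = 0 then 0 else y ⟨min (k-1) n, Nat.lt_succ_of_le (Nat.min_le_right _ _)⟩

private lemma auxw_zero {n : ℕ} (y : Fin (n+1) → ℝ) : auxw y 0 = 0 := rfl

private lemma auxw_succ {n : ℕ} (y : Fin (n+1) → ℝ) {k : ℕ} (hk : k ≤ n) :
    auxw y (k+1) = y ⟨k, Nat.lt_succ_of_le hk⟩ := by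
  simp [auxw, Nat.min_eq_left hk]

private lemma auxw_last {n : ℕ} (y : Fin (n+1) → ℝ) : auxw y (n+1) = y (Fin.last n) := by
  simp [auxw, Fin.last]

private lemma auxw_step {n : ℕ} {y : Fin (n+1) → ℝ} (hm : Monotone y) (h0 : ∀ i, 0 ≤ y i)
    (k : ℕ) : auxw y k ≤ auxw y (k+1) := by
  cases k with
  | zero => rw [auxw_zero, auxw_succ y (Nat.zero_le n)]; exact h0 _
  | succ m =>
    simp only [auxw, if_neg (Nat.succ_ne_zero m), if_neg (Nat.succ_ne_zero (m+1))]
    exact hm (by rw [Fin.le_def]; simp)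

private lemma auxw_mono {n : ℕ} {y : Fin (n+1) → ℝ} (hm : Monotone y) (h0 : ∀ i, 0 ≤ y i) :
    Monotone (auxw y) := monotone_nat_of_le_succ (auxw_step hm h0)

private lemma aux_pattern {n : ℕ} {y : Fin (n+1) → ℝ} (hm : Monotone y) {k : ℕ} (hk : k ≤ n)
    {u : ℝ} (hu : u ∈ Set.Ioc (auxw y k) (auxw y (k+1))) (i : Fin (n+1)) :
    (u ≤ y i) ↔ k ≤ (i : ℕ) := by
  constructor
  · intro h
    by_contra hlt
    push_neg at hlt
    obtain ⟨m, rfl⟩ : ∃ m, k = m + 1 := ⟨k-1, by omega⟩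
    have h1 : y i ≤ auxw y (m+1) := by
      rw [auxw_succ y (by omega)]
      exact hm (by rw [Fin.le_def]; simpa using by omega)
    exact absurd (h.trans h1) (not_le.mpr hu.1)
  · intro h
    have h1 : auxw y (k+1) ≤ y i := by
      rw [auxw_succ y hk]
      exact hm (by rw [Fin.le_def]; simpa using h)
    exact hu.2.trans h1

private lemma aux_meas_u0 {n : ℕ} {g : (Fin (n+1) → ℝ) → ℝ} (hg : Continuous g)
    (c : Fin (n+1) → ℝ) (r : ℝ) :
    Measurable fun u : ℝ => g (fun i => r * (if u ≤ c i then (1:ℝ) else 0)) := by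
  refine hg.measurable.comp (measurable_pi_lambda _ fun i => ?_)
  exact measurable_const.mul
    (Measurable.ite measurableSet_Iic measurable_const measurable_const)

private lemma aux_psum {n : ℕ} {g : (Fin (n+1) → ℝ) → ℝ} (hg : Continuous g)
    (hg_bdd : ∀ z, |g z| ≤ 1)
    {y : Fin (n+1) → ℝ} (hm : Monotone y) (h0 : ∀ i, 0 ≤ y i) (r : ℝ) :
    ∫ u in Set.Ioc (0:ℝ) (y (Fin.last n)), g (fun i => r * (if u ≤ y i then (1:ℝ) else 0))
      = ∑ k ∈ Finset.range (n+1),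
          (auxw y (k+1) - auxw y k) * g (fun i => if k ≤ (i:ℕ) then r else 0) := by
  set f : ℝ → ℝ := fun u => g (fun i => r * (if u ≤ y i then (1:ℝ) else 0)) with hf
  have hfm : Measurable f := aux_meas_u0 hg y r
  have hII : ∀ k, k < n+1 → IntervalIntegrable f volume (auxw y k) (auxw y (k+1)) := by
    intro k _
    rw [intervalIntegrable_iff]
    exact aux_int_u hfm (fun u => hg_bdd _) _ _
  have hsum := intervalIntegral.sum_integral_adjacent_intervals hII
  rw [auxw_zero, auxw_last] at hsum
  rw [← intervalIntegral.integral_of_le ((h0 (Fin.last n)).trans (le_refl _)), ← hsum]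
  refine Finset.sum_congr rfl fun k hk => ?_
  have hk' : k ≤ n := by simpa using Nat.lt_succ_iff.mp (Finset.mem_range.mp hk)
  rw [intervalIntegral.integral_of_le (auxw_step hm h0 k)]
  have hcongr : ∀ u ∈ Set.Ioc (auxw y k) (auxw y (k+1)),
      f u = g (fun i => if k ≤ (i:ℕ) then r else 0) := by
    intro u hu
    show g _ = g _
    congr 1
    funext i
    by_cases hki : k ≤ (i:ℕ)
    · rw [if_pos ((aux_pattern hm hk' hu i).mpr hki), if_pos hki, mul_one]
    · rw [if_neg (fun hc => hki ((aux_pattern hm hk' hu i).mp hc)), if_neg hki, mul_zero]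
  rw [setIntegral_congr_fun measurableSet_Ioc hcongr, setIntegral_const, smul_eq_mul,
    Real.volume_real_Ioc_of_le (auxw_step hm h0 k)]

private lemma aux_part1 {n : ℕ} {α : ℝ} (hα : 0 < α) {g : (Fin (n+1) → ℝ) → ℝ}
    (hg_cont : Continuous g) (hg_bdd : ∀ z, |g z| ≤ 1)
    (hg_zero : ∀ z, (∀ i, |z i| ≤ α) → g z = 0)
    {μ : Measure ℝ} {a : ℝ} (ha : 0 < a)
    (hsupp : μ (Set.Ioc 0 a)ᶜ = 0) (hmom : ∫⁻ r, ENNReal.ofReal (r^2) ∂μ < ⊤)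
    (y : Fin (n+1) → ℝ) (hmono : Monotone y) (hy : ∀ i, 0 ≤ y i ∧ y i ≤ a) :
    |phiChar g μ a y| ≤ (2/α) * y (Fin.last n) * ∫ r in Set.Ioi α, r ∂μ := by
  set Y := y (Fin.last n) with hYdef
  have hY0 : 0 ≤ Y := (hy _).1
  have hYa : Y ≤ a := (hy _).2
  have hd : ∀ i, 0 ≤ y i / a ∧ y i / a ≤ 1 := fun i =>
    ⟨div_nonneg (hy i).1 ha.le, (div_le_one ha).2 (hy i).2⟩
  have hind : Integrable ((Set.Ioi α).indicator (fun t : ℝ => t)) μ := by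
    refine aux_integrable_dom hsupp hmom
      ((measurable_id.indicator measurableSet_Ioi).aestronglyMeasurable) hα ha.le
      (fun r hr0 hra => ⟨?_, fun hrα => ?_⟩)
    · by_cases h : r ∈ Set.Ioi α
      · rw [Set.indicator_of_mem h]; rw [abs_of_nonneg hr0.le]; exact hra
      · rw [Set.indicator_of_notMem h, abs_zero]; exact ha.le
    · exact Set.indicator_of_notMem (by simpa using hrα) _
  have key : ∀ r ∈ Set.Ioc 0 a,
      ‖∫ u in Set.Ioc (0:ℝ) a,
          g (fun i => r * ((if u ≤ y i then (1:ℝ) else 0) - y i / a))‖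
        ≤ (2/α) * Y * ((Set.Ioi α).indicator (fun t : ℝ => t) r) := by
    intro r hr
    by_cases hrα : r ≤ α
    · have hz : ∀ u ∈ Set.Ioc (0:ℝ) a,
          g (fun i => r * ((if u ≤ y i then (1:ℝ) else 0) - y i / a)) = 0 := fun u _ =>
        hg_zero _ (fun i => (aux_arg_bd hr.1.le (hd i).1 (hd i).2).trans hrα)
      rw [setIntegral_congr_fun measurableSet_Ioc hz,
        Set.indicator_of_notMem (by simpa using hrα)]
      simp
    · push_neg at hrα
      rw [Set.indicator_of_mem (Set.mem_Ioi.mpr hrα)]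
      have hint1 : IntegrableOn (fun u : ℝ =>
          g (fun i => r * ((if u ≤ y i then (1:ℝ) else 0) - y i / a))) (Set.Ioc 0 Y) :=
        aux_int_u (aux_meas_u hg_cont y (fun i => y i / a) r) (fun u => hg_bdd _) _ _
      have hint2 : IntegrableOn (fun u : ℝ =>
          g (fun i => r * ((if u ≤ y i then (1:ℝ) else 0) - y i / a))) (Set.Ioc Y a) :=
        aux_int_u (aux_meas_u hg_cont y (fun i => y i / a) r) (fun u => hg_bdd _) _ _
      have hsplit : ∫ u in Set.Ioc (0:ℝ) a,
            g (fun i => r * ((if u ≤ y i then (1:ℝ) else 0) - y i / a))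
          = (∫ u in Set.Ioc (0:ℝ) Y,
              g (fun i => r * ((if u ≤ y i then (1:ℝ) else 0) - y i / a)))
            + ∫ u in Set.Ioc Y a,
              g (fun i => r * ((if u ≤ y i then (1:ℝ) else 0) - y i / a)) := by
        rw [← setIntegral_union (Set.Ioc_disjoint_Ioc_of_le le_rfl) measurableSet_Ioc hint1 hint2,
          Set.Ioc_union_Ioc_eq_Ioc hY0 hYa]
      have hp1 : ‖∫ u in Set.Ioc (0:ℝ) Y,
          g (fun i => r * ((if u ≤ y i then (1:ℝ) else 0) - y i / a))‖ ≤ Y := by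
        have hb : ∀ u ∈ Set.Ioc (0:ℝ) Y,
            ‖g (fun i => r * ((if u ≤ y i then (1:ℝ) else 0) - y i / a))‖ ≤ 1 := by
          intro u _
          rw [Real.norm_eq_abs]
          exact hg_bdd _
        have := norm_setIntegral_le_of_norm_le_const (C := 1)
          (measure_Ioc_lt_top : volume (Set.Ioc (0:ℝ) Y) < ⊤) hb
        rwa [Real.volume_real_Ioc_of_le hY0, sub_zero, one_mul] at this
      have hc2 : ∀ u ∈ Set.Ioc Y a,
          g (fun i => r * ((if u ≤ y i then (1:ℝ) else 0) - y i / a))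
            = g (fun i => r * ((0:ℝ) - y i / a)) := by
        intro u hu
        congr 1
        funext i
        rw [if_neg (not_le.mpr ((hmono (Fin.le_last i)).trans_lt hu.1))]
      have hp2 : ∫ u in Set.Ioc Y a,
            g (fun i => r * ((if u ≤ y i then (1:ℝ) else 0) - y i / a))
          = (a - Y) * g (fun i => r * ((0:ℝ) - y i / a)) := by
        rw [setIntegral_congr_fun measurableSet_Ioc hc2, setIntegral_const, smul_eq_mul,
          Real.volume_real_Ioc_of_le hYa]
      rw [hsplit, hp2]
      by_cases hc : r * Y ≤ α * a
      · have hgz : g (fun i => r * ((0:ℝ) - y i / a)) = 0 := by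
          refine hg_zero _ (fun i => ?_)
          have h1 : |r * ((0:ℝ) - y i / a)| = r * (y i / a) := by
            rw [abs_mul, abs_of_nonneg hr.1.le, zero_sub, abs_neg, abs_of_nonneg (hd i).1]
          rw [h1, ← mul_div_assoc, div_le_iff₀ ha]
          calc r * y i ≤ r * Y := mul_le_mul_of_nonneg_left (hmono (Fin.le_last i)) hr.1.le
            _ ≤ α * a := hc
        rw [hgz, mul_zero, add_zero]
        have h3 : (2/α) * Y * r = 2*Y*r/α := by ring
        rw [h3, le_div_iff₀ hα]
        nlinarith [hp1, norm_nonneg (∫ u in Set.Ioc (0:ℝ) Y,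
          g (fun i => r * ((if u ≤ y i then (1:ℝ) else 0) - y i / a)))]
      · push_neg at hc
        have hp2n : ‖(a - Y) * g (fun i => r * ((0:ℝ) - y i / a))‖ ≤ a - Y := by
          rw [norm_mul, Real.norm_eq_abs, Real.norm_eq_abs, abs_of_nonneg (sub_nonneg.mpr hYa)]
          calc (a-Y) * |g fun i => r * ((0:ℝ) - y i / a)| ≤ (a-Y) * 1 :=
              mul_le_mul_of_nonneg_left (hg_bdd _) (sub_nonneg.mpr hYa)
            _ = a - Y := mul_one _
        calc ‖_ + _‖ ≤ Y + (a - Y) := by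
              exact (norm_add_le _ _).trans (add_le_add hp1 hp2n)
          _ ≤ (2/α) * Y * r := by
              have h3 : (2/α) * Y * r = 2*Y*r/α := by ring
              rw [h3, le_div_iff₀ hα]
              nlinarith
  calc |phiChar g μ a y| = ‖∫ r, (∫ u in Set.Ioc (0:ℝ) a,
        g (fun i => r * ((if u ≤ y i then (1:ℝ) else 0) - y i / a))) ∂μ‖ := rfl
    _ ≤ ∫ r, ‖∫ u in Set.Ioc (0:ℝ) a,
        g (fun i => r * ((if u ≤ y i then (1:ℝ) else 0) - y i / a))‖ ∂μ :=
      norm_integral_le_integral_norm _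
    _ ≤ ∫ r, (2/α) * Y * ((Set.Ioi α).indicator (fun t : ℝ => t) r) ∂μ := by
      refine integral_mono_of_nonneg (Eventually.of_forall fun r => norm_nonneg _)
        (hind.const_mul _) ?_
      filter_upwards [aux_ae_mem hsupp] with r hr
      exact key r hr
    _ = (2/α) * Y * ∫ r, (Set.Ioi α).indicator (fun t : ℝ => t) r ∂μ := integral_const_mul _ _
    _ = (2/α) * Y * ∫ r in Set.Ioi α, r ∂μ := by rw [integral_indicator measurableSet_Ioi]

private lemma aux_decomp {n : ℕ} {g : (Fin (n+1) → ℝ) → ℝ}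
    (hg_cont : Continuous g) (hg_bdd : ∀ z, |g z| ≤ 1)
    {y : Fin (n+1) → ℝ} (hmono : Monotone y) {a : ℝ} (ha : 0 < a)
    (hy : ∀ i, 0 ≤ y i ∧ y i ≤ a) (r : ℝ) :
    ∫ u in Set.Ioc (0:ℝ) a, g (fun i => r * ((if u ≤ y i then (1:ℝ) else 0) - y i / a))
      = (∫ u in Set.Ioc (0:ℝ) (y (Fin.last n)),
          (g (fun i => r * ((if u ≤ y i then (1:ℝ) else 0) - y i / a))
            - g (fun i => r * (if u ≤ y i then (1:ℝ) else 0))))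
        + (a - y (Fin.last n)) * g (fun i => r * ((0:ℝ) - y i / a))
        + ∑ k ∈ Finset.range (n+1),
            (auxw y (k+1) - auxw y k) * g (fun i => if k ≤ (i:ℕ) then r else 0) := by
  set Y := y (Fin.last n) with hYdef
  have hY0 : 0 ≤ Y := (hy _).1
  have hYa : Y ≤ a := (hy _).2
  have hint1 : IntegrableOn (fun u : ℝ =>
      g (fun i => r * ((if u ≤ y i then (1:ℝ) else 0) - y i / a))) (Set.Ioc 0 Y) :=
    aux_int_u (aux_meas_u hg_cont y (fun i => y i / a) r) (fun u => hg_bdd _) _ _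
  have hint2 : IntegrableOn (fun u : ℝ =>
      g (fun i => r * ((if u ≤ y i then (1:ℝ) else 0) - y i / a))) (Set.Ioc Y a) :=
    aux_int_u (aux_meas_u hg_cont y (fun i => y i / a) r) (fun u => hg_bdd _) _ _
  have hint0 : IntegrableOn (fun u : ℝ =>
      g (fun i => r * (if u ≤ y i then (1:ℝ) else 0))) (Set.Ioc 0 Y) :=
    aux_int_u (aux_meas_u0 hg_cont y r) (fun u => hg_bdd _) _ _
  have hsplit : ∫ u in Set.Ioc (0:ℝ) a,
        g (fun i => r * ((if u ≤ y i then (1:ℝ) else 0) - y i / a))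
      = (∫ u in Set.Ioc (0:ℝ) Y,
          g (fun i => r * ((if u ≤ y i then (1:ℝ) else 0) - y i / a)))
        + ∫ u in Set.Ioc Y a,
          g (fun i => r * ((if u ≤ y i then (1:ℝ) else 0) - y i / a)) := by
    rw [← setIntegral_union (Set.Ioc_disjoint_Ioc_of_le le_rfl) measurableSet_Ioc hint1 hint2,
      Set.Ioc_union_Ioc_eq_Ioc hY0 hYa]
  have hc2 : ∀ u ∈ Set.Ioc Y a,
      g (fun i => r * ((if u ≤ y i then (1:ℝ) else 0) - y i / a))
        = g (fun i => r * ((0:ℝ) - y i / a)) := by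
    intro u hu
    congr 1
    funext i
    rw [if_neg (not_le.mpr ((hmono (Fin.le_last i)).trans_lt hu.1))]
  have hp2 : ∫ u in Set.Ioc Y a,
        g (fun i => r * ((if u ≤ y i then (1:ℝ) else 0) - y i / a))
      = (a - Y) * g (fun i => r * ((0:ℝ) - y i / a)) := by
    rw [setIntegral_congr_fun measurableSet_Ioc hc2, setIntegral_const, smul_eq_mul,
      Real.volume_real_Ioc_of_le hYa]
  have hp1 : ∫ u in Set.Ioc (0:ℝ) Y,
        g (fun i => r * ((if u ≤ y i then (1:ℝ) else 0) - y i / a))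
      = (∫ u in Set.Ioc (0:ℝ) Y,
          (g (fun i => r * ((if u ≤ y i then (1:ℝ) else 0) - y i / a))
            - g (fun i => r * (if u ≤ y i then (1:ℝ) else 0))))
        + ∫ u in Set.Ioc (0:ℝ) Y, g (fun i => r * (if u ≤ y i then (1:ℝ) else 0)) := by
    rw [integral_sub hint1 hint0]
    ring
  rw [hsplit, hp2, hp1, aux_psum hg_cont hg_bdd hmono (fun i => (hy i).1) r]
  ring

private lemma aux_phi_pi {n : ℕ} {g : (Fin (n+1) → ℝ) → ℝ} {α : ℝ} (hα : 0 < α)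
    (hg_cont : Continuous g) (hg_bdd : ∀ z, |g z| ≤ 1)
    (hg_zero : ∀ z, (∀ i, |z i| ≤ α) → g z = 0)
    {y : Fin (n+1) → ℝ} (hmono : Monotone y) (h0 : ∀ i, 0 ≤ y i) (r : ℝ) :
    ∫ u in Set.Ioi (0:ℝ), g (fun i => r * (if u ≤ y i then (1:ℝ) else 0))
      = ∑ k ∈ Finset.range (n+1),
          (auxw y (k+1) - auxw y k) * g (fun i => if k ≤ (i:ℕ) then r else 0) := by
  set Y := y (Fin.last n) with hYdef
  have hY0 : 0 ≤ Y := h0 _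
  have hz2 : ∀ u ∈ Set.Ioi Y, g (fun i => r * (if u ≤ y i then (1:ℝ) else 0)) = 0 := by
    intro u hu
    have : (fun i => r * (if u ≤ y i then (1:ℝ) else 0)) = fun i => (0:ℝ) := by
      funext i
      rw [if_neg (not_le.mpr ((hmono (Fin.le_last i)).trans_lt hu)), mul_zero]
    rw [this]
    exact hg_zero _ (fun i => by rw [abs_zero]; exact hα.le)
  have hint1 : IntegrableOn (fun u : ℝ =>
      g (fun i => r * (if u ≤ y i then (1:ℝ) else 0))) (Set.Ioc 0 Y) :=
    aux_int_u (aux_meas_u0 hg_cont y r) (fun u => hg_bdd _) _ _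
  have hint2 : IntegrableOn (fun u : ℝ =>
      g (fun i => r * (if u ≤ y i then (1:ℝ) else 0))) (Set.Ioi Y) := by
    refine (integrable_zero _ _ _).congr ?_
    rw [Filter.EventuallyEq, ae_restrict_iff' measurableSet_Ioi]
    exact Eventually.of_forall (fun u hu => (hz2 u hu).symm)
  have hsplit : ∫ u in Set.Ioi (0:ℝ), g (fun i => r * (if u ≤ y i then (1:ℝ) else 0))
      = (∫ u in Set.Ioc (0:ℝ) Y, g (fun i => r * (if u ≤ y i then (1:ℝ) else 0)))
        + ∫ u in Set.Ioi Y, g (fun i => r * (if u ≤ y i then (1:ℝ) else 0)) := by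
    rw [← setIntegral_union Set.Ioc_disjoint_Ioi_same measurableSet_Ioi hint1 hint2,
      Set.Ioc_union_Ioi_eq_Ioi hY0]
  rw [hsplit, setIntegral_congr_fun measurableSet_Ioi hz2, integral_zero, add_zero,
    aux_psum hg_cont hg_bdd hmono h0 r]

private lemma aux_min_pos {r : ℝ} (hr : 0 < r) : 0 < min r (r^2) :=
  lt_min hr (pow_pos hr 2)

private lemma aux_int_min_pi {π : Measure ℝ} (hπsupp : π (Set.Ioi 0)ᶜ = 0)
    (hπmom : ∫⁻ r, ENNReal.ofReal (min r (r ^ 2)) ∂π < ⊤) :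
    Integrable (fun r : ℝ => min r (r ^ 2)) π := by
  refine ⟨(continuous_id.min (continuous_pow 2)).aestronglyMeasurable, ?_⟩
  rw [hasFiniteIntegral_iff_norm]
  have : ∫⁻ r, ENNReal.ofReal ‖min r (r ^ 2)‖ ∂π = ∫⁻ r, ENNReal.ofReal (min r (r ^ 2)) ∂π := by
    refine lintegral_congr_ae ?_
    filter_upwards [aux_ae_mem hπsupp] with r hr
    rw [Real.norm_eq_abs, abs_of_nonneg (le_min (le_of_lt hr) (sq_nonneg r))]
  rw [this]
  exact hπmom

private lemma aux_int_pi {α : ℝ} (hα : 0 < α) {π : Measure ℝ} (hπsupp : π (Set.Ioi 0)ᶜ = 0)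
    (hπmom : ∫⁻ r, ENNReal.ofReal (min r (r ^ 2)) ∂π < ⊤)
    {h : ℝ → ℝ} (hm : AEStronglyMeasurable h π) {C : ℝ} (hC : 0 ≤ C)
    (hbd : ∀ r, 0 < r → |h r| ≤ C ∧ (r ≤ α → h r = 0)) :
    Integrable h π := by
  have hmα : 0 < min α (α ^ 2) := aux_min_pos hα
  refine ((aux_int_min_pi hπsupp hπmom).const_mul (C / min α (α ^ 2))).mono' hm ?_
  filter_upwards [aux_ae_mem hπsupp] with r hr
  rcases le_or_gt r α with h1 | h1
  · rw [Real.norm_eq_abs, (hbd r hr).2 h1, abs_zero]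
    exact mul_nonneg (div_nonneg hC hmα.le) (le_min hr.le (sq_nonneg r))
  · have h2 : min α (α ^ 2) ≤ min r (r ^ 2) :=
      min_le_min h1.le (pow_le_pow_left₀ hα.le h1.le 2)
    rw [Real.norm_eq_abs]
    calc |h r| ≤ C := (hbd r hr).1
      _ = (C / min α (α ^ 2)) * min α (α ^ 2) := by field_simp
      _ ≤ (C / min α (α ^ 2)) * min r (r ^ 2) :=
        mul_le_mul_of_nonneg_left h2 (div_nonneg hC hmα.le)

private lemma aux_div_cancel {μ : Measure ℝ} (hsupp0 : μ (Set.Ioi 0)ᶜ = 0) (h : ℝ → ℝ) :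
    ∫ r in Set.Ioi (0:ℝ), (h r / min r (r^2)) * min r (r^2) ∂μ = ∫ r, h r ∂μ := by
  rw [setIntegral_congr_fun measurableSet_Ioi
    (fun r hr => div_mul_cancel₀ (h r) (ne_of_gt (aux_min_pos hr))),
    Measure.restrict_eq_self_of_ae_mem (aux_ae_mem hsupp0)]

private lemma aux_nusupp0 {ν : Measure ℝ} {a : ℝ} (h : ν (Set.Ioc 0 a)ᶜ = 0) :
    ν (Set.Ioi 0)ᶜ = 0 :=
  measure_mono_null (Set.compl_subset_compl.mpr Set.Ioc_subset_Ioi_self) h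

private lemma aux_ck_tendsto {n : ℕ} {g : (Fin (n+1) → ℝ) → ℝ} {α : ℝ} (hα : 0 < α)
    (hg_cont : Continuous g) (hg_bdd : ∀ z, |g z| ≤ 1)
    (hg_zero : ∀ z, (∀ i, |z i| ≤ α) → g z = 0)
    {π : Measure ℝ} (hπsupp : π (Set.Ioi 0)ᶜ = 0)
    {ν : ℝ → Measure ℝ} (hνsupp : ∀ a : ℝ, 0 < a → (ν a) (Set.Ioc 0 a)ᶜ = 0)
    (hH : ∀ f : ℝ → ℝ, ContinuousOn f (Set.Ioi 0) →
      (∃ C : ℝ, ∀ x ∈ Set.Ioi (0 : ℝ), |f x| ≤ C) →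
      Tendsto (fun a => ∫ r in Set.Ioi (0 : ℝ), f r * min r (r ^ 2) ∂(ν a))
        atTop
        (nhds (∫ r in Set.Ioi (0 : ℝ), f r * min r (r ^ 2) ∂π)))
    (k : ℕ) :
    Tendsto (fun a => ∫ r, g (fun i => if k ≤ (i:ℕ) then r else 0) ∂(ν a)) atTop
      (nhds (∫ r, g (fun i => if k ≤ (i:ℕ) then r else 0) ∂π)) := by
  have hGcont : Continuous (fun r : ℝ => g (fun i : Fin (n+1) => if k ≤ (i:ℕ) then r else 0)) := by
    refine hg_cont.comp (continuous_pi fun i => ?_)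
    by_cases h : k ≤ (i : ℕ)
    · simp only [if_pos h]; exact continuous_id
    · simp only [if_neg h]; exact continuous_const
  have hGz : ∀ r : ℝ, 0 < r → r ≤ α →
      g (fun i : Fin (n+1) => if k ≤ (i:ℕ) then r else 0) = 0 := by
    intro r h0 h1
    refine hg_zero _ (fun i => ?_)
    by_cases h : k ≤ (i : ℕ)
    · simpa [h, abs_of_nonneg h0.le] using h1
    · simpa [h] using hα.le
  have hqcont : ContinuousOn
      (fun r => g (fun i : Fin (n+1) => if k ≤ (i:ℕ) then r else 0) / min r (r^2))
      (Set.Ioi 0) :=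
    ContinuousOn.div hGcont.continuousOn
      ((continuous_id.min (continuous_pow 2)).continuousOn)
      (fun r hr => ne_of_gt (aux_min_pos hr))
  have hqbd : ∀ x ∈ Set.Ioi (0:ℝ),
      |g (fun i : Fin (n+1) => if k ≤ (i:ℕ) then x else 0) / min x (x^2)|
        ≤ 1 / min α (α^2) := by
    intro x hx
    rcases le_or_gt x α with h1 | h1
    · rw [hGz x hx h1, zero_div, abs_zero]
      positivity
    · rw [abs_div, abs_of_nonneg (aux_min_pos hx).le]
      exact div_le_div₀ zero_le_one (hg_bdd _) (aux_min_pos hα)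
        (min_le_min h1.le (pow_le_pow_left₀ hα.le h1.le 2))
  have h := hH (fun r => g (fun i : Fin (n+1) => if k ≤ (i:ℕ) then r else 0) / min r (r^2))
    hqcont ⟨1 / min α (α^2), hqbd⟩
  rw [aux_div_cancel hπsupp] at h
  refine Filter.Tendsto.congr' ?_ h
  filter_upwards [eventually_gt_atTop 0] with a ha
  exact aux_div_cancel (aux_nusupp0 (hνsupp a ha)) _

private noncomputable def auxfa (α : ℝ) : ℝ → ℝ := fun r => (min 1 (max 0 ((2/α) * (r - α/2)))) * max 1 r⁻¹

private lemma auxfa_cont {α : ℝ} : ContinuousOn (auxfa α) (Set.Ioi 0) := by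
  refine ContinuousOn.mul (Continuous.continuousOn (by fun_prop)) ?_
  exact ContinuousOn.sup continuousOn_const (ContinuousOn.inv₀ continuousOn_id (fun r hr => ne_of_gt hr))

private lemma auxfa_nonneg {α : ℝ} (r : ℝ) : 0 ≤ auxfa α r :=
  mul_nonneg (le_min zero_le_one (le_max_left _ _))
    (zero_le_one.trans (le_max_left 1 _))

private lemma auxfa_zero {α : ℝ} (hα : 0 < α) {r : ℝ} (hr : r ≤ α/2) : auxfa α r = 0 := by
  have h1 : max 0 ((2/α) * (r - α/2)) = 0 :=
    max_eq_left (mul_nonpos_of_nonneg_of_nonpos (by positivity) (by linarith))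
  simp only [auxfa, h1, min_eq_right zero_le_one, zero_mul]

private lemma auxfa_bd {α : ℝ} (hα : 0 < α) : ∀ r ∈ Set.Ioi (0:ℝ), |auxfa α r| ≤ max 1 (2/α) := by
  intro r hr
  rw [abs_of_nonneg (auxfa_nonneg r)]
  rcases lt_or_ge r (α/2) with h1 | h1
  · rw [auxfa_zero hα h1.le]
    exact zero_le_one.trans (le_max_left _ _)
  · have hm : max 1 r⁻¹ ≤ max 1 (2/α) := by
      refine max_le_max le_rfl ?_
      have := inv_anti₀ (by positivity : (0:ℝ) < α/2) h1
      rwa [inv_div] at this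
    calc auxfa α r ≤ max 1 r⁻¹ :=
          mul_le_of_le_one_left (zero_le_one.trans (le_max_left 1 _)) (min_le_left _ _)
      _ ≤ max 1 (2/α) := hm

private lemma auxfa_eq {α : ℝ} (hα : 0 < α) {r : ℝ} (hr : α ≤ r) :
    auxfa α r * min r (r^2) = r := by
  have hr0 : 0 < r := hα.trans_le hr
  have hchi : min 1 (max 0 ((2/α) * (r - α/2))) = 1 := by
    refine min_eq_left (le_max_of_le_right ?_)
    rw [div_mul_eq_mul_div, le_div_iff₀ hα]
    nlinarith
  simp only [auxfa, hchi, one_mul]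
  rcases le_total r 1 with h1 | h1
  · rw [max_eq_right ((one_le_inv₀ hr0).mpr h1), min_eq_right (by nlinarith), sq]
    field_simp
  · rw [max_eq_left (inv_le_one_of_one_le₀ h1), min_eq_left (by nlinarith), one_mul]

private lemma auxfa_meas {α : ℝ} : Measurable (auxfa α) := by
  have h1 : Measurable fun r : ℝ => min 1 (max 0 ((2/α) * (r - α/2))) := by fun_prop
  exact h1.mul (measurable_const.max measurable_inv)

private lemma aux_T_le_Fa {α a : ℝ} (hα : 0 < α) (ha : 0 < a) {μ : Measure ℝ}
    (hsupp : μ (Set.Ioc 0 a)ᶜ = 0) (hmom : ∫⁻ r, ENNReal.ofReal (r ^ 2) ∂μ < ⊤) :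
    (∫ r in Set.Ioi α, r ∂μ) ≤ ∫ r in Set.Ioi (0:ℝ), auxfa α r * min r (r^2) ∂μ := by
  rw [← integral_indicator measurableSet_Ioi, ← integral_indicator measurableSet_Ioi]
  refine integral_mono_of_nonneg (Eventually.of_forall fun r => ?_) ?_ ?_
  · exact Set.indicator_nonneg (fun t ht => (hα.trans ht).le) r
  · refine aux_integrable_dom hsupp hmom
      ((auxfa_meas.mul (measurable_id.min ((measurable_id.pow_const 2)))).indicator
        measurableSet_Ioi).aestronglyMeasurable
      (by positivity : (0:ℝ) < α/2) (by positivity : (0:ℝ) ≤ max 1 (2/α) * a)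
      (fun r hr0 hra => ⟨?_, fun hrc => ?_⟩)
    · rw [Set.indicator_of_mem (Set.mem_Ioi.mpr hr0),
        abs_of_nonneg (mul_nonneg (auxfa_nonneg r) (le_min hr0.le (sq_nonneg r)))]
      calc auxfa α r * min r (r^2) ≤ max 1 (2/α) * min r (r^2) := by
            refine mul_le_mul_of_nonneg_right ?_ (le_min hr0.le (sq_nonneg r))
            exact (le_abs_self _).trans (auxfa_bd hα r hr0)
        _ ≤ max 1 (2/α) * a :=
            mul_le_mul_of_nonneg_left ((min_le_left _ _).trans hra)
              (zero_le_one.trans (le_max_left _ _))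
    · rw [Set.indicator_of_mem (Set.mem_Ioi.mpr hr0), auxfa_zero hα hrc, zero_mul]
  · filter_upwards [aux_ae_mem hsupp] with r hr
    rcases lt_or_ge α r with h1 | h1
    · rw [Set.indicator_of_mem (Set.mem_Ioi.mpr h1),
        Set.indicator_of_mem (Set.mem_Ioi.mpr hr.1), auxfa_eq hα h1.le]
    · rw [Set.indicator_of_notMem (by simpa using h1)]
      exact Set.indicator_nonneg
        (fun t ht => mul_nonneg (auxfa_nonneg t) (le_min (Set.mem_Ioi.mp ht).le (sq_nonneg t))) r

private lemma aux_tail {α M : ℝ} (hα : 0 < α) (hM : 0 < M)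
    {π : Measure ℝ} (hπsupp : π (Set.Ioi 0)ᶜ = 0)
    (hπmom : ∫⁻ r, ENNReal.ofReal (min r (r ^ 2)) ∂π < ⊤)
    {ν : ℝ → Measure ℝ}
    (hνsupp : ∀ a : ℝ, 0 < a → (ν a) (Set.Ioc 0 a)ᶜ = 0)
    (hνmom : ∀ a : ℝ, 0 < a → ∫⁻ r, ENNReal.ofReal (r ^ 2) ∂(ν a) < ⊤)
    (hH : ∀ f : ℝ → ℝ, ContinuousOn f (Set.Ioi 0) →
      (∃ C : ℝ, ∀ x ∈ Set.Ioi (0 : ℝ), |f x| ≤ C) →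
      Tendsto (fun a => ∫ r in Set.Ioi (0 : ℝ), f r * min r (r ^ 2) ∂(ν a))
        atTop
        (nhds (∫ r in Set.Ioi (0 : ℝ), f r * min r (r ^ 2) ∂π))) :
    Tendsto (fun a => ∫ r in Set.Ioi (α * a / M), r ∂(ν a)) atTop (nhds 0) := by
  rw [Metric.tendsto_atTop]
  intro ε hε
  -- tail of π is small
  set ρ := π.withDensity (fun r => ENNReal.ofReal (min r (r^2))) with hρ
  have hρs : ∀ s : Set ℝ, MeasurableSet s → ρ s = ∫⁻ r in s, ENNReal.ofReal (min r (r^2)) ∂π :=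
    fun s hs => withDensity_apply _ hs
  have hρfin : ρ Set.univ < ⊤ := by
    rw [hρs _ MeasurableSet.univ, Measure.restrict_univ]
    exact hπmom
  have htail : Tendsto (fun m : ℕ => ρ (Set.Ioi (m:ℝ))) atTop
      (nhds (ρ (⋂ m : ℕ, Set.Ioi (m:ℝ)))) := by
    refine tendsto_measure_iInter_atTop (fun m => measurableSet_Ioi.nullMeasurableSet)
      (fun i j hij => Set.Ioi_subset_Ioi (by exact_mod_cast hij)) ⟨0, ?_⟩
    exact ne_of_lt (lt_of_le_of_lt (measure_mono (Set.subset_univ _)) hρfin)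
  have hempty : (⋂ m : ℕ, Set.Ioi ((m:ℕ):ℝ)) = ∅ := by
    ext x
    simp only [Set.mem_iInter, Set.mem_Ioi, Set.mem_empty_iff_false, iff_false, not_forall,
      not_lt]
    exact exists_nat_ge x
  rw [hempty, measure_empty] at htail
  have hev : ∀ᶠ m : ℕ in atTop, ρ (Set.Ioi (m:ℝ)) < ENNReal.ofReal (ε/2) :=
    htail.eventually_lt_const (by simp [ENNReal.ofReal_pos]; linarith)
  obtain ⟨m₀, hm₀⟩ := hev.exists
  set c₀ : ℝ := max 1 (m₀:ℝ) with hc₀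
  have hc₀1 : (1:ℝ) ≤ c₀ := le_max_left _ _
  have hρc₀ : ρ (Set.Ioi c₀) < ENNReal.ofReal (ε/2) :=
    lt_of_le_of_lt (measure_mono (Set.Ioi_subset_Ioi (le_max_right _ _))) hm₀
  -- the cutoff function
  set fc : ℝ → ℝ := fun r => min 1 (max 0 (r - c₀)) with hfc
  have hfc01 : ∀ r, 0 ≤ fc r ∧ fc r ≤ 1 := fun r =>
    ⟨le_min zero_le_one (le_max_left _ _), min_le_left _ _⟩
  have hfccont : ContinuousOn fc (Set.Ioi 0) := Continuous.continuousOn (by fun_prop)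
  have hfcbd : ∃ C : ℝ, ∀ x ∈ Set.Ioi (0:ℝ), |fc x| ≤ C :=
    ⟨1, fun x _ => by rw [abs_of_nonneg (hfc01 x).1]; exact (hfc01 x).2⟩
  have hfczero : ∀ r : ℝ, r ≤ c₀ → fc r = 0 := by
    intro r hr
    simp only [hfc, max_eq_left (by linarith : r - c₀ ≤ 0), min_eq_right zero_le_one]
  have hfcone : ∀ r : ℝ, c₀ + 1 ≤ r → fc r = 1 := by
    intro r hr
    simp only [hfc, min_eq_left (le_max_of_le_right (by linarith : (1:ℝ) ≤ r - c₀))]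
  -- the limit integral is < ε/2
  have hmin_int : Integrable (fun r : ℝ => min r (r^2)) π := aux_int_min_pi hπsupp hπmom
  have hL : ∫ r in Set.Ioi (0:ℝ), fc r * min r (r^2) ∂π < ε/2 := by
    have h1 : ∫ r in Set.Ioi (0:ℝ), fc r * min r (r^2) ∂π
        ≤ ∫ r in Set.Ioi (0:ℝ), (Set.Ioi c₀).indicator (fun r => min r (r^2)) r ∂π := by
      refine setIntegral_mono_on ?_ ?_ measurableSet_Ioi ?_
      · refine (hmin_int.restrict).mono' ?_ ?_
        · exact (((continuous_const.min (by fun_prop)).measurable.mul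
            (measurable_id.min (measurable_id.pow_const 2))).aestronglyMeasurable)
        · filter_upwards [ae_restrict_mem measurableSet_Ioi] with r hr
          rw [Real.norm_eq_abs,
            abs_of_nonneg (mul_nonneg (hfc01 r).1 (le_min (Set.mem_Ioi.mp hr).le (sq_nonneg r)))]
          exact mul_le_of_le_one_left (le_min (Set.mem_Ioi.mp hr).le (sq_nonneg r)) (hfc01 r).2
      · exact (hmin_int.indicator measurableSet_Ioi).restrict
      · intro r hr
        rcases le_or_gt r c₀ with h2 | h2
        · rw [hfczero r h2, zero_mul, Set.indicator_of_notMem (by simpa using h2)]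
        · rw [Set.indicator_of_mem (Set.mem_Ioi.mpr h2)]
          exact mul_le_of_le_one_left (le_min (Set.mem_Ioi.mp hr).le (sq_nonneg r)) (hfc01 r).2
    have h2 : ∫ r in Set.Ioi (0:ℝ), (Set.Ioi c₀).indicator (fun r => min r (r^2)) r ∂π
        = ∫ r in Set.Ioi c₀, min r (r^2) ∂π := by
      rw [setIntegral_indicator measurableSet_Ioi, Set.Ioi_inter_Ioi,
        max_eq_right (by linarith : (0:ℝ) ≤ c₀)]
    have h3 : ∫ r in Set.Ioi c₀, min r (r^2) ∂π = (ρ (Set.Ioi c₀)).toReal := by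
      rw [hρs _ measurableSet_Ioi]
      rw [integral_eq_lintegral_of_nonneg_ae ?_ ?_]
      · filter_upwards [ae_restrict_mem measurableSet_Ioi] with r hr
        have : (0:ℝ) < r := lt_of_le_of_lt (by linarith) (Set.mem_Ioi.mp hr)
        exact le_min this.le (sq_nonneg r)
      · exact (measurable_id.min (measurable_id.pow_const 2)).aestronglyMeasurable
    have h4 : (ρ (Set.Ioi c₀)).toReal < ε/2 := by
      refine ENNReal.toReal_lt_of_lt_ofReal hρc₀
    linarith [h1.trans_eq (h2.trans h3)]
  -- apply hH to fc
  have hHfc := hH fc hfccont hfcbd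
  have hev2 : ∀ᶠ a : ℝ in atTop, ∫ r in Set.Ioi (0:ℝ), fc r * min r (r^2) ∂(ν a) < ε/2 :=
    hHfc.eventually_lt_const hL
  have hev3 : ∀ᶠ a : ℝ in atTop, M * (c₀ + 1) / α ≤ a := eventually_ge_atTop _
  have hev4 : ∀ᶠ a : ℝ in atTop, (0:ℝ) < a := eventually_gt_atTop 0
  obtain ⟨N, hN⟩ := eventually_atTop.mp (hev2.and (hev3.and hev4))
  refine ⟨N, fun a haN => ?_⟩
  obtain ⟨ha2, ha3, ha4⟩ := hN a haN
  have hc1a : c₀ + 1 ≤ α * a / M := by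
    rw [le_div_iff₀ hM]
    rw [div_le_iff₀ hα] at ha3
    nlinarith
  have hpos : (0:ℝ) < α * a / M := by positivity
  -- T a ≥ 0 and T a ≤ ∫ fc min
  have hT0 : 0 ≤ ∫ r in Set.Ioi (α * a / M), r ∂(ν a) :=
    setIntegral_nonneg measurableSet_Ioi (fun r hr => (hpos.trans (Set.mem_Ioi.mp hr)).le)
  have hTle : (∫ r in Set.Ioi (α * a / M), r ∂(ν a))
      ≤ ∫ r in Set.Ioi (0:ℝ), fc r * min r (r^2) ∂(ν a) := by
    rw [← integral_indicator measurableSet_Ioi, ← integral_indicator measurableSet_Ioi]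
    refine integral_mono_of_nonneg (Eventually.of_forall fun r => ?_) ?_ ?_
    · exact Set.indicator_nonneg (fun t ht => (hpos.trans (Set.mem_Ioi.mp ht)).le) r
    · refine aux_integrable_dom (hνsupp a ha4) (hνmom a ha4)
        ((((continuous_const.min (by fun_prop)).measurable.mul
          (measurable_id.min (measurable_id.pow_const 2))).indicator
          measurableSet_Ioi).aestronglyMeasurable)
        (by linarith : (0:ℝ) < c₀) (le_of_lt ha4) (fun r hr0 hra => ⟨?_, fun hrc => ?_⟩)
      · rw [Set.indicator_of_mem (Set.mem_Ioi.mpr hr0),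
          abs_of_nonneg (mul_nonneg (hfc01 r).1 (le_min hr0.le (sq_nonneg r)))]
        exact (mul_le_of_le_one_left (le_min hr0.le (sq_nonneg r)) (hfc01 r).2).trans
          ((min_le_left _ _).trans hra)
      · rw [Set.indicator_of_mem (Set.mem_Ioi.mpr hr0), hfczero r hrc, zero_mul]
    · filter_upwards [aux_ae_mem (hνsupp a ha4)] with r hr
      rcases lt_or_ge (α * a / M) r with h1 | h1
      · have hr1 : (1:ℝ) ≤ r := by linarith [hc1a]
        rw [Set.indicator_of_mem (Set.mem_Ioi.mpr h1),
          Set.indicator_of_mem (Set.mem_Ioi.mpr hr.1), hfcone r (by linarith), one_mul,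
          min_eq_left (by nlinarith : r ≤ r^2)]
      · rw [Set.indicator_of_notMem (by simpa using h1)]
        exact Set.indicator_nonneg (fun t ht => mul_nonneg (hfc01 t).1
          (le_min (Set.mem_Ioi.mp ht).le (sq_nonneg t))) r
  rw [Real.dist_eq, sub_zero, abs_of_nonneg hT0]
  exact lt_of_le_of_lt hTle (lt_of_lt_of_le ha2 (by linarith))

private lemma aux_main_est {n : ℕ} {α M : ℝ} (hα : 0 < α) (hM : 0 < M)
    {g : (Fin (n+1) → ℝ) → ℝ} {K : NNReal} (hg_lip : LipschitzWith K g)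
    (hg_bdd : ∀ z, |g z| ≤ 1) (hg_zero : ∀ z, (∀ i, |z i| ≤ α) → g z = 0)
    {π : Measure ℝ} (hπsupp : π (Set.Ioi 0)ᶜ = 0)
    (hπmom : ∫⁻ r, ENNReal.ofReal (min r (r ^ 2)) ∂π < ⊤)
    {μ : Measure ℝ} {a : ℝ} (ha : 0 < a) (hMa : M ≤ a)
    (hsupp : μ (Set.Ioc 0 a)ᶜ = 0) (hmom : ∫⁻ r, ENNReal.ofReal (r ^ 2) ∂μ < ⊤)
    {y : Fin (n+1) → ℝ} (hmono : Monotone y) (hy : ∀ i, y i ∈ Set.Icc (0:ℝ) M) :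
    |phiChar g μ a y - ∫ r, (∫ u in Set.Ioi (0:ℝ),
        g (fun i => r * (if u ≤ y i then (1:ℝ) else 0))) ∂π|
      ≤ ((K:ℝ) * M^2 / a) * (∫ r in Set.Ioi (0:ℝ), auxfa α r * min r (r^2) ∂μ)
        + (M/α) * (∫ r in Set.Ioi (α * a / M), r ∂μ)
        + M * ∑ k ∈ Finset.range (n+1),
            |(∫ r, g (fun i => if k ≤ (i:ℕ) then r else 0) ∂μ)
              - ∫ r, g (fun i => if k ≤ (i:ℕ) then r else 0) ∂π| := by
  have hg_cont : Continuous g := hg_lip.continuous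
  set Y := y (Fin.last n) with hYdef
  have hY0 : 0 ≤ Y := (hy _).1
  have hYM : Y ≤ M := (hy _).2
  have hYa : Y ≤ a := hYM.trans hMa
  have hy' : ∀ i, 0 ≤ y i ∧ y i ≤ a := fun i => ⟨(hy i).1, (hy i).2.trans hMa⟩
  have hd : ∀ i, 0 ≤ y i / a ∧ y i / a ≤ 1 := fun i =>
    ⟨div_nonneg (hy' i).1 ha.le, (div_le_one ha).2 (hy' i).2⟩
  -- notation
  set A1 : ℝ → ℝ := fun r => ∫ u in Set.Ioc (0:ℝ) Y,
    (g (fun i => r * ((if u ≤ y i then (1:ℝ) else 0) - y i / a))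
      - g (fun i => r * (if u ≤ y i then (1:ℝ) else 0))) with hA1
  set A2 : ℝ → ℝ := fun r => (a - Y) * g (fun i => r * ((0:ℝ) - y i / a)) with hA2
  set G : ℕ → ℝ → ℝ := fun k r => g (fun i => if k ≤ (i:ℕ) then r else 0) with hG
  set GS : ℝ → ℝ := fun r => ∑ k ∈ Finset.range (n+1), (auxw y (k+1) - auxw y k) * G k r
    with hGS
  have hdecomp : ∀ r : ℝ, (∫ u in Set.Ioc (0:ℝ) a,
      g (fun i => r * ((if u ≤ y i then (1:ℝ) else 0) - y i / a)))
        = A1 r + A2 r + GS r := fun r => aux_decomp hg_cont hg_bdd hmono ha hy' r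
  -- basic facts about G
  have hGcont : ∀ k : ℕ, Continuous (G k) := by
    intro k
    refine hg_cont.comp (continuous_pi fun i => ?_)
    by_cases h : k ≤ (i : ℕ)
    · simp only [if_pos h]; exact continuous_id
    · simp only [if_neg h]; exact continuous_const
  have hGz : ∀ k : ℕ, ∀ r : ℝ, 0 ≤ r → r ≤ α → G k r = 0 := by
    intro k r h0 h1
    refine hg_zero _ (fun i => ?_)
    by_cases h : k ≤ (i : ℕ)
    · simpa [h, abs_of_nonneg h0] using h1
    · simpa [h] using hα.le
  have hGbd : ∀ k r, |G k r| ≤ 1 := fun k r => hg_bdd _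
  -- integrabilities w.r.t. μ
  have hIG : ∀ k : ℕ, Integrable (G k) μ := by
    intro k
    refine aux_integrable_dom hsupp hmom (hGcont k).aestronglyMeasurable hα zero_le_one
      (fun r hr0 hra => ⟨hGbd k r, fun h1 => hGz k r hr0.le h1⟩)
  have hIGS : Integrable GS μ := by
    refine integrable_finset_sum _ (fun k _ => ((hIG k).const_mul _))
  have hA2z : ∀ r : ℝ, 0 ≤ r → r ≤ α → A2 r = 0 := by
    intro r h0 h1
    have : g (fun i => r * ((0:ℝ) - y i / a)) = 0 := by
      refine hg_zero _ (fun i => ?_)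
      calc |r * ((0:ℝ) - y i / a)| = r * (y i / a) := by
            rw [abs_mul, abs_of_nonneg h0, zero_sub, abs_neg, abs_of_nonneg (hd i).1]
        _ ≤ r * 1 := mul_le_mul_of_nonneg_left (hd i).2 h0
        _ ≤ α := by rwa [mul_one]
    simp only [hA2, this, mul_zero]
  have hIA2 : Integrable A2 μ := by
    have hc : Continuous A2 := by
      refine continuous_const.mul (hg_cont.comp (continuous_pi fun i => ?_))
      exact Continuous.mul continuous_id continuous_const
    refine aux_integrable_dom hsupp hmom hc.aestronglyMeasurable hα ha.le
      (fun r hr0 hra => ⟨?_, fun h1 => hA2z r hr0.le h1⟩)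
    calc |A2 r| = (a - Y) * |g (fun i => r * ((0:ℝ) - y i / a))| := by
          rw [hA2, abs_mul, abs_of_nonneg (sub_nonneg.mpr hYa)]
      _ ≤ (a - Y) * 1 := mul_le_mul_of_nonneg_left (hg_bdd _) (sub_nonneg.mpr hYa)
      _ ≤ a := by nlinarith
  have hIinner : Integrable (fun r => ∫ u in Set.Ioc (0:ℝ) a,
      g (fun i => r * ((if u ≤ y i then (1:ℝ) else 0) - y i / a))) μ := by
    refine aux_integrable_dom hsupp hmom
      (aux_meas_I hg_cont y a 0 a).aestronglyMeasurable hα ha.le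
      (fun r hr0 hra => ⟨?_, fun h1 => ?_⟩)
    · have hb : ∀ u ∈ Set.Ioc (0:ℝ) a,
          ‖g (fun i => r * ((if u ≤ y i then (1:ℝ) else 0) - y i / a))‖ ≤ 1 := by
        intro u _
        rw [Real.norm_eq_abs]
        exact hg_bdd _
      have := norm_setIntegral_le_of_norm_le_const (C := 1)
        (measure_Ioc_lt_top : volume (Set.Ioc (0:ℝ) a) < ⊤) hb
      rw [Real.volume_real_Ioc_of_le ha.le, sub_zero, one_mul] at this
      rwa [← Real.norm_eq_abs]
    · have hz : ∀ u ∈ Set.Ioc (0:ℝ) a,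
          g (fun i => r * ((if u ≤ y i then (1:ℝ) else 0) - y i / a)) = 0 := fun u _ =>
        hg_zero _ (fun i => (aux_arg_bd hr0.le (hd i).1 (hd i).2).trans h1)
      rw [setIntegral_congr_fun measurableSet_Ioc hz]
      simp
  have hIA1 : Integrable A1 μ := by
    refine ((hIinner.sub hIA2).sub hIGS).congr (Eventually.of_forall (fun r => ?_))
    have := hdecomp r
    simp only [Pi.sub_apply] at this ⊢
    linarith
  -- Step 1 : phiChar = ∫A1 + ∫A2 + Σ Δk ∫ G k dμ
  have hstep1 : phiChar g μ a y = (∫ r, A1 r ∂μ) + (∫ r, A2 r ∂μ)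
      + ∑ k ∈ Finset.range (n+1), (auxw y (k+1) - auxw y k) * ∫ r, G k r ∂μ := by
    calc phiChar g μ a y = ∫ r, (A1 r + A2 r + GS r) ∂μ := by
          refine integral_congr_ae (Eventually.of_forall (fun r => ?_))
          exact hdecomp r
      _ = (∫ r, A1 r ∂μ) + (∫ r, A2 r ∂μ) + ∫ r, GS r ∂μ := by
          have hsum1 : Integrable (fun r => A1 r + A2 r) μ := hIA1.add hIA2
          rw [integral_add hsum1 hIGS, integral_add hIA1 hIA2]
      _ = (∫ r, A1 r ∂μ) + (∫ r, A2 r ∂μ)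
          + ∑ k ∈ Finset.range (n+1), (auxw y (k+1) - auxw y k) * ∫ r, G k r ∂μ := by
          rw [integral_finset_sum _ (fun k _ => ((hIG k).const_mul _))]
          congr 1
          refine Finset.sum_congr rfl (fun k _ => ?_)
          rw [integral_const_mul]
  -- Step 2 : Φ = Σ Δk ∫ G k dπ
  have hIGπ : ∀ k : ℕ, Integrable (G k) π := by
    intro k
    exact aux_int_pi hα hπsupp hπmom (hGcont k).aestronglyMeasurable zero_le_one
      (fun r hr0 => ⟨hGbd k r, fun h1 => hGz k r hr0.le h1⟩)
  have hstep2 : (∫ r, (∫ u in Set.Ioi (0:ℝ),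
      g (fun i => r * (if u ≤ y i then (1:ℝ) else 0))) ∂π)
      = ∑ k ∈ Finset.range (n+1), (auxw y (k+1) - auxw y k) * ∫ r, G k r ∂π := by
    calc (∫ r, (∫ u in Set.Ioi (0:ℝ),
        g (fun i => r * (if u ≤ y i then (1:ℝ) else 0))) ∂π)
        = ∫ r, (∑ k ∈ Finset.range (n+1), (auxw y (k+1) - auxw y k) * G k r) ∂π := by
          refine integral_congr_ae (Eventually.of_forall (fun r => ?_))
          exact aux_phi_pi hα hg_cont hg_bdd hg_zero hmono (fun i => (hy i).1) r
      _ = ∑ k ∈ Finset.range (n+1), (auxw y (k+1) - auxw y k) * ∫ r, G k r ∂π := by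
          rw [integral_finset_sum _ (fun k _ => ((hIGπ k).const_mul _))]
          refine Finset.sum_congr rfl (fun k _ => ?_)
          rw [integral_const_mul]
  -- bound on ∫ A1
  have hbA1 : |∫ r, A1 r ∂μ|
      ≤ ((K:ℝ) * M^2 / a) * ∫ r in Set.Ioi (0:ℝ), auxfa α r * min r (r^2) ∂μ := by
    have hindint : Integrable ((Set.Ioi α).indicator (fun t : ℝ => t)) μ := by
      refine aux_integrable_dom hsupp hmom
        ((measurable_id.indicator measurableSet_Ioi).aestronglyMeasurable) hα ha.le
        (fun r hr0 hra => ⟨?_, fun hrα => ?_⟩)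
      · by_cases h : r ∈ Set.Ioi α
        · rw [Set.indicator_of_mem h, abs_of_nonneg hr0.le]; exact hra
        · rw [Set.indicator_of_notMem h, abs_zero]; exact ha.le
      · exact Set.indicator_of_notMem (by simpa using hrα) _
    have hkey : ∀ r ∈ Set.Ioc (0:ℝ) a,
        ‖A1 r‖ ≤ ((K:ℝ) * M^2 / a) * ((Set.Ioi α).indicator (fun t : ℝ => t) r) := by
      intro r hr
      by_cases hrα : r ≤ α
      · have hz : ∀ u ∈ Set.Ioc (0:ℝ) Y,
            (g (fun i => r * ((if u ≤ y i then (1:ℝ) else 0) - y i / a))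
              - g (fun i => r * (if u ≤ y i then (1:ℝ) else 0))) = 0 := by
          intro u _
          have e1 : g (fun i => r * ((if u ≤ y i then (1:ℝ) else 0) - y i / a)) = 0 :=
            hg_zero _ (fun i => (aux_arg_bd hr.1.le (hd i).1 (hd i).2).trans hrα)
          have e2 : g (fun i => r * (if u ≤ y i then (1:ℝ) else 0)) = 0 := by
            refine hg_zero _ (fun i => ?_)
            have := aux_arg_bd (ci := y i) (di := 0) (u := u) hr.1.le le_rfl zero_le_one
            rw [sub_zero] at this
            exact this.trans hrα
          rw [e1, e2, sub_zero]
        have : A1 r = 0 := by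
          rw [hA1]
          simp only
          rw [setIntegral_congr_fun measurableSet_Ioc hz]
          simp
        rw [this, Set.indicator_of_notMem (by simpa using hrα), mul_zero, norm_zero]
      · push_neg at hrα
        rw [Set.indicator_of_mem (Set.mem_Ioi.mpr hrα)]
        have hbd : ∀ u ∈ Set.Ioc (0:ℝ) Y,
            ‖g (fun i => r * ((if u ≤ y i then (1:ℝ) else 0) - y i / a))
              - g (fun i => r * (if u ≤ y i then (1:ℝ) else 0))‖ ≤ (K:ℝ) * (r * M / a) := by
          intro u _
          have hdist : dist (fun i => r * ((if u ≤ y i then (1:ℝ) else 0) - y i / a))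
              (fun i => r * (if u ≤ y i then (1:ℝ) else 0)) ≤ r * M / a := by
            rw [dist_pi_le_iff (div_nonneg (mul_nonneg hr.1.le hM.le) ha.le)]
            intro i
            rw [Real.dist_eq]
            have : r * ((if u ≤ y i then (1:ℝ) else 0) - y i / a)
                - r * (if u ≤ y i then (1:ℝ) else 0) = -(r * (y i / a)) := by ring
            rw [this, abs_neg, abs_mul, abs_of_nonneg hr.1.le, abs_of_nonneg (hd i).1,
              mul_div_assoc]
            refine mul_le_mul_of_nonneg_left ?_ hr.1.le
            exact (div_le_div_iff_of_pos_right ha).mpr (hy i).2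
          calc ‖_ - _‖ = dist (g (fun i => r * ((if u ≤ y i then (1:ℝ) else 0) - y i / a)))
                (g (fun i => r * (if u ≤ y i then (1:ℝ) else 0))) := (dist_eq_norm _ _).symm
            _ ≤ (K:ℝ) * dist _ _ := hg_lip.dist_le_mul _ _
            _ ≤ (K:ℝ) * (r * M / a) := mul_le_mul_of_nonneg_left hdist K.2
        have := norm_setIntegral_le_of_norm_le_const (C := (K:ℝ) * (r * M / a))
          (measure_Ioc_lt_top : volume (Set.Ioc (0:ℝ) Y) < ⊤) hbd
        rw [Real.volume_real_Ioc_of_le hY0, sub_zero] at this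
        refine this.trans ?_
        show (K:ℝ) * (r * M / a) * Y ≤ (K:ℝ) * M ^ 2 / a * r
        rw [show (K:ℝ) * M ^ 2 / a * r = (K:ℝ) * (r * M / a) * M by ring]
        exact mul_le_mul_of_nonneg_left hYM
          (mul_nonneg (NNReal.coe_nonneg K) (div_nonneg (mul_nonneg hr.1.le hM.le) ha.le))
    calc |∫ r, A1 r ∂μ| ≤ ∫ r, ‖A1 r‖ ∂μ := by
          rw [← Real.norm_eq_abs]
          exact norm_integral_le_integral_norm _
      _ ≤ ∫ r, ((K:ℝ) * M^2 / a) * ((Set.Ioi α).indicator (fun t : ℝ => t) r) ∂μ := by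
          refine integral_mono_of_nonneg (Eventually.of_forall fun r => norm_nonneg _)
            (hindint.const_mul _) ?_
          filter_upwards [aux_ae_mem hsupp] with r hr
          exact hkey r hr
      _ = ((K:ℝ) * M^2 / a) * ∫ r in Set.Ioi α, r ∂μ := by
          rw [integral_const_mul, integral_indicator measurableSet_Ioi]
      _ ≤ ((K:ℝ) * M^2 / a) * ∫ r in Set.Ioi (0:ℝ), auxfa α r * min r (r^2) ∂μ := by
          exact mul_le_mul_of_nonneg_left (aux_T_le_Fa hα ha hsupp hmom)
            (div_nonneg (mul_nonneg (NNReal.coe_nonneg K) (sq_nonneg M)) ha.le)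
  -- bound on ∫ A2
  have hbA2 : |∫ r, A2 r ∂μ| ≤ (M/α) * ∫ r in Set.Ioi (α * a / M), r ∂μ := by
    have hc0 : (0:ℝ) < α * a / M := by positivity
    have hindint : Integrable ((Set.Ioi (α * a / M)).indicator (fun t : ℝ => t)) μ := by
      refine aux_integrable_dom hsupp hmom
        ((measurable_id.indicator measurableSet_Ioi).aestronglyMeasurable) hc0 ha.le
        (fun r hr0 hra => ⟨?_, fun hrα => ?_⟩)
      · by_cases h : r ∈ Set.Ioi (α * a / M)
        · rw [Set.indicator_of_mem h, abs_of_nonneg hr0.le]; exact hra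
        · rw [Set.indicator_of_notMem h, abs_zero]; exact ha.le
      · exact Set.indicator_of_notMem (by simpa using hrα) _
    have hkey : ∀ r ∈ Set.Ioc (0:ℝ) a,
        ‖A2 r‖ ≤ (M/α) * ((Set.Ioi (α * a / M)).indicator (fun t : ℝ => t) r) := by
      intro r hr
      by_cases h1 : r ≤ α * a / M
      · have hgz2 : g (fun i => r * ((0:ℝ) - y i / a)) = 0 := by
          refine hg_zero _ (fun i => ?_)
          have e1 : |r * ((0:ℝ) - y i / a)| = r * (y i / a) := by
            rw [abs_mul, abs_of_nonneg hr.1.le, zero_sub, abs_neg, abs_of_nonneg (hd i).1]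
          rw [e1]
          calc r * (y i / a) ≤ r * (M / a) :=
                mul_le_mul_of_nonneg_left ((div_le_div_iff_of_pos_right ha).mpr (hy i).2) hr.1.le
            _ ≤ (α * a / M) * (M / a) := mul_le_mul_of_nonneg_right h1 (by positivity)
            _ = α := by field_simp
        have hz : A2 r = 0 := by simp only [hA2, hgz2, mul_zero]
        rw [hz, norm_zero]
        refine mul_nonneg (by positivity) ?_
        exact Set.indicator_nonneg (fun t ht => (hc0.trans (Set.mem_Ioi.mp ht)).le) r
      · push_neg at h1
        rw [Set.indicator_of_mem (Set.mem_Ioi.mpr h1)]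
        have hb2 : ‖A2 r‖ ≤ a := by
          rw [Real.norm_eq_abs]
          calc |A2 r| = (a - Y) * |g (fun i => r * ((0:ℝ) - y i / a))| := by
                rw [hA2, abs_mul, abs_of_nonneg (sub_nonneg.mpr hYa)]
            _ ≤ (a - Y) * 1 := mul_le_mul_of_nonneg_left (hg_bdd _) (sub_nonneg.mpr hYa)
            _ ≤ a := by nlinarith
        refine hb2.trans ?_
        show a ≤ M / α * r
        rw [div_mul_eq_mul_div, le_div_iff₀ hα]
        have h2 : α * a < r * M := by
          have := (div_lt_iff₀ hM).mp h1
          nlinarith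
        nlinarith
    calc |∫ r, A2 r ∂μ| ≤ ∫ r, ‖A2 r‖ ∂μ := by
          rw [← Real.norm_eq_abs]
          exact norm_integral_le_integral_norm _
      _ ≤ ∫ r, (M/α) * ((Set.Ioi (α * a / M)).indicator (fun t : ℝ => t) r) ∂μ := by
          refine integral_mono_of_nonneg (Eventually.of_forall fun r => norm_nonneg _)
            (hindint.const_mul _) ?_
          filter_upwards [aux_ae_mem hsupp] with r hr
          exact hkey r hr
      _ = (M/α) * ∫ r in Set.Ioi (α * a / M), r ∂μ := by
          rw [integral_const_mul, integral_indicator measurableSet_Ioi]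
  -- the increments are in [0, M]
  have hΔ : ∀ k ∈ Finset.range (n+1),
      0 ≤ auxw y (k+1) - auxw y k ∧ auxw y (k+1) - auxw y k ≤ M := by
    intro k hk
    have h1 := auxw_step hmono (fun i => (hy i).1) k
    have h2 : auxw y (k+1) ≤ M := by
      rw [auxw_succ y (Nat.lt_succ_iff.mp (Finset.mem_range.mp hk))]
      exact (hy _).2
    have h3 : 0 ≤ auxw y k := by
      cases k with
      | zero => rw [auxw_zero]
      | succ m =>
        have hkn : m + 1 ≤ n := Nat.lt_succ_iff.mp (Finset.mem_range.mp hk)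
        rw [auxw_succ y (by omega : m ≤ n)]
        exact (hy _).1
    exact ⟨by linarith, by linarith⟩
  -- assemble
  rw [hstep1, hstep2]
  have heq : (∫ r, A1 r ∂μ) + (∫ r, A2 r ∂μ)
      + ∑ k ∈ Finset.range (n+1), (auxw y (k+1) - auxw y k) * ∫ r, G k r ∂μ
      - ∑ k ∈ Finset.range (n+1), (auxw y (k+1) - auxw y k) * ∫ r, G k r ∂π
      = (∫ r, A1 r ∂μ) + (∫ r, A2 r ∂μ)
        + ∑ k ∈ Finset.range (n+1), (auxw y (k+1) - auxw y k)
            * ((∫ r, G k r ∂μ) - ∫ r, G k r ∂π) := by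
    rw [add_sub_assoc, ← Finset.sum_sub_distrib]
    congr 1
    refine Finset.sum_congr rfl (fun k _ => ?_)
    ring
  rw [heq]
  have hb3 : |∑ k ∈ Finset.range (n+1), (auxw y (k+1) - auxw y k)
        * ((∫ r, G k r ∂μ) - ∫ r, G k r ∂π)|
      ≤ M * ∑ k ∈ Finset.range (n+1), |(∫ r, G k r ∂μ) - ∫ r, G k r ∂π| := by
    refine (Finset.abs_sum_le_sum_abs _ _).trans ?_
    rw [Finset.mul_sum]
    refine Finset.sum_le_sum (fun k hk => ?_)
    rw [abs_mul, abs_of_nonneg (hΔ k hk).1]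
    exact mul_le_mul_of_nonneg_right (hΔ k hk).2 (abs_nonneg _)
  calc |(∫ r, A1 r ∂μ) + (∫ r, A2 r ∂μ) + ∑ k ∈ Finset.range (n+1),
        (auxw y (k+1) - auxw y k) * ((∫ r, G k r ∂μ) - ∫ r, G k r ∂π)|
      ≤ |(∫ r, A1 r ∂μ) + (∫ r, A2 r ∂μ)| + |∑ k ∈ Finset.range (n+1),
        (auxw y (k+1) - auxw y k) * ((∫ r, G k r ∂μ) - ∫ r, G k r ∂π)| := abs_add_le _ _
    _ ≤ |∫ r, A1 r ∂μ| + |∫ r, A2 r ∂μ| + |∑ k ∈ Finset.range (n+1),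
        (auxw y (k+1) - auxw y k) * ((∫ r, G k r ∂μ) - ∫ r, G k r ∂π)| := by
        have := abs_add_le (∫ r, A1 r ∂μ) (∫ r, A2 r ∂μ)
        linarith
    _ ≤ ((K:ℝ) * M^2 / a) * (∫ r in Set.Ioi (0:ℝ), auxfa α r * min r (r^2) ∂μ)
        + (M/α) * (∫ r in Set.Ioi (α * a / M), r ∂μ)
        + M * ∑ k ∈ Finset.range (n+1),
            |(∫ r, G k r ∂μ) - ∫ r, G k r ∂π| :=
      add_le_add (add_le_add hbA1 hbA2) hb3

/-- With `g` a bounded Lipschitz test function vanishing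
where all coordinates are `≤ α` in absolute value, and `(ν^{(a)})` satisfying
Assumption (H): (i) `|φ_a(y)| ≤ (2/α) y_p ∫ r 1_{r>α} ν^{(a)}(dr)`; and (ii)
`φ_a(y) → ∫ π(dr) ∫_0^∞ du g(r 1_{u≤y₁}, …, r 1_{u≤y_p})` uniformly on
`{0 ≤ y₁ ≤ ⋯ ≤ y_p ≤ M}` as `a → ∞`. -/
theorem stmt14
    (n : ℕ) (α : ℝ) (hα : 0 < α)
    (g : (Fin (n + 1) → ℝ) → ℝ)
    (hg_lip : ∃ K : NNReal, LipschitzWith K g)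
    (hg_bdd : ∀ z : Fin (n + 1) → ℝ, |g z| ≤ 1)
    (hg_zero : ∀ z : Fin (n + 1) → ℝ, (∀ i, |z i| ≤ α) → g z = 0)
    (π : Measure ℝ) (hπsupp : π (Set.Ioi 0)ᶜ = 0)
    (hπmom : ∫⁻ r, ENNReal.ofReal (min r (r ^ 2)) ∂π < ⊤)
    (ν : ℝ → Measure ℝ)
    (hνsupp : ∀ a : ℝ, 0 < a → (ν a) (Set.Ioc 0 a)ᶜ = 0)
    (hνmom : ∀ a : ℝ, 0 < a → ∫⁻ r, ENNReal.ofReal (r ^ 2) ∂(ν a) < ⊤)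
    (hH : ∀ f : ℝ → ℝ, ContinuousOn f (Set.Ioi 0) →
      (∃ C : ℝ, ∀ x ∈ Set.Ioi (0 : ℝ), |f x| ≤ C) →
      Tendsto (fun a => ∫ r in Set.Ioi (0 : ℝ), f r * min r (r ^ 2) ∂(ν a))
        atTop
        (nhds (∫ r in Set.Ioi (0 : ℝ), f r * min r (r ^ 2) ∂π))) :
    (∀ a : ℝ, 0 < a → ∀ y : Fin (n + 1) → ℝ, Monotone y →
      (∀ i, 0 ≤ y i ∧ y i ≤ a) →
      |phiChar g (ν a) a y|
        ≤ (2 / α) * y (Fin.last n) * ∫ r in Set.Ioi α, r ∂(ν a)) ∧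
    (∀ M : ℝ, 0 < M →
      Tendsto
        (fun a : ℝ =>
          ⨆ y ∈ {y : Fin (n + 1) → ℝ |
              Monotone y ∧ ∀ i, y i ∈ Set.Icc (0 : ℝ) M},
            |phiChar g (ν a) a y
              - ∫ r, (∫ u in Set.Ioi (0 : ℝ),
                  g (fun i => r * (if u ≤ y i then (1 : ℝ) else 0))) ∂π|)
        atTop (nhds 0)) := by
  obtain ⟨K, hK⟩ := hg_lip
  have hg_cont : Continuous g := hK.continuous
  constructor
  · intro a ha y hmono hy
    exact aux_part1 hα hg_cont hg_bdd hg_zero ha (hνsupp a ha) (hνmom a ha) y hmono hy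
  · intro M hM
    -- the three error terms
    have hFa := hH (auxfa α) auxfa_cont ⟨max 1 (2/α), auxfa_bd hα⟩
    have t1 : Tendsto (fun a : ℝ => ((K:ℝ) * M^2 / a)
        * (∫ r in Set.Ioi (0:ℝ), auxfa α r * min r (r^2) ∂(ν a))) atTop (nhds 0) := by
      have h2 := (tendsto_inv_atTop_zero.mul hFa).const_mul ((K:ℝ) * M^2)
      simp only [zero_mul, mul_zero] at h2
      refine h2.congr (fun a => ?_)
      ring
    have t2 : Tendsto (fun a : ℝ =>
        (M/α) * ∫ r in Set.Ioi (α * a / M), r ∂(ν a)) atTop (nhds 0) := by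
      have := (aux_tail hα hM hπsupp hπmom hνsupp hνmom hH).const_mul (M/α)
      rwa [mul_zero] at this
    have t3 : Tendsto (fun a : ℝ => M * ∑ k ∈ Finset.range (n+1),
        |(∫ r, g (fun i => if k ≤ (i:ℕ) then r else 0) ∂(ν a))
          - ∫ r, g (fun i => if k ≤ (i:ℕ) then r else 0) ∂π|) atTop (nhds 0) := by
      have hsum : Tendsto (fun a : ℝ => ∑ k ∈ Finset.range (n+1),
          |(∫ r, g (fun i => if k ≤ (i:ℕ) then r else 0) ∂(ν a))
            - ∫ r, g (fun i => if k ≤ (i:ℕ) then r else 0) ∂π|) atTop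
          (nhds (∑ k ∈ Finset.range (n+1), (0:ℝ))) := by
        refine tendsto_finset_sum _ (fun k _ => ?_)
        have hck := aux_ck_tendsto hα hg_cont hg_bdd hg_zero hπsupp hνsupp hH k
        have h3 := (hck.sub (tendsto_const_nhds :
          Tendsto (fun _ : ℝ => ∫ r, g (fun i => if k ≤ (i:ℕ) then r else 0) ∂π)
            atTop _)).abs
        simpa using h3
      simp only [Finset.sum_const_zero] at hsum
      have := hsum.const_mul M
      rwa [mul_zero] at this
    have hB := (t1.add t2).add t3
    simp only [add_zero] at hB
    refine squeeze_zero' ?_ ?_ hB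
    · refine Eventually.of_forall (fun a => ?_)
      exact Real.iSup_nonneg (fun y => Real.iSup_nonneg (fun _ => abs_nonneg _))
    · filter_upwards [eventually_ge_atTop (max M 1)] with a ha
      have ha1 : (1:ℝ) ≤ a := le_trans (le_max_right _ _) ha
      have ha0 : (0:ℝ) < a := lt_of_lt_of_le one_pos ha1
      have hMa : M ≤ a := le_trans (le_max_left _ _) ha
      have hBnn : 0 ≤ ((K:ℝ) * M^2 / a)
          * (∫ r in Set.Ioi (0:ℝ), auxfa α r * min r (r^2) ∂(ν a))
          + (M/α) * (∫ r in Set.Ioi (α * a / M), r ∂(ν a))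
          + M * ∑ k ∈ Finset.range (n+1),
              |(∫ r, g (fun i => if k ≤ (i:ℕ) then r else 0) ∂(ν a))
                - ∫ r, g (fun i => if k ≤ (i:ℕ) then r else 0) ∂π| := by
        have h1 : 0 ≤ ∫ r in Set.Ioi (0:ℝ), auxfa α r * min r (r^2) ∂(ν a) :=
          setIntegral_nonneg measurableSet_Ioi (fun r hr =>
            mul_nonneg (auxfa_nonneg r) (le_min (Set.mem_Ioi.mp hr).le (sq_nonneg r)))
        have h2 : 0 ≤ ∫ r in Set.Ioi (α * a / M), r ∂(ν a) :=
          setIntegral_nonneg measurableSet_Ioi (fun r hr =>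
            ((by positivity : (0:ℝ) < α * a / M).trans (Set.mem_Ioi.mp hr)).le)
        have h3 : (0:ℝ) ≤ ∑ k ∈ Finset.range (n+1),
            |(∫ r, g (fun i => if k ≤ (i:ℕ) then r else 0) ∂(ν a))
              - ∫ r, g (fun i => if k ≤ (i:ℕ) then r else 0) ∂π| :=
          Finset.sum_nonneg (fun k _ => abs_nonneg _)
        have hc1 : (0:ℝ) ≤ (K:ℝ) * M^2 / a :=
          div_nonneg (mul_nonneg (NNReal.coe_nonneg K) (sq_nonneg M)) ha0.le
        have hc2 : (0:ℝ) ≤ M / α := div_nonneg hM.le hα.le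
        have := add_nonneg (add_nonneg (mul_nonneg hc1 h1) (mul_nonneg hc2 h2))
          (mul_nonneg hM.le h3)
        exact this
      refine Real.iSup_le (fun y => Real.iSup_le (fun hyS => ?_) hBnn) hBnn
      exact aux_main_est hα hM hK hg_bdd hg_zero hπsupp hπmom ha0 hMa
        (hνsupp a ha0) (hνmom a ha0) hyS.1 hyS.2
end

section
/- Let ν be a Borel measure on (0,1] with ∫ r² ν(dr) < ∞ satisfying Assumption (A) with index γ ∈ (1,2) and slowly varying function L. For integers b ≥ 2 set α_b = ∫_{(0,1]} (1 − (1−x)^b − b x (1−x)^{b−1}) ν(dx), which equals the total coalescence rate ∑_{k=2}^{b} C(b,k) ∫ x^k (1−x)^{b−k} ν(dx) of the associated Λ-coalescent started from b blocks. Then lim_{b→∞} α_b / (b^{γ} L(1/b)) = Γ(2−γ). -/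
open MeasureTheory Filter Set Topology

lemma binom_id (b : ℕ) (hb : 2 ≤ b) (x : ℝ) :
    1 - (1-x)^b - (b:ℝ) * x * (1-x)^(b-1)
      = ∑ k ∈ Finset.Icc 2 b, (b.choose k : ℝ) * (x^k * (1-x)^(b-k)) := by
  have h := add_pow x (1-x) b
  rw [add_sub_cancel, one_pow] at h
  rw [Finset.range_eq_Ico] at h
  rw [Finset.sum_eq_sum_Ico_succ_bot (by omega) _ ] at h
  rw [Finset.sum_eq_sum_Ico_succ_bot (by omega) _ ] at h
  rw [Finset.Ico_add_one_right_eq_Icc] at h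
  norm_num at h
  have : ∑ k ∈ Finset.Icc 2 b, (b.choose k : ℝ) * (x^k * (1-x)^(b-k))
      = ∑ k ∈ Finset.Icc 2 b, x ^ k * (1-x)^(b-k) * (b.choose k : ℝ) := by
    apply Finset.sum_congr rfl; intro k _; ring
  rw [this]
  linarith [h]

lemma term_integrable (ν : Measure ℝ) (hνsupp : ν (Set.Ioc 0 1)ᶜ = 0)
    (hνmom : ∫⁻ r, ENNReal.ofReal (r ^ 2) ∂ν < ⊤) (b k : ℕ) (hk : 2 ≤ k) :
    Integrable (fun x : ℝ => x ^ k * (1 - x) ^ (b - k)) ν := by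
  have hsq : Integrable (fun x : ℝ => x ^ 2) ν := by
    refine ⟨(measurable_id.pow_const 2).aestronglyMeasurable, ?_⟩
    rw [HasFiniteIntegral]
    calc ∫⁻ x, ‖x ^ 2‖₊ ∂ν = ∫⁻ x, ENNReal.ofReal (x ^ 2) ∂ν := by
          apply lintegral_congr; intro x
          exact (Real.enorm_eq_ofReal (sq_nonneg x))
      _ < ⊤ := hνmom
  have hae : ∀ᵐ x ∂ν, x ∈ Set.Ioc (0:ℝ) 1 := mem_ae_iff.2 hνsupp
  refine hsq.mono ?_ ?_
  · exact ((measurable_id.pow_const k).mul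
      ((measurable_const.sub measurable_id).pow_const (b-k))).aestronglyMeasurable
  · filter_upwards [hae] with x hx
    obtain ⟨hx0, hx1⟩ := hx
    have h1 : (0:ℝ) ≤ 1 - x := by linarith
    have h2 : x ^ k ≤ x ^ 2 := pow_le_pow_of_le_one hx0.le hx1 hk
    have h3 : (1-x) ^ (b-k) ≤ 1 := pow_le_one₀ h1 (by linarith)
    rw [Real.norm_eq_abs, Real.norm_eq_abs, abs_of_nonneg (by positivity),
      abs_of_nonneg (by positivity)]
    calc x ^ k * (1-x)^(b-k) ≤ x ^ k * 1 :=
          mul_le_mul_of_nonneg_left h3 (by positivity)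
      _ = x ^ k := mul_one _
      _ ≤ x ^ 2 := h2

lemma part1 (ν : Measure ℝ) (hνsupp : ν (Set.Ioc 0 1)ᶜ = 0)
    (hνmom : ∫⁻ r, ENNReal.ofReal (r ^ 2) ∂ν < ⊤) (b : ℕ) (hb : 2 ≤ b) :
    ∫ x, (1 - (1 - x) ^ b - (b : ℝ) * x * (1 - x) ^ (b - 1)) ∂ν
      = ∑ k ∈ Finset.Icc 2 b,
          (b.choose k : ℝ) * ∫ x, x ^ k * (1 - x) ^ (b - k) ∂ν := by
  have : (fun x : ℝ => 1 - (1 - x) ^ b - (b : ℝ) * x * (1 - x) ^ (b - 1))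
      = fun x => ∑ k ∈ Finset.Icc 2 b, (b.choose k : ℝ) * (x^k * (1-x)^(b-k)) := by
    funext x; exact binom_id b hb x
  rw [this, integral_finset_sum]
  · apply Finset.sum_congr rfl; intro k _
    exact integral_const_mul _ _
  · intro k hk
    exact ((term_integrable ν hνsupp hνmom b k (Finset.mem_Icc.1 hk).1).const_mul _)


lemma potter {F : ℝ → ℝ} {ε0 p : ℝ} (hε0 : 0 < ε0) (hε1 : ε0 ≤ 1)
    (hF0 : ∀ t ∈ Set.Ioc (0:ℝ) 1, 0 ≤ F t)
    (hanti : ∀ s t : ℝ, 0 < s → s ≤ t → t ≤ 1 → F t ≤ F s)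
    (hp : 0 < p)
    (hhalf : ∀ x ∈ Set.Ioc (0:ℝ) ε0, F (x/2) ≤ 2^p * F x) :
    ∀ x ∈ Set.Ioc (0:ℝ) ε0, ∀ s ∈ Set.Ioc (0:ℝ) 1, F (s*x) ≤ 2^p * s^(-p) * F x := by
  have h2p : (1:ℝ) ≤ 2^p := Real.one_le_rpow (by norm_num) hp.le
  -- the case 1/2 < s
  have hbig : ∀ x ∈ Set.Ioc (0:ℝ) ε0, ∀ s : ℝ, 1/2 < s → s ≤ 1 →
      F (s*x) ≤ 2^p * s^(-p) * F x := by
    intro x hx s hs2 hs1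
    obtain ⟨hx0, hxε⟩ := hx
    have hsp : (0:ℝ) < s := by linarith
    have h1 : F (s*x) ≤ F (x/2) := by
      apply hanti (x/2) (s*x) (by positivity) (by nlinarith) (by nlinarith)
    have h2 : F (x/2) ≤ 2^p * F x := hhalf x ⟨hx0, hxε⟩
    have h3 : (1:ℝ) ≤ s^(-p) :=
      Real.one_le_rpow_of_pos_of_le_one_of_nonpos hsp hs1 (by linarith)
    have hFx : 0 ≤ F x := hF0 x ⟨hx0, le_trans hxε hε1⟩
    nlinarith [mul_le_mul_of_nonneg_left h3 (mul_nonneg (by positivity : (0:ℝ) ≤ 2^p) hFx)]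
  -- induction
  have hQ : ∀ n : ℕ, ∀ x ∈ Set.Ioc (0:ℝ) ε0, ∀ s : ℝ, (1/2:ℝ)^n ≤ s → s ≤ 1 →
      F (s*x) ≤ 2^p * s^(-p) * F x := by
    intro n
    induction n with
    | zero =>
      intro x hx s h1 h2
      exact hbig x hx s (by norm_num at h1 ⊢; linarith) h2
    | succ n ih =>
      intro x hx s h1 h2
      rcases le_or_gt s (1/2) with hs | hs
      · -- s ≤ 1/2 : write s*x = (2s)*(x/2)
        obtain ⟨hx0, hxε⟩ := hx
        have hs0 : (0:ℝ) < s := lt_of_lt_of_le (by positivity) h1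
        have hx2 : x/2 ∈ Set.Ioc (0:ℝ) ε0 := ⟨by positivity, by linarith⟩
        have h2s : (1/2:ℝ)^n ≤ 2*s := by
          have : (1/2:ℝ)^(n+1) = (1/2) * (1/2)^n := by ring
          rw [this] at h1; linarith
        have key : F ((2*s) * (x/2)) ≤ 2^p * (2*s)^(-p) * F (x/2) :=
          ih (x/2) hx2 (2*s) h2s (by linarith)
        have heq : (2*s) * (x/2) = s * x := by ring
        rw [heq] at key
        have h2' : F (x/2) ≤ 2^p * F x := hhalf x ⟨hx0, hxε⟩
        have hrw : (2*s : ℝ)^(-p) = 2^(-p) * s^(-p) :=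
          Real.mul_rpow (by norm_num) hs0.le
        have h2pn : (2:ℝ)^p * 2^(-p) = 1 := by
          rw [← Real.rpow_add (by norm_num)]; simp
        have hFx2 : 0 ≤ F (x/2) := hF0 _ ⟨by positivity, by linarith⟩
        calc F (s*x) ≤ 2^p * (2*s)^(-p) * F (x/2) := key
          _ ≤ 2^p * (2*s)^(-p) * (2^p * F x) := by
              apply mul_le_mul_of_nonneg_left h2' (by positivity)
          _ = (2^p * 2^(-p)) * (2^p * s^(-p) * F x) := by rw [hrw]; ring
          _ = 2^p * s^(-p) * F x := by rw [h2pn]; ring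
      · exact hbig x hx s hs h2
  intro x hx s hs
  obtain ⟨hs0, hs1⟩ := hs
  obtain ⟨n, hn⟩ := exists_pow_lt_of_lt_one hs0 (by norm_num : (1/2:ℝ) < 1)
  exact hQ n x hx s hn.le hs1


lemma hasDeriv_g (b : ℕ) (hb : 2 ≤ b) (t : ℝ) :
    HasDerivAt (fun t : ℝ => 1 - (1-t)^b - (b:ℝ)*t*(1-t)^(b-1))
      ((b:ℝ)*((b:ℝ)-1)*t*(1-t)^(b-2)) t := by
  have hu : HasDerivAt (fun t : ℝ => 1 - t) (-1) t := by
    simpa using (hasDerivAt_id t).const_sub 1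
  have h1 : HasDerivAt (fun t : ℝ => (1-t)^b) ((b:ℝ) * (1-t)^(b-1) * (-1)) t := hu.pow b
  have h2' : HasDerivAt (fun t : ℝ => (1-t)^(b-1))
      (((b-1:ℕ):ℝ) * (1-t)^(b-1-1) * (-1)) t := hu.pow (b-1)
  have h3 : HasDerivAt (fun t : ℝ => (b:ℝ)*t) (b:ℝ) t := by
    simpa using (hasDerivAt_id t).const_mul (b:ℝ)
  have h4 := h3.mul h2'
  have h5 := (h1.const_sub 1).sub h4
  refine h5.congr_deriv ?_
  have hb1 : b - 1 - 1 = b - 2 := by omega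
  have hc : ((b-1:ℕ):ℝ) = (b:ℝ) - 1 := by
    have : (1:ℕ) ≤ b := by omega
    push_cast [Nat.cast_sub this]; ring
  rw [hb1, hc]
  have hbb : (1-t)^(b-1) = (1-t) * (1-t)^(b-2) := by
    rw [← pow_succ']
    congr 1; omega
  rw [hbb]; ring

lemma ftc_g (b : ℕ) (hb : 2 ≤ b) (x : ℝ) (hx0 : 0 ≤ x) (hx1 : x ≤ 1) :
    ∫ t in (0)..x, (b:ℝ)*((b:ℝ)-1) * t * (max (1-t) 0)^(b-2)
      = 1 - (1-x)^b - (b:ℝ)*x*(1-x)^(b-1) := by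
  have hcong : ∫ t in (0)..x, (b:ℝ)*((b:ℝ)-1) * t * (max (1-t) 0)^(b-2)
      = ∫ t in (0)..x, (b:ℝ)*((b:ℝ)-1) * t * (1-t)^(b-2) := by
    apply intervalIntegral.integral_congr
    intro t ht
    rw [Set.uIcc_of_le hx0] at ht
    have : max (1-t) 0 = 1 - t := max_eq_left (by linarith [ht.1, ht.2])
    simp only [max_comm]; rw [max_comm, this]
  rw [hcong]
  have := intervalIntegral.integral_eq_sub_of_hasDerivAt
    (f := fun t : ℝ => 1 - (1-t)^b - (b:ℝ)*t*(1-t)^(b-1))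
    (f' := fun t : ℝ => (b:ℝ)*((b:ℝ)-1)*t*(1-t)^(b-2)) (a := 0) (b := x)
    (fun t _ => hasDeriv_g b hb t)
    (by
      apply Continuous.intervalIntegrable
      exact ((continuous_const.mul continuous_id).mul
        ((continuous_const.sub continuous_id).pow _)))
  rw [this]
  simp

lemma layer (ν : Measure ℝ) (hνsupp : ν (Set.Ioc 0 1)ᶜ = 0)
    (hfin : ∀ t ∈ Set.Ioc (0:ℝ) 1, ν (Set.Icc t 1) ≠ ⊤)
    (b : ℕ) (hb : 2 ≤ b) :
    ∫⁻ x, ENNReal.ofReal (1 - (1-x)^b - (b:ℝ)*x*(1-x)^(b-1)) ∂ν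
      = ∫⁻ t in Set.Ioc (0:ℝ) 1,
          ENNReal.ofReal ((b:ℝ)*((b:ℝ)-1)*t*(1-t)^(b-2) * (ν (Set.Icc t 1)).toReal) := by
  set φ : ℝ → ℝ := fun t => (b:ℝ)*((b:ℝ)-1) * t * (max (1-t) 0)^(b-2) with hφ
  have hae : ∀ᵐ x ∂ν, x ∈ Set.Ioc (0:ℝ) 1 := mem_ae_iff.2 hνsupp
  have hφc : Continuous φ := by
    apply (continuous_const.mul continuous_id).mul
    exact ((continuous_const.sub continuous_id).max continuous_const).pow _
  have hφnn : ∀ t : ℝ, 0 ≤ t → 0 ≤ φ t := by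
    intro t ht
    have h1 : (0:ℝ) ≤ (b:ℝ) - 1 := by
      have : (2:ℝ) ≤ (b:ℝ) := by exact_mod_cast hb
      linarith
    have h2 : (0:ℝ) ≤ max (1-t) 0 := le_max_right _ _
    positivity
  have key := lintegral_comp_eq_lintegral_meas_le_mul ν (f := id) (g := φ)
    (by filter_upwards [hae] with x hx; exact hx.1.le)
    aemeasurable_id
    (fun t _ => hφc.intervalIntegrable 0 t)
    (by
      filter_upwards [ae_restrict_mem measurableSet_Ioi] with t ht
      exact hφnn t (le_of_lt ht))
  have hlhs : ∫⁻ x, ENNReal.ofReal (∫ t in (0)..(id x), φ t) ∂ν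
      = ∫⁻ x, ENNReal.ofReal (1 - (1-x)^b - (b:ℝ)*x*(1-x)^(b-1)) ∂ν := by
    apply lintegral_congr_ae
    filter_upwards [hae] with x hx
    rw [id]
    congr 1
    exact ftc_g b hb x hx.1.le hx.2
  rw [hlhs] at key
  rw [key]
  -- split the t-integral
  have hsplit : (Set.Ioi (0:ℝ)) = Set.Ioc (0:ℝ) 1 ∪ Set.Ioi 1 :=
    (Set.Ioc_union_Ioi_eq_Ioi (by norm_num)).symm
  rw [hsplit, lintegral_union measurableSet_Ioi Set.Ioc_disjoint_Ioi_same]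
  have hzero : ∫⁻ t in Set.Ioi (1:ℝ), ν {a : ℝ | t ≤ id a} * ENNReal.ofReal (φ t) = 0 := by
    rw [setLIntegral_congr_fun measurableSet_Ioi
      (fun t (ht : t ∈ Set.Ioi (1:ℝ)) => ?_), lintegral_zero]
    have : ν {a : ℝ | t ≤ id a} = 0 := by
      apply measure_mono_null _ hνsupp
      intro a ha
      simp only [Set.mem_setOf_eq, id] at ha
      simp only [Set.mem_compl_iff, Set.mem_Ioc, not_and_or, not_le]
      right; linarith [Set.mem_Ioi.1 ht]
    rw [this, zero_mul]
  rw [hzero, add_zero]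
  apply setLIntegral_congr_fun measurableSet_Ioc
  intro t ht
  have h1 : {a : ℝ | t ≤ id a} ∩ Set.Ioc 0 1 = Set.Icc t 1 := by
    ext a
    simp only [Set.mem_inter_iff, Set.mem_setOf_eq, id, Set.mem_Ioc, Set.mem_Icc]
    constructor
    · rintro ⟨h, _, h2⟩; exact ⟨h, h2⟩
    · rintro ⟨h, h2⟩; exact ⟨h, lt_of_lt_of_le ht.1 h, h2⟩
  have h2 : ν {a : ℝ | t ≤ id a} = ν (Set.Icc t 1) := by
    rw [← measure_inter_conull hνsupp, h1]
  have hφt : φ t = (b:ℝ)*((b:ℝ)-1)*t*(1-t)^(b-2) := by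
    simp only [hφ]
    congr 2
    exact max_eq_left (by linarith [ht.2])
  calc ν {a : ℝ | t ≤ id a} * ENNReal.ofReal (φ t)
      = ENNReal.ofReal ((ν (Set.Icc t 1)).toReal) * ENNReal.ofReal (φ t) := by
        rw [h2, ENNReal.ofReal_toReal (hfin t ht)]
    _ = ENNReal.ofReal (φ t * (ν (Set.Icc t 1)).toReal) := by
        rw [ENNReal.ofReal_mul (hφnn t ht.1.le), mul_comm]
    _ = ENNReal.ofReal ((b:ℝ)*((b:ℝ)-1)*t*(1-t)^(b-2) * (ν (Set.Icc t 1)).toReal) := by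
        rw [hφt]


lemma tendsto_pow_exp (s : ℝ) :
    Tendsto (fun b : ℕ => (1 - s/(b:ℝ))^(b-2)) atTop (𝓝 (Real.exp (-s))) := by
  have h0 := Real.tendsto_one_add_div_pow_exp (-s)
  have hbase : Tendsto (fun b : ℕ => 1 - s/(b:ℝ)) atTop (𝓝 1) := by
    have h1 : Tendsto (fun b : ℕ => s/(b:ℝ)) atTop (𝓝 0) :=
      tendsto_const_nhds.div_atTop tendsto_natCast_atTop_atTop
    simpa using tendsto_const_nhds.sub h1
  have hsq : Tendsto (fun b : ℕ => (1 - s/(b:ℝ))^2) atTop (𝓝 1) := by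
    simpa using hbase.pow 2
  have hd := h0.div hsq one_ne_zero
  rw [div_one] at hd
  apply hd.congr'
  filter_upwards [eventually_gt_atTop (max 2 ⌈s⌉₊)] with b hb
  have hb2 : 2 ≤ b := le_of_lt (lt_of_le_of_lt (le_max_left _ _) hb)
  have hbs : s < (b:ℝ) := by
    calc s ≤ (⌈s⌉₊ : ℝ) := Nat.le_ceil s
      _ ≤ ((max 2 ⌈s⌉₊ : ℕ) : ℝ) := by exact_mod_cast Nat.cast_le.2 (le_max_right _ _)
      _ < (b:ℝ) := by exact_mod_cast hb
  have hbpos : (0:ℝ) < b := by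
    have : 0 < b := by omega
    exact_mod_cast this
  have hpos : 0 < 1 - s/(b:ℝ) := by
    rw [sub_pos, div_lt_one hbpos]; exact hbs
  have : (1:ℝ) + -s/(b:ℝ) = 1 - s/(b:ℝ) := by ring
  simp only [Pi.div_apply]
  rw [this, pow_sub₀ _ (ne_of_gt hpos) hb2, div_eq_mul_inv]

lemma sexp_bound (s : ℝ) : s * Real.exp (-(2⁻¹*s)) ≤ 4 * Real.exp (-(4⁻¹*s)) := by
  have h1 : s ≤ 4 * Real.exp (4⁻¹*s) := by
    have := Real.add_one_le_exp (4⁻¹*s)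
    nlinarith [Real.exp_pos (4⁻¹*s)]
  calc s * Real.exp (-(2⁻¹*s)) ≤ 4 * Real.exp (4⁻¹*s) * Real.exp (-(2⁻¹*s)) :=
        mul_le_mul_of_nonneg_right h1 (Real.exp_pos _).le
    _ = 4 * Real.exp (-(4⁻¹*s)) := by
        rw [mul_assoc, ← Real.exp_add]; ring_nf

lemma bound_integrable (p : ℝ) (hp2 : p < 2) (c : ℝ) :
    IntegrableOn (fun s : ℝ => if s ≤ 1 then c * s^(1-p) else 4 * Real.exp (-(4⁻¹*s)))
      (Set.Ioi 0) := by
  have h1 : IntegrableOn (fun s : ℝ => if s ≤ 1 then c * s^(1-p) else 4 * Real.exp (-(4⁻¹*s)))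
      (Set.Ioc 0 1) := by
    have hbase : IntegrableOn (fun s : ℝ => s^(1-p)) (Set.Ioc 0 1) := by
      rw [integrableOn_Ioc_iff_integrableOn_Ioo]
      exact (intervalIntegral.integrableOn_Ioo_rpow_iff one_pos).2 (by linarith)
    apply IntegrableOn.congr_fun (hbase.const_mul c) _ measurableSet_Ioc
    intro s hs; simp [hs.2]
  have h2 : IntegrableOn (fun s : ℝ => if s ≤ 1 then c * s^(1-p) else 4 * Real.exp (-(4⁻¹*s)))
      (Set.Ioi 1) := by
    have hbase : IntegrableOn (fun s : ℝ => 4 * Real.exp (-(4⁻¹*s))) (Set.Ioi 1) := by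
      have h0 := exp_neg_integrableOn_Ioi (1:ℝ) (by norm_num : (0:ℝ) < 4⁻¹)
      have h1 := h0.const_mul (4:ℝ)
      simp only [neg_mul] at h1
      exact h1
    apply IntegrableOn.congr_fun hbase _ measurableSet_Ioi
    intro s hs
    have : ¬ (s ≤ 1) := not_le.2 (Set.mem_Ioi.1 hs)
    simp [this]
  have := h1.union h2
  apply this.mono_set
  rw [Set.Ioc_union_Ioi_eq_Ioi (by norm_num : (0:ℝ) ≤ 1)]
set_option maxHeartbeats 1000000 in
lemma part2 (ν : Measure ℝ) (hνsupp : ν (Set.Ioc 0 1)ᶜ = 0)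
    (γ : ℝ) (hγ : γ ∈ Set.Ioo (1 : ℝ) 2)
    (L : ℝ → ℝ) (hLpos : ∀ ε ∈ Set.Ioc (0 : ℝ) 1, 0 < L ε)
    (hLslow : ∀ c : ℝ, 0 < c →
      Tendsto (fun ε => L (c * ε) / L ε) (nhdsWithin 0 (Set.Ioi 0)) (nhds 1))
    (hA : ∀ ε ∈ Set.Ioc (0 : ℝ) 1,
      ν (Set.Icc ε 1) = ENNReal.ofReal (ε ^ (-γ) * L ε)) :
    Tendsto
      (fun b : ℕ =>
        (∫ x, (1 - (1 - x) ^ b - (b : ℝ) * x * (1 - x) ^ (b - 1)) ∂ν) /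
          ((b : ℝ) ^ γ * L (1 / (b : ℝ))))
      atTop (nhds (Real.Gamma (2 - γ))) := by
  obtain ⟨hγ1, hγ2⟩ := hγ
  set p : ℝ := (γ+2)/2 with hpdef
  have hγp : γ < p := by rw [hpdef]; linarith
  have hp2 : p < 2 := by rw [hpdef]; linarith
  have hp0 : 0 < p := by rw [hpdef]; linarith
  set F : ℝ → ℝ := fun t => (ν (Set.Icc t 1)).toReal with hFdef
  have hae : ∀ᵐ x ∂ν, x ∈ Set.Ioc (0:ℝ) 1 := mem_ae_iff.2 hνsupp
  have hfin : ∀ t ∈ Set.Ioc (0:ℝ) 1, ν (Set.Icc t 1) ≠ ⊤ := by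
    intro t ht; rw [hA t ht]; exact ENNReal.ofReal_ne_top
  have hFeq : ∀ t ∈ Set.Ioc (0:ℝ) 1, F t = t ^ (-γ) * L t := by
    intro t ht
    rw [hFdef]
    simp only []
    rw [hA t ht, ENNReal.toReal_ofReal]
    exact mul_nonneg (Real.rpow_nonneg ht.1.le _) (hLpos t ht).le
  have hFpos : ∀ t ∈ Set.Ioc (0:ℝ) 1, 0 < F t := by
    intro t ht
    rw [hFeq t ht]
    exact mul_pos (Real.rpow_pos_of_pos ht.1 _) (hLpos t ht)
  have hFnn : ∀ t : ℝ, 0 ≤ F t := fun t => ENNReal.toReal_nonneg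
  have hFanti : ∀ s t : ℝ, 0 < s → s ≤ t → t ≤ 1 → F t ≤ F s := by
    intro s t hs hst ht1
    apply ENNReal.toReal_mono (hfin s ⟨hs, le_trans hst ht1⟩)
    exact measure_mono (Set.Icc_subset_Icc_left hst)
  have hFmeas : Measurable F := by
    have : Antitone (fun t : ℝ => ν (Set.Icc t 1)) := by
      intro s t hst
      exact measure_mono (Set.Icc_subset_Icc_left hst)
    exact ENNReal.measurable_toReal.comp this.measurable
  -- the half-step estimate and Potter bound
  obtain ⟨ε0, hε00, hε01, hhalf⟩ :
      ∃ ε0 : ℝ, 0 < ε0 ∧ ε0 ≤ 1 ∧ ∀ x ∈ Set.Ioc (0:ℝ) ε0, F (x/2) ≤ 2^p * F x := by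
    have h2pg : (1:ℝ) < 2^(p-γ) :=
      (Real.one_lt_rpow_iff_of_pos (by norm_num)).2 (Or.inl ⟨one_lt_two, by linarith⟩)
    have hr := hLslow (1/2) (by norm_num)
    have hev1 : ∀ᶠ x in nhdsWithin (0:ℝ) (Set.Ioi 0), L ((1/2) * x) / L x < 2^(p-γ) :=
      hr.eventually_lt_const h2pg
    have hev2 : Set.Ioc (0:ℝ) 1 ∈ nhdsWithin (0:ℝ) (Set.Ioi 0) :=
      Ioc_mem_nhdsGT zero_lt_one
    have hev : ∀ᶠ x in nhdsWithin (0:ℝ) (Set.Ioi 0), F (x/2) ≤ 2^p * F x := by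
      filter_upwards [hev1, hev2] with x hx1 hx2
      have hx0 : 0 < x := hx2.1
      have hx1' : x ≤ 1 := hx2.2
      have harg : (1/2:ℝ)*x = x/2 := by ring
      rw [harg] at hx1
      have hx2mem : x/2 ∈ Set.Ioc (0:ℝ) 1 := ⟨by positivity, by linarith⟩
      have hL2 : L (x/2) ≤ 2^(p-γ) * L x := by
        have hLx : 0 < L x := hLpos x hx2
        rw [div_lt_iff₀ hLx] at hx1
        linarith
      rw [hFeq _ hx2mem, hFeq _ hx2]
      have hxr : (x/2) ^ (-γ) = 2^γ * x^(-γ) := by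
        rw [Real.div_rpow hx0.le (by norm_num : (0:ℝ) ≤ 2),
          Real.rpow_neg (by norm_num : (0:ℝ) ≤ 2)]
        field_simp
      rw [hxr]
      have h2p : (2:ℝ)^γ * 2^(p-γ) = 2^p := by
        rw [← Real.rpow_add (by norm_num : (0:ℝ) < 2)]
        norm_num
      have hxnn : (0:ℝ) ≤ x^(-γ) := Real.rpow_nonneg hx0.le _
      calc 2^γ * x^(-γ) * L (x/2) ≤ 2^γ * x^(-γ) * (2^(p-γ) * L x) := by
            apply mul_le_mul_of_nonneg_left hL2
            positivity
        _ = 2^p * (x^(-γ) * L x) := by rw [← h2p]; ring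
    obtain ⟨u, hu, hsub⟩ := mem_nhdsGT_iff_exists_Ioc_subset.1 hev
    refine ⟨min u 1, lt_min hu zero_lt_one, min_le_right _ _, ?_⟩
    intro x hx
    exact hsub ⟨hx.1, le_trans hx.2 (min_le_left _ _)⟩
  have hPot : ∀ x ∈ Set.Ioc (0:ℝ) ε0, ∀ s ∈ Set.Ioc (0:ℝ) 1,
      F (s*x) ≤ 2^p * s^(-p) * F x :=
    potter hε00 hε01 (fun t _ => hFnn t) hFanti hp0 hhalf
  -- target integrand and dominating function
  set H : ℕ → ℝ → ℝ := fun b => Set.indicator (Set.Ioc 0 (b:ℝ))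
    (fun s => ((b:ℝ)*((b:ℝ)-1)*(s/(b:ℝ))*(1-s/(b:ℝ))^(b-2)*F (s/(b:ℝ)))
        / ((b:ℝ) * F (1/(b:ℝ)))) with hHdef
  -- key identity
  have hHeq : ∀ b : ℕ, 2 ≤ b → ∫ s in Set.Ioi (0:ℝ), H b s
      = (∫ x, (1 - (1 - x) ^ b - (b : ℝ) * x * (1 - x) ^ (b - 1)) ∂ν) /
          ((b : ℝ) ^ γ * L (1 / (b : ℝ))) := by
    intro b hb
    have hbR : (2:ℝ) ≤ (b:ℝ) := by exact_mod_cast hb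
    have hbpos : (0:ℝ) < b := by linarith
    have hbne : (b:ℝ) ≠ 0 := ne_of_gt hbpos
    have h1b : 1/(b:ℝ) ∈ Set.Ioc (0:ℝ) 1 := ⟨by positivity, by rw [div_le_one hbpos]; linarith⟩
    have hF1b : 0 < F (1/(b:ℝ)) := hFpos _ h1b
    have hden : (b:ℝ)^γ * L (1/(b:ℝ)) = F (1/(b:ℝ)) := by
      rw [hFeq _ h1b]
      congr 1
      rw [one_div, Real.inv_rpow hbpos.le, Real.rpow_neg hbpos.le, inv_inv]
    set ψ : ℝ → ℝ := fun t => (b:ℝ)*((b:ℝ)-1)*t*(1-t)^(b-2)*F t with hψdef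
    have hFapp : ∀ t : ℝ, (ν (Set.Icc t 1)).toReal = F t := fun t => rfl
    have hg_meas : AEStronglyMeasurable
        (fun x : ℝ => 1 - (1-x)^b - (b:ℝ)*x*(1-x)^(b-1)) ν := by
      apply Measurable.aestronglyMeasurable
      fun_prop
    have hg_nonneg : ∀ᵐ x ∂ν, 0 ≤ 1 - (1-x)^b - (b:ℝ)*x*(1-x)^(b-1) := by
      filter_upwards [hae] with x hx
      rw [binom_id b hb x]
      apply Finset.sum_nonneg
      intro k hk
      have h1 : (0:ℝ) ≤ x := hx.1.le
      have h2 : (0:ℝ) ≤ 1 - x := by linarith [hx.2]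
      positivity
    have ha1 := integral_eq_lintegral_of_nonneg_ae hg_nonneg hg_meas
    have ha2 := layer ν hνsupp hfin b hb
    have hψ_meas : AEStronglyMeasurable ψ (volume.restrict (Set.Ioc (0:ℝ) 1)) := by
      apply Measurable.aestronglyMeasurable
      apply Measurable.mul _ hFmeas
      fun_prop
    have hψ_nonneg : ∀ᵐ t ∂(volume.restrict (Set.Ioc (0:ℝ) 1)), 0 ≤ ψ t := by
      filter_upwards [ae_restrict_mem measurableSet_Ioc] with t ht
      have h1 : (0:ℝ) ≤ t := ht.1.le
      have h2 : (0:ℝ) ≤ 1 - t := by linarith [ht.2]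
      have h3 : (0:ℝ) ≤ (b:ℝ) - 1 := by linarith
      have h4 := hFnn t
      simp only [hψdef]
      positivity
    have ha3 := integral_eq_lintegral_of_nonneg_ae hψ_nonneg hψ_meas
    have hstepa : (∫ x, (1 - (1 - x) ^ b - (b : ℝ) * x * (1 - x) ^ (b - 1)) ∂ν)
        = ∫ t in Set.Ioc (0:ℝ) 1, ψ t := by
      rw [ha1, ha2, ha3]
    have hmem : ∀ x : ℝ, x/(b:ℝ) ∈ Set.Ioc (0:ℝ) 1 ↔ x ∈ Set.Ioc (0:ℝ) (b:ℝ) := by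
      intro x
      simp only [Set.mem_Ioc]
      constructor
      · rintro ⟨h1, h2⟩
        have h3 := mul_pos h1 hbpos
        rw [div_mul_cancel₀ x hbne] at h3
        exact ⟨h3, (div_le_one hbpos).1 h2⟩
      · rintro ⟨h1, h2⟩
        exact ⟨div_pos h1 hbpos, (div_le_one hbpos).2 h2⟩
    have hsub : ∫ s in Set.Ioc (0:ℝ) (b:ℝ), ψ (s/(b:ℝ))
        = (b:ℝ) * ∫ t in Set.Ioc (0:ℝ) 1, ψ t := by
      have hcomp := MeasureTheory.Measure.integral_comp_div
        (g := Set.indicator (Set.Ioc (0:ℝ) 1) ψ) (b:ℝ)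
      have hfe : (fun x : ℝ => Set.indicator (Set.Ioc (0:ℝ) 1) ψ (x/(b:ℝ)))
          = Set.indicator (Set.Ioc (0:ℝ) (b:ℝ)) (fun x => ψ (x/(b:ℝ))) := by
        funext x
        rw [Set.indicator_apply, Set.indicator_apply, if_congr (hmem x) rfl rfl]
      rw [hfe] at hcomp
      rw [integral_indicator measurableSet_Ioc, integral_indicator measurableSet_Ioc] at hcomp
      rw [hcomp, abs_of_pos hbpos, smul_eq_mul]
    have hHint : ∫ s in Set.Ioi (0:ℝ), H b s
        = (∫ s in Set.Ioc (0:ℝ) (b:ℝ), ψ (s/(b:ℝ))) / ((b:ℝ) * F (1/(b:ℝ))) := by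
      simp only [hHdef]
      rw [integral_indicator measurableSet_Ioc,
        Measure.restrict_restrict measurableSet_Ioc,
        Set.inter_eq_left.2 Set.Ioc_subset_Ioi_self, integral_div]
    rw [hden, hstepa, hHint, hsub, mul_div_mul_left _ _ hbne]

  -- dominated convergence
  have htend : Tendsto (fun b : ℕ => ∫ s in Set.Ioi (0:ℝ), H b s) atTop
      (nhds (Real.Gamma (2 - γ))) := by
    obtain ⟨b0, hb04, hb0ε⟩ :
        ∃ b0 : ℕ, 4 ≤ b0 ∧ ∀ b : ℕ, b0 ≤ b → 1/(b:ℝ) ≤ ε0 := by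
      refine ⟨max 4 ⌈ε0⁻¹⌉₊, le_max_left _ _, ?_⟩
      intro b hbb
      have hb4 : (4:ℕ) ≤ b := le_trans (le_max_left _ _) hbb
      have hbR : (4:ℝ) ≤ (b:ℝ) := by exact_mod_cast hb4
      have hbpos : (0:ℝ) < b := by linarith
      have hceil : (ε0⁻¹ : ℝ) ≤ b := by
        calc ε0⁻¹ ≤ (⌈ε0⁻¹⌉₊ : ℝ) := Nat.le_ceil _
          _ ≤ b := by exact_mod_cast le_trans (le_max_right _ _) hbb
      rw [div_le_iff₀ hbpos]
      have h1 := mul_le_mul_of_nonneg_left hceil hε00.le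
      rw [mul_inv_cancel₀ (ne_of_gt hε00)] at h1
      linarith
    have hmeas : ∀ b : ℕ, AEStronglyMeasurable (H b) (volume.restrict (Set.Ioi (0:ℝ))) := by
      intro b
      apply Measurable.aestronglyMeasurable
      simp only [hHdef]
      apply Measurable.indicator _ measurableSet_Ioc
      apply Measurable.div _ measurable_const
      apply Measurable.mul _ (hFmeas.comp (measurable_id.div_const _))
      fun_prop
    have hbint : Integrable
        (fun s : ℝ => if s ≤ 1 then 2^p * s^(1-p) else 4 * Real.exp (-(4⁻¹*s)))
        (volume.restrict (Set.Ioi (0:ℝ))) := bound_integrable p hp2 (2^p)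
    have hbound : ∀ᶠ b : ℕ in atTop, ∀ᵐ s ∂(volume.restrict (Set.Ioi (0:ℝ))),
        ‖H b s‖ ≤ (fun s : ℝ => if s ≤ 1 then 2^p * s^(1-p) else 4 * Real.exp (-(4⁻¹*s))) s := by
      filter_upwards [eventually_ge_atTop (max b0 4)] with b hbb
      have hb4 : (4:ℕ) ≤ b := le_trans (le_max_right _ _) hbb
      have hbε : 1/(b:ℝ) ≤ ε0 := hb0ε b (le_trans (le_max_left _ _) hbb)
      have hb2 : 2 ≤ b := by omega
      have hbR : (4:ℝ) ≤ (b:ℝ) := by exact_mod_cast hb4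
      have hbpos : (0:ℝ) < b := by linarith
      have hbne : (b:ℝ) ≠ 0 := ne_of_gt hbpos
      have h1b : 1/(b:ℝ) ∈ Set.Ioc (0:ℝ) 1 :=
        ⟨by positivity, by rw [div_le_one hbpos]; linarith⟩
      have hF1b : 0 < F (1/(b:ℝ)) := hFpos _ h1b
      filter_upwards [ae_restrict_mem measurableSet_Ioi] with s hs
      simp only [hHdef]
      by_cases hsb : s ∈ Set.Ioc (0:ℝ) (b:ℝ)
      · rw [Set.indicator_of_mem hsb]
        have hs0 : 0 < s := hsb.1
        have hsB : s ≤ (b:ℝ) := hsb.2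
        have hsb1 : s/(b:ℝ) ≤ 1 := (div_le_one hbpos).2 hsB
        have hsbpos : 0 < s/(b:ℝ) := div_pos hs0 hbpos
        have h1msb : 0 ≤ 1 - s/(b:ℝ) := by linarith
        have hXle1 : (1 - s/(b:ℝ))^(b-2) ≤ 1 := pow_le_one₀ h1msb (by linarith)
        have hXnn : 0 ≤ (1 - s/(b:ℝ))^(b-2) := pow_nonneg h1msb _
        have hb1nn : (0:ℝ) ≤ (b:ℝ) - 1 := by linarith
        have hb1le : (b:ℝ) - 1 ≤ (b:ℝ) := by linarith
        have hFs := hFnn (s/(b:ℝ))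
        have hvpos : 0 ≤ ((b:ℝ)*((b:ℝ)-1)*(s/(b:ℝ))*(1-s/(b:ℝ))^(b-2)*F (s/(b:ℝ)))
            / ((b:ℝ) * F (1/(b:ℝ))) := by positivity
        rw [Real.norm_eq_abs, abs_of_nonneg hvpos]
        rcases le_or_gt s 1 with hs1 | hs1
        · rw [if_pos hs1]
          have hsm : s * (1/(b:ℝ)) = s/(b:ℝ) := mul_one_div s (b:ℝ)
          have hPots := hPot (1/(b:ℝ)) ⟨by positivity, hbε⟩ s ⟨hs0, hs1⟩
          rw [hsm] at hPots
          have hs1p : s^(1-p) = s * s^(-p) := by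
            rw [sub_eq_add_neg, Real.rpow_add hs0, Real.rpow_one]
          have hspnn : (0:ℝ) ≤ s^(-p) := Real.rpow_nonneg hs0.le _
          calc ((b:ℝ)*((b:ℝ)-1)*(s/(b:ℝ))*(1-s/(b:ℝ))^(b-2)*F (s/(b:ℝ)))
              / ((b:ℝ) * F (1/(b:ℝ)))
              ≤ ((b:ℝ)*(b:ℝ)*(s/(b:ℝ))*1*(2^p * s^(-p) * F (1/(b:ℝ))))
              / ((b:ℝ) * F (1/(b:ℝ))) := by
                rw [div_le_div_iff_of_pos_right (mul_pos hbpos hF1b)]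
                gcongr <;>
                  first
                    | positivity
                    | exact hFs
                    | exact hXnn
                    | exact hXle1
                    | exact hPots
                    | linarith
            _ = 2^p * s^(1-p) := by
                rw [hs1p]
                field_simp
        · rw [if_neg (not_le.2 hs1)]
          have hFs_le : F (s/(b:ℝ)) ≤ F (1/(b:ℝ)) := by
            apply hFanti _ _ (by positivity) _ hsb1
            exact (div_le_div_iff_of_pos_right hbpos).2 hs1.le
          have hXe : (1 - s/(b:ℝ))^(b-2) ≤ Real.exp (-(2⁻¹*s)) := by
            have h1 : 1 - s/(b:ℝ) ≤ Real.exp (-(s/(b:ℝ))) := by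
              have := Real.add_one_le_exp (-(s/(b:ℝ)))
              linarith
            have h2 : (1 - s/(b:ℝ))^(b-2) ≤ Real.exp (-(s/(b:ℝ)))^(b-2) :=
              pow_le_pow_left₀ h1msb h1 _
            apply le_trans h2
            rw [← Real.exp_nat_mul]
            apply Real.exp_le_exp.2
            have hc : ((b-2:ℕ):ℝ) = (b:ℝ) - 2 := by
              have h22 : (2:ℕ) ≤ b := hb2
              push_cast [Nat.cast_sub h22]
              ring
            rw [hc]
            have hsb' : s/(b:ℝ)*(b:ℝ) = s := div_mul_cancel₀ s hbne
            nlinarith [mul_nonneg hsbpos.le (by linarith : (0:ℝ) ≤ (b:ℝ) - 4)]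
          calc ((b:ℝ)*((b:ℝ)-1)*(s/(b:ℝ))*(1-s/(b:ℝ))^(b-2)*F (s/(b:ℝ)))
              / ((b:ℝ) * F (1/(b:ℝ)))
              ≤ ((b:ℝ)*(b:ℝ)*(s/(b:ℝ))*Real.exp (-(2⁻¹*s))*F (1/(b:ℝ)))
              / ((b:ℝ) * F (1/(b:ℝ))) := by
                rw [div_le_div_iff_of_pos_right (mul_pos hbpos hF1b)]
                gcongr <;>
                  first
                    | positivity
                    | exact hFnn _
                    | exact hXnn
                    | exact hXe
                    | exact hFs_le
                    | linarith
            _ = s * Real.exp (-(2⁻¹*s)) := by field_simp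
            _ ≤ 4 * Real.exp (-(4⁻¹*s)) := sexp_bound s
      · rw [Set.indicator_of_notMem hsb, norm_zero]
        by_cases hs1 : s ≤ 1
        · rw [if_pos hs1]
          have hs0 : (0:ℝ) < s := hs
          positivity
        · rw [if_neg hs1]
          positivity
    have hlim : ∀ᵐ s ∂(volume.restrict (Set.Ioi (0:ℝ))),
        Tendsto (fun b : ℕ => H b s) atTop (𝓝 (Real.exp (-s) * s^(1-γ))) := by
      filter_upwards [ae_restrict_mem measurableSet_Ioi] with s hs
      have hs0 : (0:ℝ) < s := hs
      have T1 : Tendsto (fun b : ℕ => ((b:ℝ)-1)/(b:ℝ)) atTop (𝓝 1) := by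
        have h0 : Tendsto (fun b : ℕ => 1 - 1/(b:ℝ)) atTop (𝓝 1) := by
          have h00 : Tendsto (fun n : ℕ => 1/(n:ℝ)) atTop (𝓝 0) := tendsto_one_div_atTop_nhds_zero_nat
          simpa using tendsto_const_nhds.sub h00
        apply h0.congr'
        filter_upwards [eventually_ge_atTop 1] with b hb
        have hbpos : (0:ℝ) < b := by
          have : 0 < b := hb
          exact_mod_cast this
        field_simp
      have T2 := tendsto_pow_exp s
      have hseq : Tendsto (fun b : ℕ => 1/(b:ℝ)) atTop (nhdsWithin 0 (Set.Ioi 0)) := by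
        apply tendsto_nhdsWithin_of_tendsto_nhds_of_eventually_within
        · exact tendsto_one_div_atTop_nhds_zero_nat
        · filter_upwards [eventually_ge_atTop 1] with b hb
          have hbpos : (0:ℝ) < b := by
            have : 0 < b := hb
            exact_mod_cast this
          simp only [Set.mem_Ioi]
          positivity
      have T3 : Tendsto (fun b : ℕ => F (s*(1/(b:ℝ)))/F (1/(b:ℝ))) atTop (𝓝 (s^(-γ))) := by
        have hLr := (hLslow s hs0).comp hseq
        have hLc := hLr.const_mul (s^(-γ))
        rw [mul_one] at hLc
        apply hLc.congr'
        filter_upwards [eventually_ge_atTop (max 1 ⌈s⌉₊)] with b hb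
        have hb1 : 1 ≤ b := le_trans (le_max_left _ _) hb
        have hbpos : (0:ℝ) < b := by
          have : 0 < b := hb1
          exact_mod_cast this
        have hsb : s ≤ (b:ℝ) := by
          calc s ≤ (⌈s⌉₊:ℝ) := Nat.le_ceil s
            _ ≤ b := by exact_mod_cast le_trans (le_max_right _ _) hb
        have h1bm : 1/(b:ℝ) ∈ Set.Ioc (0:ℝ) 1 := by
          constructor
          · positivity
          · rw [div_le_one hbpos]
            exact_mod_cast hb1
        have hsbm : s*(1/(b:ℝ)) ∈ Set.Ioc (0:ℝ) 1 :=
          ⟨by positivity, by rw [mul_one_div, div_le_one hbpos]; exact hsb⟩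
        have hLne : L (1/(b:ℝ)) ≠ 0 := ne_of_gt (hLpos _ h1bm)
        have hne : ((1:ℝ)/(b:ℝ))^(-γ) ≠ 0 := ne_of_gt (Real.rpow_pos_of_pos (by positivity) _)
        simp only [Function.comp]
        rw [hFeq _ hsbm, hFeq _ h1bm,
          Real.mul_rpow hs0.le (by positivity : (0:ℝ) ≤ 1/(b:ℝ))]
        have hrw : s^(-γ) * ((1:ℝ)/(b:ℝ))^(-γ) * L (s*(1/(b:ℝ)))
            = ((1:ℝ)/(b:ℝ))^(-γ) * (s^(-γ) * L (s*(1/(b:ℝ)))) := by ring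
        rw [hrw, mul_div_mul_left _ _ hne, mul_div_assoc]
      have Ttot := ((T1.mul_const s).mul T2).mul T3
      have hval : Real.exp (-s) * s^(1-γ) = ((1*s) * Real.exp (-s)) * s^(-γ) := by
        rw [sub_eq_add_neg, Real.rpow_add hs0, Real.rpow_one]
        ring
      rw [hval]
      apply Ttot.congr'
      filter_upwards [eventually_ge_atTop (max 2 ⌈s⌉₊)] with b hb
      have hb2 : 2 ≤ b := le_trans (le_max_left _ _) hb
      have hbR : (2:ℝ) ≤ b := by exact_mod_cast hb2
      have hbpos : (0:ℝ) < b := by linarith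
      have hbne : (b:ℝ) ≠ 0 := ne_of_gt hbpos
      have hsb : s ≤ (b:ℝ) := by
        calc s ≤ (⌈s⌉₊:ℝ) := Nat.le_ceil s
          _ ≤ b := by exact_mod_cast le_trans (le_max_right _ _) hb
      have hF1b : 0 < F (1/(b:ℝ)) :=
        hFpos _ ⟨by positivity, by rw [div_le_one hbpos]; linarith⟩
      have hF1bne : F (1/(b:ℝ)) ≠ 0 := ne_of_gt hF1b
      have hmemIoc : s ∈ Set.Ioc (0:ℝ) (b:ℝ) := ⟨hs0, hsb⟩
      simp only [hHdef]
      rw [Set.indicator_of_mem hmemIoc, mul_one_div]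
      field_simp
    have key := MeasureTheory.tendsto_integral_filter_of_dominated_convergence
      (μ := volume.restrict (Set.Ioi (0:ℝ))) (F := H)
      (f := fun s => Real.exp (-s) * s^(1-γ)) _
      (Filter.Eventually.of_forall hmeas) hbound hbint hlim
    have hgamma : ∫ s in Set.Ioi (0:ℝ), Real.exp (-s) * s^(1-γ) = Real.Gamma (2-γ) := by
      rw [Real.Gamma_eq_integral (by linarith : (0:ℝ) < 2 - γ)]
      have h21 : (2:ℝ) - γ - 1 = 1 - γ := by ring
      rw [h21]
    rw [← hgamma]
    exact key
  apply htend.congr'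
  filter_upwards [eventually_ge_atTop 2] with b hb
  exact hHeq b hb

/-- Under Assumption (A), the total coalescence rate
`α_b = ∫ (1 - (1-x)^b - b x (1-x)^{b-1}) ν(dx)` of the `Λ`-coalescent started
from `b` blocks, which equals `∑_{k=2}^b C(b,k) ∫ x^k (1-x)^{b-k} ν(dx)`,
satisfies `α_b / (b^γ L(1/b)) → Γ(2-γ)` as `b → ∞`. -/
theorem stmt15
    (ν : Measure ℝ) (hνsupp : ν (Set.Ioc 0 1)ᶜ = 0)
    (hνmom : ∫⁻ r, ENNReal.ofReal (r ^ 2) ∂ν < ⊤)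
    (γ : ℝ) (hγ : γ ∈ Set.Ioo (1 : ℝ) 2)
    (L : ℝ → ℝ) (hLpos : ∀ ε ∈ Set.Ioc (0 : ℝ) 1, 0 < L ε)
    (hLslow : ∀ c : ℝ, 0 < c →
      Tendsto (fun ε => L (c * ε) / L ε) (nhdsWithin 0 (Set.Ioi 0)) (nhds 1))
    (hA : ∀ ε ∈ Set.Ioc (0 : ℝ) 1,
      ν (Set.Icc ε 1) = ENNReal.ofReal (ε ^ (-γ) * L ε)) :
    (∀ b : ℕ, 2 ≤ b →
      ∫ x, (1 - (1 - x) ^ b - (b : ℝ) * x * (1 - x) ^ (b - 1)) ∂ν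
        = ∑ k ∈ Finset.Icc 2 b,
            (b.choose k : ℝ) * ∫ x, x ^ k * (1 - x) ^ (b - k) ∂ν) ∧
    Tendsto
      (fun b : ℕ =>
        (∫ x, (1 - (1 - x) ^ b - (b : ℝ) * x * (1 - x) ^ (b - 1)) ∂ν) /
          ((b : ℝ) ^ γ * L (1 / (b : ℝ))))
      atTop (nhds (Real.Gamma (2 - γ))) :=
  ⟨fun b hb => part1 ν hνsupp hνmom b hb, part2 ν hνsupp γ hγ L hLpos hLslow hA⟩
end

section
/- Let ν be a Borel measure on (0,1] with ∫ r² ν(dr) < ∞ satisfying Assumption (A) with index γ ∈ (1,2) and slowly varying function L. For integers 2 ≤ k ≤ b set α_{b,k} = C(b,k) ∫_{(0,1]} x^k (1−x)^{b−k} ν(dx), where C(b,k) is the binomial coefficient. Then for every fixed integer k ≥ 2, lim_{b→∞} α_{b,k} / (b^{γ} L(1/b)) = γ Γ(k−γ) / k!. -/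
open MeasureTheory Filter


lemma aux_one_div_nat : Tendsto (fun b : ℕ => 1 / (b : ℝ)) atTop (nhdsWithin 0 (Set.Ioi 0)) := by
  rw [tendsto_nhdsWithin_iff]
  refine ⟨tendsto_one_div_atTop_nhds_zero_nat, ?_⟩
  filter_upwards [eventually_gt_atTop 0] with b hb
  exact one_div_pos.2 (by exact_mod_cast hb : (0:ℝ) < (b:ℝ))

lemma aux_pow_exp (s : ℝ) (j : ℕ) :
    Tendsto (fun b : ℕ => (1 - s / (b : ℝ)) ^ (b - j)) atTop (nhds (Real.exp (-s))) := by
  have h1 : Tendsto (fun b : ℕ => (1 + (-s) / (b : ℝ)) ^ b) atTop (nhds (Real.exp (-s))) :=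
    Real.tendsto_one_add_div_pow_exp (-s)
  have h2 : Tendsto (fun b : ℕ => (1 + (-s) / (b : ℝ)) ^ j) atTop (nhds 1) := by
    have : Tendsto (fun b : ℕ => (1 + (-s) / (b : ℝ))) atTop (nhds 1) := by
      have := tendsto_one_div_atTop_nhds_zero_nat.const_mul (-s)
      have h := this.const_add 1
      simp only [mul_one_div] at h
      simpa using h
    simpa using this.pow j
  have h3 : Tendsto (fun b : ℕ => (1 + (-s) / (b : ℝ)) ^ b / (1 + (-s) / (b : ℝ)) ^ j)
      atTop (nhds (Real.exp (-s))) := by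
    have := h1.div h2 one_ne_zero
    rw [div_one] at this
    exact this
  apply h3.congr'
  filter_upwards [eventually_ge_atTop (j + Nat.ceil |s| + 1)] with b hb
  have hbj : j ≤ b := by omega
  have hbs : |s| < (b : ℝ) := by
    calc |s| ≤ (Nat.ceil |s| : ℝ) := Nat.le_ceil _
    _ < (b : ℝ) := by exact_mod_cast by omega
  have hb0 : (0:ℝ) < b := lt_of_le_of_lt (abs_nonneg s) hbs
  have hne : 1 + (-s) / (b : ℝ) ≠ 0 := by
    have : |(-s) / (b:ℝ)| < 1 := by
      rw [abs_div, abs_neg, abs_of_pos hb0, div_lt_one hb0]; exact hbs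
    have := (abs_lt.1 this).1
    linarith
  rw [eq_comm, sub_eq_add_neg, neg_div, ← neg_div, pow_sub₀ _ hne hbj, ← div_eq_mul_inv]


/-- Potter-type bound for an antitone function with a doubling bound. -/
lemma aux_potter {U : ℝ → ℝ} {β ε₀ : ℝ} (hβ : 0 < β) (hε₀ : 0 < ε₀) (hε₀1 : ε₀ ≤ 1)
    (hUnn : ∀ x, 0 ≤ U x)
    (hUanti : ∀ x y, 0 < x → x ≤ y → y ≤ 1 → U y ≤ U x)
    (hdou : ∀ ε, 0 < ε → ε ≤ ε₀ → U (ε / 2) ≤ 2 ^ β * U ε) :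
    ∀ ε, 0 < ε → ε ≤ ε₀ → ∀ s, 0 < s → s ≤ 1 →
      U (s * ε) ≤ 2 ^ β * s ^ (-β) * U ε := by
  intro ε hε hεε₀ s hs hs1
  have h2β : (0:ℝ) < 2 ^ β := Real.rpow_pos_of_pos two_pos β
  -- dyadic chain
  have chain : ∀ m : ℕ, U (ε / 2 ^ m) ≤ (2 ^ β) ^ m * U ε := by
    intro m
    induction m with
    | zero => simp
    | succ m ih =>
      have h1 : U (ε / 2 ^ (m + 1)) = U ((ε / 2 ^ m) / 2) := by ring_nf
      have h2 : U ((ε / 2 ^ m) / 2) ≤ 2 ^ β * U (ε / 2 ^ m) := by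
        apply hdou _ (by positivity)
        calc ε / 2 ^ m ≤ ε / 1 := by
              apply div_le_div_of_nonneg_left hε.le one_pos (one_le_pow₀ one_le_two)
        _ = ε := by norm_num
        _ ≤ ε₀ := hεε₀
      calc U (ε / 2 ^ (m + 1)) = U ((ε / 2 ^ m) / 2) := h1
      _ ≤ 2 ^ β * U (ε / 2 ^ m) := h2
      _ ≤ 2 ^ β * ((2 ^ β) ^ m * U ε) := by
          exact mul_le_mul_of_nonneg_left ih h2β.le
      _ = (2 ^ β) ^ (m + 1) * U ε := by ring
  set m : ℕ := ⌈Real.logb 2 s⁻¹⌉₊ with hm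
  have hs1' : (1:ℝ) ≤ s⁻¹ := (one_le_inv_iff₀).2 ⟨hs, hs1⟩
  have hlognn : 0 ≤ Real.logb 2 s⁻¹ := Real.logb_nonneg one_lt_two hs1'
  have hmlog : Real.logb 2 s⁻¹ ≤ (m : ℝ) := Nat.le_ceil _
  have hmlog' : (m : ℝ) ≤ Real.logb 2 s⁻¹ + 1 := by
    have := Nat.ceil_lt_add_one hlognn
    exact le_of_lt this
  -- 2^{-m} ≤ s
  have hpow : s⁻¹ ≤ (2:ℝ) ^ m := by
    have : s⁻¹ = (2:ℝ) ^ (Real.logb 2 s⁻¹) := (Real.rpow_logb two_pos (by norm_num) (by positivity)).symm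
    rw [this, ← Real.rpow_natCast 2 m]
    exact Real.rpow_le_rpow_of_exponent_le one_le_two hmlog
  have hdy : ε / 2 ^ m ≤ s * ε := by
    rw [div_le_iff₀ (by positivity)]
    have h1s : (1:ℝ) ≤ s * 2 ^ m := by
      have h := mul_le_mul_of_nonneg_left hpow hs.le
      rwa [mul_inv_cancel₀ hs.ne'] at h
    nlinarith
  have step1 : U (s * ε) ≤ U (ε / 2 ^ m) :=
    hUanti _ _ (by positivity) hdy (by nlinarith)
  have step2 : ((2:ℝ) ^ β) ^ m ≤ 2 ^ β * s ^ (-β) := by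
    have lhs_eq : ((2:ℝ) ^ β) ^ m = (2:ℝ) ^ (β * m) := by
      rw [← Real.rpow_natCast ((2:ℝ) ^ β) m, ← Real.rpow_mul (by norm_num)]
    have rhs_eq : (2:ℝ) ^ β * s ^ (-β) = (2:ℝ) ^ (β * (Real.logb 2 s⁻¹ + 1)) := by
      have h1 : s ^ (-β) = (s⁻¹) ^ β := by
        rw [Real.rpow_neg hs.le, ← Real.inv_rpow hs.le]
      have h2 : (s⁻¹ : ℝ) = (2:ℝ) ^ (Real.logb 2 s⁻¹) :=
        (Real.rpow_logb two_pos (by norm_num) (by positivity)).symm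
      have h3 : (s⁻¹:ℝ) ^ β = (2:ℝ) ^ (Real.logb 2 s⁻¹ * β) := by
        conv_lhs => rw [h2]
        rw [← Real.rpow_mul (by norm_num)]
      rw [h1, h3, ← Real.rpow_add two_pos]
      ring_nf
    rw [lhs_eq, rhs_eq]
    apply Real.rpow_le_rpow_of_exponent_le one_le_two
    exact mul_le_mul_of_nonneg_left hmlog' hβ.le
  calc U (s * ε) ≤ U (ε / 2 ^ m) := step1
  _ ≤ ((2:ℝ) ^ β) ^ m * U ε := chain m
  _ ≤ (2 ^ β * s ^ (-β)) * U ε := mul_le_mul_of_nonneg_right step2 (hUnn ε)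

/-- `C(b,k)/b^k → 1/k!`. -/
lemma aux_choose_lim (k : ℕ) :
    Tendsto (fun b : ℕ => (b.choose k : ℝ) / (b : ℝ) ^ k) atTop
      (nhds (1 / (k.factorial : ℝ))) := by
  have hdesc : Tendsto (fun b : ℕ => (b.descFactorial k : ℝ) / (b : ℝ) ^ k) atTop (nhds 1) := by
    have h : Tendsto (fun b : ℕ => ∏ i ∈ Finset.range k, (1 - (i : ℝ) / b)) atTop (nhds 1) := by
      have := tendsto_finset_prod (Finset.range k)
        (fun i _ => ((tendsto_one_div_atTop_nhds_zero_nat.const_mul (i:ℝ)).const_sub 1 : Tendsto (fun b : ℕ => 1 - (i:ℝ) * (1 / b)) atTop (nhds (1 - (i:ℝ) * 0))))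
      simp only [mul_zero, sub_zero, Finset.prod_const_one, mul_one_div] at this
      exact this
    apply h.congr'
    filter_upwards [eventually_ge_atTop k] with b hb
    rw [Nat.descFactorial_eq_prod_range, Nat.cast_prod]
    have hbk : (b:ℝ) ^ k = ∏ _i ∈ Finset.range k, (b:ℝ) := by simp
    rw [hbk, ← Finset.prod_div_distrib]
    apply Finset.prod_congr rfl
    intro i hi
    have hik : i < k := Finset.mem_range.1 hi
    have hib : i ≤ b := le_trans hik.le hb
    have hb0 : 0 < b := lt_of_le_of_lt (Nat.zero_le i) (lt_of_lt_of_le hik hb)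
    have hbne : (b:ℝ) ≠ 0 := Nat.cast_ne_zero.2 hb0.ne'
    rw [Nat.cast_sub hib, sub_div, div_self hbne]
  have hrel : ∀ b : ℕ, (b.choose k : ℝ) / (b:ℝ) ^ k
      = ((b.descFactorial k : ℝ) / (b : ℝ) ^ k) / (k.factorial : ℝ) := by
    intro b
    rw [Nat.descFactorial_eq_factorial_mul_choose]
    push_cast
    have hfac : (k.factorial : ℝ) ≠ 0 := Nat.cast_ne_zero.2 k.factorial_ne_zero
    rw [div_div, mul_comm ((b:ℝ)^k) (k.factorial:ℝ), ← div_div, mul_comm (k.factorial:ℝ),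
      mul_div_assoc, div_self hfac, mul_one]
  simp only [hrel]
  simpa using hdesc.div_const (k.factorial : ℝ)

lemma aux_dct {γ β C : ℝ} (hγ0 : 0 < γ) (hγβ : γ < β) (hβ2 : β < 2) (hC : 0 ≤ C)
    {U : ℝ → ℝ} (hUmeas : Measurable U) (hUnn : ∀ x, 0 ≤ U x)
    (hUanti : ∀ x y, 0 < x → x ≤ y → y ≤ 1 → U y ≤ U x)
    (hUpos : ∀ x, 0 < x → x ≤ 1 → 0 < U x)
    (hratio : ∀ s : ℝ, 0 < s →
      Tendsto (fun b : ℕ => U (s / (b:ℝ)) / U (1 / (b:ℝ))) atTop (nhds (s ^ (-γ))))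
    (hpot : ∀ᶠ b : ℕ in atTop, ∀ s : ℝ, 0 < s → s ≤ 1 →
      U (s / (b:ℝ)) ≤ C * s ^ (-β) * U (1 / (b:ℝ)))
    (p : ℕ) (hp : 1 ≤ p) (j : ℕ) :
    Tendsto (fun b : ℕ => ∫ s in Set.Ioc (0:ℝ) (b:ℝ),
        s ^ p * (1 - s / (b:ℝ)) ^ (b - j) * (U (s / (b:ℝ)) / U (1 / (b:ℝ))))
      atTop (nhds (Real.Gamma ((p:ℝ) + 1 - γ))) := by
  have hp1 : (1:ℝ) ≤ (p:ℝ) := by exact_mod_cast hp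
  set μ : Measure ℝ := volume.restrict (Set.Ioi (0:ℝ)) with hμ
  set g : ℕ → ℝ → ℝ := fun b s => s ^ p * (1 - s / (b:ℝ)) ^ (b - j) *
    (U (s / (b:ℝ)) / U (1 / (b:ℝ))) with hg
  set F : ℕ → ℝ → ℝ := fun b => (Set.Ioc (0:ℝ) (b:ℝ)).indicator (g b) with hF
  set f : ℝ → ℝ := fun s => s ^ p * Real.exp (-s) * s ^ (-γ) with hf
  set bound : ℝ → ℝ := fun s => (C + 1) * (s ^ ((p:ℝ) - β) * Real.exp (-(1/2) * s ^ (1:ℝ))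
      + s ^ ((p:ℝ)) * Real.exp (-(1/2) * s ^ (1:ℝ))) with hbound
  have key : ∀ b : ℕ, ∫ a, F b a ∂μ = ∫ s in Set.Ioc (0:ℝ) (b:ℝ), g b s := by
    intro b
    rw [hF, integral_indicator measurableSet_Ioc, hμ,
      Measure.restrict_restrict measurableSet_Ioc,
      Set.inter_eq_left.2 Set.Ioc_subset_Ioi_self]
  have hfint : ∫ a, f a ∂μ = Real.Gamma ((p:ℝ) + 1 - γ) := by
    rw [Real.Gamma_eq_integral (by linarith : (0:ℝ) < (p:ℝ) + 1 - γ)]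
    apply setIntegral_congr_fun measurableSet_Ioi
    intro x hx
    have hx0 : (0:ℝ) < x := hx
    have e1 : (x:ℝ) ^ p = x ^ ((p:ℝ)) := (Real.rpow_natCast x p).symm
    have e2 : x ^ ((p:ℝ)) * x ^ (-γ) = x ^ ((p:ℝ) + 1 - γ - 1) := by
      rw [← Real.rpow_add hx0]
      ring_nf
    show x ^ p * Real.exp (-x) * x ^ (-γ) = Real.exp (-x) * x ^ ((p:ℝ) + 1 - γ - 1)
    rw [e1, mul_comm (x ^ ((p:ℝ))) (Real.exp (-x)), mul_assoc, e2]
  have hFmeas : ∀ b : ℕ, AEStronglyMeasurable (F b) μ := by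
    intro b
    refine (Measurable.indicator ?_ measurableSet_Ioc).aestronglyMeasurable
    refine ((measurable_id.pow_const p).mul ?_).mul
      ((hUmeas.comp (measurable_id.div_const _)).div_const _)
    exact ((measurable_id.div_const ((b:ℝ))).const_sub 1).pow_const _
  have hbound_nn : ∀ s : ℝ, 0 < s → 0 ≤ bound s := by
    intro s hs
    have h1 : (0:ℝ) ≤ s ^ ((p:ℝ) - β) := Real.rpow_nonneg hs.le _
    have h2 : (0:ℝ) ≤ s ^ ((p:ℝ)) := Real.rpow_nonneg hs.le _
    have h3 : (0:ℝ) ≤ Real.exp (-(1/2) * s ^ (1:ℝ)) := (Real.exp_pos _).le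
    rw [hbound]
    have := mul_nonneg h1 h3
    have := mul_nonneg h2 h3
    nlinarith
  have h_bound : ∀ᶠ b : ℕ in atTop, ∀ᵐ a ∂μ, ‖F b a‖ ≤ bound a := by
    filter_upwards [hpot, eventually_ge_atTop (2*j + 1)] with b hpotb hb2j
    filter_upwards [ae_restrict_mem measurableSet_Ioi] with s hs
    have hs0 : (0:ℝ) < s := hs
    by_cases hsb : s ∈ Set.Ioc (0:ℝ) (b:ℝ)
    · simp only [hF]
      rw [Set.indicator_of_mem hsb]
      have hsb' : s ≤ (b:ℝ) := hsb.2
      have hb0 : (0:ℝ) < (b:ℝ) := lt_of_lt_of_le hs0 hsb'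
      have hb1 : 1 ≤ b := by exact_mod_cast Nat.one_le_iff_ne_zero.2 (by rintro rfl; simp at hb0)
      have h1sb : 0 ≤ 1 - s / (b:ℝ) := by
        rw [sub_nonneg, div_le_one hb0]; exact hsb'
      have hR0 : 0 ≤ U (s / (b:ℝ)) / U (1 / (b:ℝ)) := div_nonneg (hUnn _) (hUnn _)
      have hg0 : 0 ≤ g b s := by
        apply mul_nonneg (mul_nonneg (pow_nonneg hs0.le _) (pow_nonneg h1sb _)) hR0
      rw [Real.norm_of_nonneg hg0]
      have hexp : (1 - s / (b:ℝ)) ^ (b - j) ≤ Real.exp (-(1/2) * s) := by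
        have e1 : 1 - s / (b:ℝ) ≤ Real.exp (-(s / (b:ℝ))) := by
          have := Real.add_one_le_exp (-(s / (b:ℝ))); linarith
        have e2 : (1 - s / (b:ℝ)) ^ (b - j) ≤ (Real.exp (-(s / (b:ℝ)))) ^ (b - j) :=
          pow_le_pow_left₀ h1sb e1 _
        have e3 : (Real.exp (-(s / (b:ℝ)))) ^ (b - j)
            = Real.exp (((b - j : ℕ):ℝ) * (-(s / (b:ℝ)))) := (Real.exp_nat_mul _ _).symm
        refine le_trans e2 ?_
        rw [e3]
        apply Real.exp_le_exp.2
        have hcast : (b:ℝ) ≤ ((b - j : ℕ):ℝ) * 2 := by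
          have h : b ≤ (b - j) * 2 := by omega
          exact_mod_cast h
        set d := ((b - j : ℕ):ℝ) with hd
        set q := s / (b:ℝ) with hq
        have hq0 : 0 ≤ q := div_nonneg hs0.le hb0.le
        have hqb : q * (b:ℝ) = s := div_mul_cancel₀ s hb0.ne'
        nlinarith
      have hU1 : 0 < U (1 / (b:ℝ)) := hUpos _ (by positivity) (by
        rw [div_le_one hb0]; exact_mod_cast hb1)
      have hsp : (s:ℝ) ^ p = s ^ ((p:ℝ)) := (Real.rpow_natCast s p).symm
      rcases le_or_gt s 1 with hs1 | hs1
      · have hr : U (s / (b:ℝ)) / U (1 / (b:ℝ)) ≤ C * s ^ (-β) := by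
          rw [div_le_iff₀ hU1]
          exact hpotb s hs0 hs1
        have step : g b s ≤ s ^ p * Real.exp (-(1/2) * s) * (C * s ^ (-β)) := by
          apply mul_le_mul (mul_le_mul_of_nonneg_left hexp (pow_nonneg hs0.le _)) hr hR0
          positivity
        have hrw : s ^ ((p:ℝ)) * s ^ (-β) = s ^ ((p:ℝ) - β) := by
          rw [← Real.rpow_add hs0]; ring_nf
        have heq : s ^ p * Real.exp (-(1/2) * s) * (C * s ^ (-β))
            = C * (s ^ ((p:ℝ) - β) * Real.exp (-(1/2) * s)) := by
          rw [hsp]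
          calc s ^ ((p:ℝ)) * Real.exp (-(1/2) * s) * (C * s ^ (-β))
              = C * (s ^ ((p:ℝ)) * s ^ (-β)) * Real.exp (-(1/2) * s) := by ring
          _ = C * s ^ ((p:ℝ) - β) * Real.exp (-(1/2) * s) := by rw [hrw]
          _ = C * (s ^ ((p:ℝ) - β) * Real.exp (-(1/2) * s)) := by ring
        refine le_trans step (le_trans (le_of_eq heq) ?_)
        rw [hbound]
        simp only [Real.rpow_one]
        have h2 : (0:ℝ) ≤ s ^ ((p:ℝ)) * Real.exp (-(1/2) * s) := by positivity
        have h1 : (0:ℝ) ≤ s ^ ((p:ℝ) - β) * Real.exp (-(1/2) * s) := by positivity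
        nlinarith
      · have hr : U (s / (b:ℝ)) / U (1 / (b:ℝ)) ≤ 1 := by
          rw [div_le_one hU1]
          apply hUanti (1 / (b:ℝ)) (s / (b:ℝ)) (by positivity)
          · apply (div_le_div_iff_of_pos_right hb0).2 hs1.le
          · rw [div_le_one hb0]; exact hsb'
        have step : g b s ≤ s ^ p * Real.exp (-(1/2) * s) * 1 := by
          apply mul_le_mul (mul_le_mul_of_nonneg_left hexp (pow_nonneg hs0.le _)) hr hR0
          positivity
        rw [mul_one] at step
        refine le_trans step ?_
        rw [hbound, hsp]
        simp only [Real.rpow_one]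
        have h2 : (0:ℝ) ≤ s ^ ((p:ℝ) - β) * Real.exp (-(1/2) * s) := by positivity
        have h1 : (0:ℝ) ≤ s ^ ((p:ℝ)) * Real.exp (-(1/2) * s) := by positivity
        nlinarith
    · simp only [hF]
      rw [Set.indicator_of_notMem hsb, norm_zero]
      have := hbound_nn s hs0
      simpa using this
  have hbound_int : Integrable bound μ := by
    have h1 : IntegrableOn (fun s : ℝ => s ^ ((p:ℝ) - β) * Real.exp (-(1/2) * s ^ (1:ℝ)))
        (Set.Ioi 0) := integrableOn_rpow_mul_exp_neg_mul_rpow (by linarith) one_pos (by norm_num)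
    have h2 : IntegrableOn (fun s : ℝ => s ^ ((p:ℝ)) * Real.exp (-(1/2) * s ^ (1:ℝ)))
        (Set.Ioi 0) := integrableOn_rpow_mul_exp_neg_mul_rpow (by linarith) one_pos (by norm_num)
    exact ((h1.add h2).const_mul (C + 1))
  have h_lim : ∀ᵐ a ∂μ, Tendsto (fun b : ℕ => F b a) atTop (nhds (f a)) := by
    filter_upwards [ae_restrict_mem measurableSet_Ioi] with s hs
    have hs0 : (0:ℝ) < s := hs
    have hmain : Tendsto (fun b : ℕ => g b s) atTop (nhds (f s)) := by
      exact (tendsto_const_nhds.mul (aux_pow_exp s j)).mul (hratio s hs0)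
    apply hmain.congr'
    filter_upwards [eventually_ge_atTop (Nat.ceil s)] with b hb
    have : s ≤ (b:ℝ) := le_trans (Nat.le_ceil s) (by exact_mod_cast hb)
    simp only [hF]
    rw [Set.indicator_of_mem (show s ∈ Set.Ioc (0:ℝ) (b:ℝ) from ⟨hs0, this⟩)]
  have := tendsto_integral_filter_of_dominated_convergence bound
    (Eventually.of_forall hFmeas) h_bound hbound_int h_lim
  rw [hfint] at this
  exact this.congr key


lemma aux_identity (ν : Measure ℝ) (hνmem : ∀ᵐ x ∂ν, x ∈ Set.Ioc (0:ℝ) 1)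
    (hνmom : ∫⁻ r, ENNReal.ofReal (r ^ 2) ∂ν < ⊤)
    {U : ℝ → ℝ} (hU : ∀ t, U t = (ν (Set.Icc t 1)).toReal)
    (hUmeas : Measurable U) (hUnn : ∀ t, 0 ≤ U t)
    (hfin : ∀ t : ℝ, 0 < t → t ≤ 1 → ν (Set.Icc t 1) ≠ ⊤)
    {Cb β : ℝ} (hβ2 : β < 2) (hCb : 0 ≤ Cb)
    (hUbd : ∀ t : ℝ, 0 < t → t ≤ 1 → U t ≤ Cb * t ^ (-β))
    (k b : ℕ) (hk : 2 ≤ k) (hb : k + 2 ≤ b) :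
    ∫ x, x ^ k * (1 - x) ^ (b - k) ∂ν
      = (∫ t in Set.Ioc (0:ℝ) 1, ((k:ℝ) * t ^ (k-1) * (1-t) ^ (b-k)) * U t)
        - (∫ t in Set.Ioc (0:ℝ) 1, (((b-k:ℕ):ℝ) * t ^ k * (1-t) ^ (b-(k+1))) * U t) := by
  set A : ℝ → ℝ := fun x => x ^ k * (1 - x) ^ (b - k) with hA
  set P : ℝ → ℝ := fun t => (k:ℝ) * t ^ (k-1) * (1-t) ^ (b-k) with hP
  set Q : ℝ → ℝ := fun t => ((b-k:ℕ):ℝ) * t ^ k * (1-t) ^ (b-(k+1)) with hQ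
  have hPc : Continuous P := by fun_prop
  have hQc : Continuous Q := by fun_prop
  have hAc : Continuous A := by fun_prop
  -- FTC
  have hderiv : ∀ t : ℝ, HasDerivAt A (P t - Q t) t := by
    intro t
    have h1 : HasDerivAt (fun x : ℝ => x ^ k) ((k:ℝ) * t ^ (k-1)) t := hasDerivAt_pow k t
    have hin : HasDerivAt (fun x : ℝ => 1 - x) (-1) t := (hasDerivAt_id t).const_sub 1
    have h2 : HasDerivAt (fun x : ℝ => (1-x) ^ (b-k))
        (((b-k:ℕ):ℝ) * (1-t) ^ ((b-k)-1) * (-1)) t := hin.pow (b-k)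
    have h3 := h1.mul h2
    have hbk : (b-k) - 1 = b - (k+1) := by omega
    rw [hbk] at h3
    have e : P t - Q t = (k:ℝ) * t ^ (k-1) * (1-t) ^ (b-k)
        + t ^ k * (((b-k:ℕ):ℝ) * (1-t) ^ (b-(k+1)) * (-1)) := by
      simp only [hP, hQ]
      ring
    rw [e]
    exact h3
  have key : ∀ x : ℝ, 0 ≤ x → x ≤ 1 →
      A x + ∫ t in (0:ℝ)..x, Q t = ∫ t in (0:ℝ)..x, P t := by
    intro x hx0 hx1
    have hPQint : IntervalIntegrable (fun t => P t - Q t) volume 0 x :=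
      ((hPc.sub hQc).intervalIntegrable 0 x)
    have := intervalIntegral.integral_eq_sub_of_hasDerivAt
      (fun t _ => hderiv t) hPQint
    have hA0 : A 0 = 0 := by
      simp only [hA]
      rw [zero_pow (by omega : k ≠ 0)]
      ring
    rw [hA0, sub_zero] at this
    rw [intervalIntegral.integral_sub (hPc.intervalIntegrable 0 x)
      (hQc.intervalIntegrable 0 x)] at this
    have : A x = (∫ t in (0:ℝ)..x, P t) - ∫ t in (0:ℝ)..x, Q t := this.symm
    linarith
  -- nonneg on [0,1]
  have hPnn : ∀ t : ℝ, 0 ≤ t → t ≤ 1 → 0 ≤ P t := by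
    intro t h0 h1
    have : (0:ℝ) ≤ 1 - t := by linarith
    positivity
  have hQnn : ∀ t : ℝ, 0 ≤ t → t ≤ 1 → 0 ≤ Q t := by
    intro t h0 h1
    have : (0:ℝ) ≤ 1 - t := by linarith
    positivity
  have hν0 : ν ((Set.Ioc (0:ℝ) 1)ᶜ) = 0 := by
    rw [Set.compl_def]
    exact ae_iff.1 hνmem
  -- layer cake for a truncated weight
  have laycake : ∀ R : ℝ → ℝ, Continuous R → (∀ t : ℝ, 0 ≤ t → t ≤ 1 → 0 ≤ R t) →
      ∫⁻ x, ENNReal.ofReal (∫ t in (0:ℝ)..x, R t) ∂ν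
        = ∫⁻ t in Set.Ioc (0:ℝ) 1, ENNReal.ofReal (R t * U t) := by
    intro R hRc hRnn
    set gR : ℝ → ℝ := Set.indicator (Set.Iic (1:ℝ)) R with hgR
    have hlay := lintegral_comp_eq_lintegral_meas_le_mul ν
      (f := fun x : ℝ => x) (g := gR)
      (by filter_upwards [hνmem] with x hx; exact hx.1.le)
      aemeasurable_id
      (by
        intro t ht
        rw [intervalIntegrable_iff]
        exact (hRc.integrableOn_uIoc).indicator measurableSet_Iic)
      (by
        filter_upwards [ae_restrict_mem measurableSet_Ioi] with t ht
        by_cases h1 : t ≤ 1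
        · rw [hgR, Set.indicator_of_mem (show t ∈ Set.Iic (1:ℝ) from h1)]
          exact hRnn t (le_of_lt ht) h1
        · rw [hgR, Set.indicator_of_notMem (show t ∉ Set.Iic (1:ℝ) from h1)])
    have hLHS : ∫⁻ x, ENNReal.ofReal (∫ t in (0:ℝ)..x, gR t) ∂ν
        = ∫⁻ x, ENNReal.ofReal (∫ t in (0:ℝ)..x, R t) ∂ν := by
      apply lintegral_congr_ae
      filter_upwards [hνmem] with x hx
      congr 1
      apply intervalIntegral.integral_congr
      intro t ht
      rw [Set.uIcc_of_le hx.1.le] at ht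
      exact Set.indicator_of_mem (show t ∈ Set.Iic (1:ℝ) from le_trans ht.2 hx.2) R
    have hRHS : ∫⁻ t in Set.Ioi (0:ℝ), ν {a : ℝ | t ≤ a} * ENNReal.ofReal (gR t)
        = ∫⁻ t in Set.Ioc (0:ℝ) 1, ENNReal.ofReal (R t * U t) := by
      rw [← Set.Ioc_union_Ioi_eq_Ioi (le_of_lt one_pos),
        lintegral_union measurableSet_Ioi (Set.Ioc_disjoint_Ioi le_rfl)]
      have hzero : ∫⁻ t in Set.Ioi (1:ℝ), ν {a : ℝ | t ≤ a} * ENNReal.ofReal (gR t) = 0 := by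
        have heq0 : ∫⁻ t in Set.Ioi (1:ℝ), ν {a : ℝ | t ≤ a} * ENNReal.ofReal (gR t)
            = ∫⁻ _t in Set.Ioi (1:ℝ), 0 := by
          apply setLIntegral_congr_fun measurableSet_Ioi
          intro t ht
          show ν {a : ℝ | t ≤ a} * ENNReal.ofReal (gR t) = 0
          rw [hgR, Set.indicator_of_notMem (show t ∉ Set.Iic (1:ℝ) from by simp only [Set.mem_Iic, not_le]; exact ht)]
          simp
        rw [heq0]
        simp
      rw [hzero, add_zero]
      apply setLIntegral_congr_fun measurableSet_Ioc
      intro t ht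
      show ν {a : ℝ | t ≤ a} * ENNReal.ofReal (gR t) = ENNReal.ofReal (R t * U t)
      have h1 : {a : ℝ | t ≤ a} = Set.Ici t := rfl
      have hsub : Set.Ici t ⊆ Set.Icc t 1 ∪ (Set.Ioc (0:ℝ) 1)ᶜ := by
        intro a ha
        by_cases ha1 : a ≤ 1
        · exact Set.mem_union_left _ ⟨ha, ha1⟩
        · exact Set.mem_union_right _ (fun hmem => ha1 hmem.2)
      have h2 : ν (Set.Ici t) = ν (Set.Icc t 1) := by
        apply le_antisymm
        · calc ν (Set.Ici t) ≤ ν (Set.Icc t 1 ∪ (Set.Ioc (0:ℝ) 1)ᶜ) := measure_mono hsub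
            _ ≤ ν (Set.Icc t 1) + ν ((Set.Ioc (0:ℝ) 1)ᶜ) := measure_union_le _ _
            _ = ν (Set.Icc t 1) := by rw [hν0, add_zero]
        · exact measure_mono (fun a ha => ha.1)
      rw [h1, h2, hgR, Set.indicator_of_mem (show t ∈ Set.Iic (1:ℝ) from ht.2),
        show ν (Set.Icc t 1) = ENNReal.ofReal (U t) by
          rw [hU t, ENNReal.ofReal_toReal (hfin t ht.1 ht.2)]]
      rw [← ENNReal.ofReal_mul (hUnn t), mul_comm (U t) (R t)]
    rw [hLHS] at hlay
    rw [hlay, hRHS]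
  -- generic integrability helper
  have hwint : ∀ (R : ℝ → ℝ) (c : ℝ), Continuous R → (∀ t : ℝ, 0 < t → t ≤ 1 → 0 ≤ R t) →
      (∀ t : ℝ, 0 < t → t ≤ 1 → R t ≤ c * t) →
      IntegrableOn (fun t => R t * U t) (Set.Ioc (0:ℝ) 1) := by
    intro R c hRc hRnn hRbd
    have hc0 : 0 ≤ c := by
      have h1 := hRnn 1 one_pos le_rfl
      have h2 := hRbd 1 one_pos le_rfl
      linarith
    apply Integrable.mono' (g := fun t : ℝ => (c * Cb) * t ^ ((1:ℝ) - β))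
    · exact ((intervalIntegral.intervalIntegrable_rpow' (by linarith : (-1:ℝ) < 1 - β)).1).const_mul _
    · exact (hRc.measurable.mul hUmeas).aestronglyMeasurable
    · filter_upwards [ae_restrict_mem measurableSet_Ioc] with t ht
      obtain ⟨ht0, ht1⟩ := ht
      rw [Real.norm_of_nonneg (mul_nonneg (hRnn t ht0 ht1) (hUnn t))]
      calc R t * U t ≤ (c * t) * (Cb * t ^ (-β)) := by
            apply mul_le_mul (hRbd t ht0 ht1) (hUbd t ht0 ht1) (hUnn t)
            linarith [hRbd t ht0 ht1, hRnn t ht0 ht1]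
      _ = (c * Cb) * (t ^ (1:ℝ) * t ^ (-β)) := by rw [Real.rpow_one]; ring
      _ = (c * Cb) * t ^ ((1:ℝ) - β) := by
            rw [← Real.rpow_add ht0]; ring_nf
  have hPbd : ∀ t : ℝ, 0 < t → t ≤ 1 → P t ≤ (k:ℝ) * t := by
    intro t ht0 ht1
    have h1 : t ^ (k-1) ≤ t := by
      have := pow_le_pow_of_le_one ht0.le ht1 (by omega : 1 ≤ k - 1)
      simpa using this
    have h2 : (1-t) ^ (b-k) ≤ 1 := pow_le_one₀ (by linarith) (by linarith)
    have h3 : (0:ℝ) ≤ t ^ (k-1) := pow_nonneg ht0.le _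
    have h4 : (0:ℝ) ≤ (1-t) ^ (b-k) := pow_nonneg (by linarith) _
    calc P t ≤ (k:ℝ) * t ^ (k-1) * 1 := by
          apply mul_le_mul_of_nonneg_left h2
          positivity
    _ = (k:ℝ) * t ^ (k-1) := by ring
    _ ≤ (k:ℝ) * t := by
          apply mul_le_mul_of_nonneg_left h1
          positivity
  have hQbd : ∀ t : ℝ, 0 < t → t ≤ 1 → Q t ≤ ((b-k:ℕ):ℝ) * t := by
    intro t ht0 ht1
    have h1 : t ^ k ≤ t := by
      have := pow_le_pow_of_le_one ht0.le ht1 (by omega : 1 ≤ k)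
      simpa using this
    have h2 : (1-t) ^ (b-(k+1)) ≤ 1 := pow_le_one₀ (by linarith) (by linarith)
    have h4 : (0:ℝ) ≤ (1-t) ^ (b-(k+1)) := pow_nonneg (by linarith) _
    calc Q t ≤ ((b-k:ℕ):ℝ) * t ^ k * 1 := by
          apply mul_le_mul_of_nonneg_left h2
          positivity
    _ = ((b-k:ℕ):ℝ) * t ^ k := by ring
    _ ≤ ((b-k:ℕ):ℝ) * t := by
          apply mul_le_mul_of_nonneg_left h1
          positivity
  have hPint : IntegrableOn (fun t => P t * U t) (Set.Ioc (0:ℝ) 1) :=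
    hwint P (k:ℝ) hPc (fun t h0 h1 => hPnn t h0.le h1) hPbd
  have hQint : IntegrableOn (fun t => Q t * U t) (Set.Ioc (0:ℝ) 1) :=
    hwint Q ((b-k:ℕ):ℝ) hQc (fun t h0 h1 => hQnn t h0.le h1) hQbd
  -- integrability of A wrt ν
  have hx2int : Integrable (fun x : ℝ => x ^ 2) ν := by
    refine ⟨(measurable_id.pow_const 2).aestronglyMeasurable, ?_⟩
    rw [hasFiniteIntegral_iff_norm]
    have : ∫⁻ a, ENNReal.ofReal ‖(a:ℝ) ^ 2‖ ∂ν = ∫⁻ a, ENNReal.ofReal ((a:ℝ) ^ 2) ∂ν :=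
      lintegral_congr (fun a => by rw [Real.norm_of_nonneg (sq_nonneg a)])
    rw [this]
    exact hνmom
  have hAnn : 0 ≤ᵐ[ν] A := by
    filter_upwards [hνmem] with x hx
    have : (0:ℝ) ≤ 1 - x := by linarith [hx.2]
    have hx0 := hx.1
    positivity
  have hAint : Integrable A ν := by
    apply Integrable.mono' hx2int hAc.aestronglyMeasurable
    filter_upwards [hνmem] with x hx
    obtain ⟨hx0, hx1⟩ := hx
    have h1t : (0:ℝ) ≤ 1 - x := by linarith
    rw [Real.norm_of_nonneg (by positivity : (0:ℝ) ≤ A x)]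
    calc A x ≤ x ^ k * 1 := by
          apply mul_le_mul_of_nonneg_left (pow_le_one₀ h1t (by linarith))
          positivity
    _ = x ^ k := by ring
    _ ≤ x ^ 2 := pow_le_pow_of_le_one hx0.le hx1 hk
  -- combine via layer cake
  have hlayP := laycake P hPc hPnn
  have hlayQ := laycake Q hQc hQnn
  have hQivnn : ∀ x : ℝ, 0 ≤ x → x ≤ 1 → 0 ≤ ∫ t in (0:ℝ)..x, Q t := by
    intro x hx0 hx1
    apply intervalIntegral.integral_nonneg hx0
    intro t ht
    exact hQnn t ht.1 (le_trans ht.2 hx1)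
  have hsum : ∫⁻ x, ENNReal.ofReal (∫ t in (0:ℝ)..x, P t) ∂ν
      = ∫⁻ x, (ENNReal.ofReal (A x) + ENNReal.ofReal (∫ t in (0:ℝ)..x, Q t)) ∂ν := by
    apply lintegral_congr_ae
    filter_upwards [hνmem] with x hx
    rw [← key x hx.1.le hx.2]
    rw [ENNReal.ofReal_add (by
      have hx0 := hx.1
      have : (0:ℝ) ≤ 1 - x := by linarith [hx.2]
      positivity) (hQivnn x hx.1.le hx.2)]
  have hsplit : ∫⁻ x, (ENNReal.ofReal (A x) + ENNReal.ofReal (∫ t in (0:ℝ)..x, Q t)) ∂ν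
      = (∫⁻ x, ENNReal.ofReal (A x) ∂ν) + ∫⁻ x, ENNReal.ofReal (∫ t in (0:ℝ)..x, Q t) ∂ν :=
    lintegral_add_left (ENNReal.measurable_ofReal.comp hAc.measurable) _
  -- Bochner conversions
  have hPU_ae : 0 ≤ᵐ[volume.restrict (Set.Ioc (0:ℝ) 1)] fun t => P t * U t := by
    filter_upwards [ae_restrict_mem measurableSet_Ioc] with t ht
    exact mul_nonneg (hPnn t ht.1.le ht.2) (hUnn t)
  have hQU_ae : 0 ≤ᵐ[volume.restrict (Set.Ioc (0:ℝ) 1)] fun t => Q t * U t := by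
    filter_upwards [ae_restrict_mem measurableSet_Ioc] with t ht
    exact mul_nonneg (hQnn t ht.1.le ht.2) (hUnn t)
  have hPconv : ∫⁻ t in Set.Ioc (0:ℝ) 1, ENNReal.ofReal (P t * U t)
      = ENNReal.ofReal (∫ t in Set.Ioc (0:ℝ) 1, P t * U t) :=
    (ofReal_integral_eq_lintegral_ofReal hPint hPU_ae).symm
  have hQconv : ∫⁻ t in Set.Ioc (0:ℝ) 1, ENNReal.ofReal (Q t * U t)
      = ENNReal.ofReal (∫ t in Set.Ioc (0:ℝ) 1, Q t * U t) :=
    (ofReal_integral_eq_lintegral_ofReal hQint hQU_ae).symm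
  have hAconv : ∫⁻ x, ENNReal.ofReal (A x) ∂ν = ENNReal.ofReal (∫ x, A x ∂ν) :=
    (ofReal_integral_eq_lintegral_ofReal hAint hAnn).symm
  have main : ENNReal.ofReal (∫ t in Set.Ioc (0:ℝ) 1, P t * U t)
      = ENNReal.ofReal ((∫ x, A x ∂ν) + ∫ t in Set.Ioc (0:ℝ) 1, Q t * U t) := by
    rw [ENNReal.ofReal_add (integral_nonneg_of_ae hAnn)
      (setIntegral_nonneg measurableSet_Ioc (fun t ht => mul_nonneg (hQnn t ht.1.le ht.2) (hUnn t)))]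
    rw [← hPconv, ← hlayP, hsum, hsplit, hAconv, hlayQ, hQconv]
  have main' : (∫ t in Set.Ioc (0:ℝ) 1, P t * U t)
      = (∫ x, A x ∂ν) + ∫ t in Set.Ioc (0:ℝ) 1, Q t * U t := by
    have h1 : 0 ≤ ∫ t in Set.Ioc (0:ℝ) 1, P t * U t :=
      setIntegral_nonneg measurableSet_Ioc (fun t ht => mul_nonneg (hPnn t ht.1.le ht.2) (hUnn t))
    have h2 : 0 ≤ (∫ x, A x ∂ν) + ∫ t in Set.Ioc (0:ℝ) 1, Q t * U t :=
      add_nonneg (integral_nonneg_of_ae hAnn)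
        (setIntegral_nonneg measurableSet_Ioc (fun t ht => mul_nonneg (hQnn t ht.1.le ht.2) (hUnn t)))
    exact (ENNReal.ofReal_eq_ofReal_iff h1 h2).1 main
  have : ∫ x, A x ∂ν = (∫ t in Set.Ioc (0:ℝ) 1, P t * U t)
      - ∫ t in Set.Ioc (0:ℝ) 1, Q t * U t := by linarith
  simpa only [hA, hP, hQ] using this


/-- Under Assumption (A), the rate
`α_{b,k} = C(b,k) ∫ x^k (1-x)^{b-k} ν(dx)` at which the block-counting process
of the `Λ`-coalescent jumps from `b` to `b-k+1` satisfies, for each fixed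
`k ≥ 2`, `α_{b,k} / (b^γ L(1/b)) → γ Γ(k-γ)/k!` as `b → ∞`. -/
theorem stmt16
    (ν : Measure ℝ) (hνsupp : ν (Set.Ioc 0 1)ᶜ = 0)
    (hνmom : ∫⁻ r, ENNReal.ofReal (r ^ 2) ∂ν < ⊤)
    (γ : ℝ) (hγ : γ ∈ Set.Ioo (1 : ℝ) 2)
    (L : ℝ → ℝ) (hLpos : ∀ ε ∈ Set.Ioc (0 : ℝ) 1, 0 < L ε)
    (hLslow : ∀ c : ℝ, 0 < c →
      Tendsto (fun ε => L (c * ε) / L ε) (nhdsWithin 0 (Set.Ioi 0)) (nhds 1))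
    (hA : ∀ ε ∈ Set.Ioc (0 : ℝ) 1,
      ν (Set.Icc ε 1) = ENNReal.ofReal (ε ^ (-γ) * L ε))
    (k : ℕ) (hk : 2 ≤ k) :
    Tendsto
      (fun b : ℕ =>
        ((b.choose k : ℝ) * ∫ x, x ^ k * (1 - x) ^ (b - k) ∂ν) /
          ((b : ℝ) ^ γ * L (1 / (b : ℝ))))
      atTop (nhds (γ * Real.Gamma ((k : ℝ) - γ) / (k.factorial : ℝ))) := by
  obtain ⟨hγ1, hγ2⟩ := hγ
  have hγ0 : 0 < γ := lt_trans one_pos hγ1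
  set β : ℝ := (γ + 2) / 2 with hβ
  have hγβ : γ < β := by rw [hβ]; linarith
  have hβ2 : β < 2 := by rw [hβ]; linarith
  have hβ0 : 0 < β := by linarith
  have hνmem : ∀ᵐ x ∂ν, x ∈ Set.Ioc (0:ℝ) 1 := by
    rw [ae_iff]
    rw [Set.compl_def] at hνsupp
    exact hνsupp
  set U : ℝ → ℝ := fun t => (ν (Set.Icc t 1)).toReal with hUdef
  have hU : ∀ t, U t = (ν (Set.Icc t 1)).toReal := fun t => rfl
  have hfin : ∀ t : ℝ, 0 < t → t ≤ 1 → ν (Set.Icc t 1) ≠ ⊤ := by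
    intro t h0 h1
    rw [hA t ⟨h0, h1⟩]
    exact ENNReal.ofReal_ne_top
  have hUeq : ∀ t : ℝ, 0 < t → t ≤ 1 → U t = t ^ (-γ) * L t := by
    intro t h0 h1
    rw [hU, hA t ⟨h0, h1⟩, ENNReal.toReal_ofReal]
    have := hLpos t ⟨h0, h1⟩
    positivity
  have hUnn : ∀ t, 0 ≤ U t := fun t => ENNReal.toReal_nonneg
  have hUpos : ∀ t : ℝ, 0 < t → t ≤ 1 → 0 < U t := by
    intro t h0 h1
    rw [hUeq t h0 h1]
    have := hLpos t ⟨h0, h1⟩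
    positivity
  have hUmeas : Measurable U := by
    apply Measurable.ennreal_toReal
    exact Antitone.measurable (fun x y hxy => measure_mono (Set.Icc_subset_Icc_left hxy))
  have hUanti : ∀ x y : ℝ, 0 < x → x ≤ y → y ≤ 1 → U y ≤ U x := by
    intro x y hx hxy hy1
    rw [hU, hU]
    exact ENNReal.toReal_mono (hfin x hx (le_trans hxy hy1))
      (measure_mono (Set.Icc_subset_Icc_left hxy))
  -- ratio convergence
  have hratio : ∀ s : ℝ, 0 < s →
      Tendsto (fun b : ℕ => U (s / (b:ℝ)) / U (1 / (b:ℝ))) atTop (nhds (s ^ (-γ))) := by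
    intro s hs
    have hsv : Tendsto (fun b : ℕ => L (s * (1/(b:ℝ))) / L (1/(b:ℝ))) atTop (nhds 1) :=
      (hLslow s hs).comp aux_one_div_nat
    have hmul : Tendsto (fun b : ℕ => s ^ (-γ) * (L (s * (1/(b:ℝ))) / L (1/(b:ℝ))))
        atTop (nhds (s ^ (-γ))) := by
      have := hsv.const_mul (s ^ (-γ))
      simpa using this
    apply hmul.congr'
    filter_upwards [eventually_ge_atTop (max 1 (Nat.ceil s))] with b hb
    have hb1 : 1 ≤ b := le_trans (le_max_left _ _) hb
    have hbs : s ≤ (b:ℝ) := by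
      have : Nat.ceil s ≤ b := le_trans (le_max_right _ _) hb
      calc s ≤ (Nat.ceil s : ℝ) := Nat.le_ceil s
      _ ≤ (b:ℝ) := by exact_mod_cast this
    have hb0 : (0:ℝ) < b := by exact_mod_cast hb1
    have h1b : (0:ℝ) < 1/(b:ℝ) := by positivity
    have h1b1 : 1/(b:ℝ) ≤ 1 := by
      rw [div_le_one hb0]; exact_mod_cast hb1
    have hsb0 : (0:ℝ) < s/(b:ℝ) := by positivity
    have hsb1 : s/(b:ℝ) ≤ 1 := by
      rw [div_le_one hb0]; exact hbs
    rw [hUeq _ hsb0 hsb1, hUeq _ h1b h1b1]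
    have hsplit : (s/(b:ℝ)) ^ (-γ) = s ^ (-γ) * (1/(b:ℝ)) ^ (-γ) := by
      rw [show s/(b:ℝ) = s * (1/(b:ℝ)) by ring, Real.mul_rpow hs.le h1b.le]
    have hLb : L (1/(b:ℝ)) ≠ 0 := (hLpos _ ⟨h1b, h1b1⟩).ne'
    have hrb : (1/(b:ℝ)) ^ (-γ) ≠ 0 := (Real.rpow_pos_of_pos h1b _).ne'
    rw [hsplit, show s/(b:ℝ) = s * (1/(b:ℝ)) by ring]
    field_simp
  -- doubling and Potter bound
  have hhalf : Tendsto (fun ε => L ((1/2) * ε) / L ε) (nhdsWithin 0 (Set.Ioi 0)) (nhds 1) :=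
    hLslow (1/2) (by norm_num)
  set ρ : ℝ := 2 ^ (β - γ) with hρ
  have hρ1 : 1 < ρ := by
    rw [hρ]
    apply Real.one_lt_rpow_iff_of_pos two_pos |>.2
    left; exact ⟨one_lt_two, by linarith⟩
  obtain ⟨δ, hδ0, hδ⟩ : ∃ δ > 0, ∀ ε : ℝ, 0 < ε → ε < δ → L ((1/2) * ε) / L ε < ρ := by
    have hev := hhalf.eventually_lt_const hρ1
    rw [eventually_nhdsWithin_iff] at hev
    rw [Metric.eventually_nhds_iff] at hev
    obtain ⟨δ, hδ0, hδ⟩ := hev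
    refine ⟨δ, hδ0, fun ε hε0 hεδ => ?_⟩
    apply hδ _ hε0
    rwa [Real.dist_eq, sub_zero, abs_of_pos hε0]
  set ε₀ : ℝ := min (δ/2) 1 with hε₀def
  have hε₀0 : 0 < ε₀ := lt_min (by linarith) one_pos
  have hε₀1 : ε₀ ≤ 1 := min_le_right _ _
  have hε₀δ : ε₀ < δ := lt_of_le_of_lt (min_le_left _ _) (by linarith)
  have hdou : ∀ ε : ℝ, 0 < ε → ε ≤ ε₀ → U (ε / 2) ≤ 2 ^ β * U ε := by
    intro ε hε hεε₀
    have hε1 : ε ≤ 1 := le_trans hεε₀ hε₀1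
    have hεδ : ε < δ := lt_of_le_of_lt hεε₀ hε₀δ
    have hLd : L ((1/2) * ε) < ρ * L ε := by
      have h := hδ ε hε hεδ
      rwa [div_lt_iff₀ (hLpos ε ⟨hε, hε1⟩)] at h
    have he2 : (0:ℝ) < ε/2 := by linarith
    have he21 : ε/2 ≤ 1 := by linarith
    rw [hUeq _ he2 he21, hUeq _ hε hε1]
    have hhalfrw : (ε/2 : ℝ) ^ (-γ) = 2 ^ γ * ε ^ (-γ) := by
      rw [show (ε/2 : ℝ) = ε * (1/2) by ring, Real.mul_rpow hε.le (by norm_num),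
        show ((1:ℝ)/2) ^ (-γ) = 2 ^ γ by
          rw [one_div, Real.inv_rpow (by norm_num : (0:ℝ) ≤ 2), Real.rpow_neg (by norm_num : (0:ℝ) ≤ 2), inv_inv]]
      ring
    have hLd' : L (ε/2) < ρ * L ε := by
      rwa [show (1/2) * ε = ε/2 by ring] at hLd
    have hpos : (0:ℝ) < (ε/2) ^ (-γ) := Real.rpow_pos_of_pos he2 _
    calc (ε/2) ^ (-γ) * L (ε/2) ≤ (ε/2) ^ (-γ) * (ρ * L ε) := by
          apply mul_le_mul_of_nonneg_left hLd'.le hpos.le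
    _ = 2 ^ γ * ε ^ (-γ) * (ρ * L ε) := by rw [hhalfrw]
    _ = (2 ^ γ * ρ) * (ε ^ (-γ) * L ε) := by ring
    _ = 2 ^ β * (ε ^ (-γ) * L ε) := by
          rw [hρ, ← Real.rpow_add two_pos]
          ring_nf
  have hpotter := aux_potter hβ0 hε₀0 hε₀1 hUnn hUanti hdou
  -- global bound on U
  set Cb : ℝ := max (2 ^ β * ε₀ ^ β * U ε₀) (U ε₀) with hCbdef
  have hCb : 0 ≤ Cb := le_trans (hUnn ε₀) (le_max_right _ _)
  have hUbd : ∀ t : ℝ, 0 < t → t ≤ 1 → U t ≤ Cb * t ^ (-β) := by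
    intro t ht0 ht1
    rcases le_or_gt t ε₀ with hcase | hcase
    · have hs0 : 0 < t/ε₀ := by positivity
      have hs1 : t/ε₀ ≤ 1 := by rw [div_le_one hε₀0]; exact hcase
      have := hpotter ε₀ hε₀0 le_rfl (t/ε₀) hs0 hs1
      rw [div_mul_cancel₀ t hε₀0.ne'] at this
      refine le_trans this ?_
      have hrw : (t/ε₀) ^ (-β) = t ^ (-β) * ε₀ ^ β := by
        rw [Real.div_rpow ht0.le hε₀0.le, Real.rpow_neg hε₀0.le]
        rw [div_eq_mul_inv, inv_inv]
      rw [hrw]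
      calc 2 ^ β * (t ^ (-β) * ε₀ ^ β) * U ε₀ = (2 ^ β * ε₀ ^ β * U ε₀) * t ^ (-β) := by ring
      _ ≤ Cb * t ^ (-β) := by
          apply mul_le_mul_of_nonneg_right (le_max_left _ _) (Real.rpow_nonneg ht0.le _)
    · have h1 : U t ≤ U ε₀ := hUanti ε₀ t hε₀0 hcase.le ht1
      have h2 : (1:ℝ) ≤ t ^ (-β) :=
        Real.one_le_rpow_of_pos_of_le_one_of_nonpos ht0 ht1 (by linarith)
      calc U t ≤ U ε₀ := h1
      _ = U ε₀ * 1 := by ring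
      _ ≤ Cb * t ^ (-β) := by
          apply mul_le_mul (le_max_right _ _) h2 one_pos.le hCb
  -- Potter bound in eventual form
  have hpot : ∀ᶠ b : ℕ in atTop, ∀ s : ℝ, 0 < s → s ≤ 1 →
      U (s / (b:ℝ)) ≤ 2 ^ β * s ^ (-β) * U (1 / (b:ℝ)) := by
    have hev : ∀ᶠ b : ℕ in atTop, (1:ℝ)/(b:ℝ) < ε₀ ∧ 1 ≤ b := by
      apply Eventually.and
      · exact tendsto_one_div_atTop_nhds_zero_nat.eventually_lt_const hε₀0
      · exact eventually_ge_atTop 1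
    filter_upwards [hev] with b hb s hs0 hs1
    obtain ⟨hbε, hb1⟩ := hb
    have hb0 : (0:ℝ) < b := by exact_mod_cast hb1
    have h1b : (0:ℝ) < 1/(b:ℝ) := by positivity
    have := hpotter (1/(b:ℝ)) h1b hbε.le s hs0 hs1
    rwa [mul_one_div] at this
  -- DCT limits
  set I1 : ℕ → ℝ := fun b => ∫ s in Set.Ioc (0:ℝ) (b:ℝ),
      s ^ (k-1) * (1 - s / (b:ℝ)) ^ (b - k) * (U (s / (b:ℝ)) / U (1 / (b:ℝ))) with hI1
  set I2 : ℕ → ℝ := fun b => ∫ s in Set.Ioc (0:ℝ) (b:ℝ),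
      s ^ k * (1 - s / (b:ℝ)) ^ (b - (k+1)) * (U (s / (b:ℝ)) / U (1 / (b:ℝ))) with hI2
  have hC2β : (0:ℝ) ≤ 2 ^ β := (Real.rpow_pos_of_pos two_pos β).le
  have lim2 : Tendsto I1 atTop (nhds (Real.Gamma ((k:ℝ) - γ))) := by
    have h := aux_dct hγ0 hγβ hβ2 hC2β hUmeas hUnn hUanti hUpos hratio hpot (k-1) (by omega) k
    have hcast : (((k-1:ℕ)):ℝ) + 1 - γ = (k:ℝ) - γ := by
      rw [Nat.cast_sub (by omega : 1 ≤ k)]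
      push_cast; ring
    rw [hcast] at h
    exact h
  have lim3 : Tendsto I2 atTop (nhds (Real.Gamma ((k:ℝ) + 1 - γ))) :=
    aux_dct hγ0 hγβ hβ2 hC2β hUmeas hUnn hUanti hUpos hratio hpot k (by omega) (k+1)
  have lim4 : Tendsto (fun b : ℕ => ((b-k:ℕ):ℝ) / (b:ℝ)) atTop (nhds 1) := by
    have hbase : Tendsto (fun b : ℕ => 1 - (k:ℝ) * (1/(b:ℝ))) atTop (nhds 1) := by
      have := (tendsto_one_div_atTop_nhds_zero_nat.const_mul (k:ℝ)).const_sub 1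
      simpa using this
    apply hbase.congr'
    filter_upwards [eventually_ge_atTop (k+1)] with b hb
    have hb0 : (0:ℝ) < b := by
      have : 1 ≤ b := by omega
      exact_mod_cast this
    rw [Nat.cast_sub (by omega : k ≤ b)]
    field_simp
  have hfinal : Tendsto (fun b : ℕ => ((b.choose k : ℝ)/(b:ℝ)^k)
      * ((k:ℝ) * I1 b - (((b-k:ℕ):ℝ)/(b:ℝ)) * I2 b)) atTop
      (nhds ((1/(k.factorial:ℝ)) * ((k:ℝ) * Real.Gamma ((k:ℝ)-γ)
        - 1 * Real.Gamma ((k:ℝ)+1-γ)))) :=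
    (aux_choose_lim k).mul ((lim2.const_mul (k:ℝ)).sub (lim4.mul lim3))
  have hval : (1/(k.factorial:ℝ)) * ((k:ℝ) * Real.Gamma ((k:ℝ)-γ)
      - 1 * Real.Gamma ((k:ℝ)+1-γ))
      = γ * Real.Gamma ((k:ℝ) - γ) / (k.factorial:ℝ) := by
    have hk2 : (2:ℝ) ≤ (k:ℝ) := by exact_mod_cast hk
    have hne : (k:ℝ) - γ ≠ 0 := by linarith
    have h1 : (k:ℝ) + 1 - γ = ((k:ℝ) - γ) + 1 := by ring
    rw [h1, Real.Gamma_add_one hne]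
    ring
  rw [hval] at hfinal
  apply hfinal.congr'
  filter_upwards [eventually_ge_atTop (k+2)] with b hb
  have hbR : (0:ℝ) < b := by
    have : 1 ≤ b := by omega
    exact_mod_cast this
  have hbne : (b:ℝ) ≠ 0 := hbR.ne'
  have h1b : (0:ℝ) < 1/(b:ℝ) := by positivity
  have h1b1 : 1/(b:ℝ) ≤ 1 := by
    rw [div_le_one hbR]
    have : 1 ≤ b := by omega
    exact_mod_cast this
  have hU1pos : 0 < U (1/(b:ℝ)) := hUpos _ h1b h1b1
  have hU1ne : U (1/(b:ℝ)) ≠ 0 := hU1pos.ne'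
  have hnum := aux_identity ν hνmem hνmom hU hUmeas hUnn hfin hβ2 hCb hUbd k b hk hb
  have hscale : ∀ (c : ℝ) (n m : ℕ), (∫ t in Set.Ioc (0:ℝ) 1, (c * t^n * (1-t)^m) * U t)
      = (b:ℝ)⁻¹ * (c * ((b:ℝ)^n)⁻¹ * U (1/(b:ℝ)))
        * ∫ s in Set.Ioc (0:ℝ) (b:ℝ), s^n * (1-s/(b:ℝ))^m * (U (s/(b:ℝ))/U (1/(b:ℝ))) := by
    intro c n m
    set f : ℝ → ℝ := fun t => (c * t^n * (1-t)^m) * U t with hf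
    have h1 : ∫ s in (0:ℝ)..(b:ℝ), f (s/(b:ℝ)) = (b:ℝ) • ∫ t in (0:ℝ)..(1:ℝ), f t := by
      have := intervalIntegral.integral_comp_div (a := (0:ℝ)) (b := (b:ℝ)) (c := (b:ℝ))
        (f := f) hbne
      rwa [zero_div, div_self hbne] at this
    have h2 : ∀ s : ℝ, f (s/(b:ℝ)) = (c * ((b:ℝ)^n)⁻¹ * U (1/(b:ℝ)))
        * (s^n * (1-s/(b:ℝ))^m * (U (s/(b:ℝ))/U (1/(b:ℝ)))) := by
      intro s
      show (c * (s/(b:ℝ))^n * (1-s/(b:ℝ))^m) * U (s/(b:ℝ)) = _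
      rw [div_pow]
      have e : U (s/(b:ℝ))/U (1/(b:ℝ)) * U (1/(b:ℝ)) = U (s/(b:ℝ)) :=
        div_mul_cancel₀ _ hU1ne
      field_simp
    calc ∫ t in Set.Ioc (0:ℝ) 1, f t = ∫ t in (0:ℝ)..(1:ℝ), f t :=
          (intervalIntegral.integral_of_le zero_le_one).symm
    _ = (b:ℝ)⁻¹ * ∫ s in (0:ℝ)..(b:ℝ), f (s/(b:ℝ)) := by
          rw [h1, smul_eq_mul, ← mul_assoc, inv_mul_cancel₀ hbne, one_mul]
    _ = (b:ℝ)⁻¹ * ∫ s in (0:ℝ)..(b:ℝ), (c * ((b:ℝ)^n)⁻¹ * U (1/(b:ℝ)))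
          * (s^n * (1-s/(b:ℝ))^m * (U (s/(b:ℝ))/U (1/(b:ℝ)))) := by
          congr 1
          apply intervalIntegral.integral_congr
          intro s _
          exact h2 s
    _ = (b:ℝ)⁻¹ * ((c * ((b:ℝ)^n)⁻¹ * U (1/(b:ℝ)))
          * ∫ s in (0:ℝ)..(b:ℝ), s^n * (1-s/(b:ℝ))^m * (U (s/(b:ℝ))/U (1/(b:ℝ)))) := by
          rw [intervalIntegral.integral_const_mul]
    _ = (b:ℝ)⁻¹ * (c * ((b:ℝ)^n)⁻¹ * U (1/(b:ℝ)))
          * ∫ s in Set.Ioc (0:ℝ) (b:ℝ), s^n * (1-s/(b:ℝ))^m * (U (s/(b:ℝ))/U (1/(b:ℝ))) := by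
          rw [intervalIntegral.integral_of_le hbR.le]
          ring
  have hS1 := hscale (k:ℝ) (k-1) (b-k)
  have hS2 := hscale ((b-k:ℕ):ℝ) k (b-(k+1))
  have hden : (b:ℝ) ^ γ * L (1/(b:ℝ)) = U (1/(b:ℝ)) := by
    rw [hUeq _ h1b h1b1]
    congr 1
    rw [one_div, Real.inv_rpow hbR.le, Real.rpow_neg hbR.le, inv_inv]
  have hpowk : (b:ℝ) ^ k = (b:ℝ) ^ (k-1) * (b:ℝ) := by
    rw [← pow_succ]
    congr 1
    omega
  rw [hnum, hS1, hS2, hden]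
  rw [hI1, hI2]
  have hbk1 : ((b:ℝ):ℝ) ^ (k-1) ≠ 0 := pow_ne_zero _ hbne
  have hbkk : ((b:ℝ):ℝ) ^ k ≠ 0 := pow_ne_zero _ hbne
  field_simp
  ring_nf
  rw [hpowk]
  ring
  congr 1
  congr 1
  exact integral_congr_ae (ae_of_all _ fun s => by beta_reduce; ring_nf)
end

section
/- For every γ ∈ (1,2), ∑_{k=2}^{∞} (k−1) γ Γ(k−γ) / k! = Γ(2−γ)/(γ−1), where Γ is the Gamma function and the series converges. -/
open Filter Finset

private noncomputable def stmt18E (γ : ℝ) (n : ℕ) : ℝ :=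
  Real.Gamma ((n : ℝ) + 2 - γ) / (n.factorial : ℝ)

private noncomputable def stmt18F (γ : ℝ) (n : ℕ) : ℝ :=
  stmt18E γ n + stmt18E γ (n + 1) / (γ - 1)

private lemma stmt18E_pos {γ : ℝ} (h2 : γ < 2) (n : ℕ) : 0 < stmt18E γ n := by
  apply div_pos
  · apply Real.Gamma_pos_of_pos
    have : (0:ℝ) ≤ (n:ℝ) := Nat.cast_nonneg n
    linarith
  · exact_mod_cast Nat.factorial_pos n

private lemma stmt18E_rec {γ : ℝ} (h2 : γ < 2) (n : ℕ) :
    stmt18E γ (n + 1) = (((n : ℝ) + 2 - γ) / ((n : ℝ) + 1)) * stmt18E γ n := by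
  have hx : ((n : ℝ) + 2 - γ) ≠ 0 := by
    have : (0:ℝ) ≤ (n:ℝ) := Nat.cast_nonneg n
    intro h; linarith
  have hcast : (((n + 1 : ℕ) : ℝ)) + 2 - γ = ((n : ℝ) + 2 - γ) + 1 := by push_cast; ring
  have hfac : (((n + 1).factorial : ℕ) : ℝ) = ((n : ℝ) + 1) * (n.factorial : ℝ) := by
    rw [Nat.factorial_succ]; push_cast; ring
  have hn1 : ((n : ℝ) + 1) ≠ 0 := by positivity
  have hfn : ((n.factorial : ℕ) : ℝ) ≠ 0 := by exact_mod_cast (Nat.factorial_pos n).ne'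
  unfold stmt18E
  rw [hcast, Real.Gamma_add_one hx, hfac]
  field_simp

private lemma stmt18E_anti {γ : ℝ} (h1 : 1 < γ) (h2 : γ < 2) : Antitone (stmt18E γ) := by
  apply antitone_nat_of_succ_le
  intro n
  rw [stmt18E_rec h2 n]
  have hE := stmt18E_pos h2 n
  have hn1 : (0:ℝ) < (n : ℝ) + 1 := by positivity
  have hr : ((n : ℝ) + 2 - γ) / ((n : ℝ) + 1) ≤ 1 := by
    rw [div_le_one hn1]; linarith
  nlinarith

private lemma stmt18E_tendsto_zero {γ : ℝ} (h1 : 1 < γ) (h2 : γ < 2) :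
    Tendsto (stmt18E γ) atTop (nhds 0) := by
  have hbdd : BddBelow (Set.range (stmt18E γ)) :=
    ⟨0, by rintro x ⟨n, rfl⟩; exact (stmt18E_pos h2 n).le⟩
  have htend := tendsto_atTop_ciInf (stmt18E_anti h1 h2) hbdd
  set l := ⨅ n, stmt18E γ n with hl
  have hl0 : 0 ≤ l := le_ciInf fun n => (stmt18E_pos h2 n).le
  have hle : ∀ n, l ≤ stmt18E γ n := fun n => ciInf_le hbdd n
  -- the differences are summable by telescoping
  have hD : Summable (fun n => stmt18E γ n - stmt18E γ (n + 1)) := by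
    apply summable_of_sum_range_le (c := stmt18E γ 0)
    · intro n; have := stmt18E_anti h1 h2 (Nat.le_succ n); linarith
    · intro n
      rw [Finset.sum_range_sub' (stmt18E γ) n]
      have := stmt18E_pos h2 n
      linarith
  have hlzero : l = 0 := by
    by_contra hne
    have hlpos : 0 < l := lt_of_le_of_ne hl0 (Ne.symm hne)
    -- stmt18E γ n - stmt18E γ (n+1) = (γ-1)/(n+1) * stmt18E γ n ≥ (γ-1) l /(n+1)
    have hbound : ∀ n : ℕ, (γ - 1) * l * (1 / ((n : ℝ) + 1)) ≤
        stmt18E γ n - stmt18E γ (n + 1) := by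
      intro n
      rw [stmt18E_rec h2 n]
      have hn1 : (0:ℝ) < (n : ℝ) + 1 := by positivity
      have : stmt18E γ n - ((n : ℝ) + 2 - γ) / ((n : ℝ) + 1) * stmt18E γ n
          = (γ - 1) / ((n : ℝ) + 1) * stmt18E γ n := by
        field_simp; ring
      rw [this]
      rw [div_mul_eq_mul_div, mul_one_div, div_le_div_iff₀ hn1 hn1]
      have hg : (0:ℝ) < γ - 1 := by linarith
      nlinarith [mul_nonneg (mul_nonneg hg.le (sub_nonneg.mpr (hle n))) hn1.le]
    have hsum : Summable (fun n : ℕ => (γ - 1) * l * (1 / ((n : ℝ) + 1))) := by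
      apply Summable.of_nonneg_of_le _ hbound hD
      intro n
      have hn1 : (0:ℝ) ≤ 1 / ((n : ℝ) + 1) := by positivity
      have hg : (0:ℝ) ≤ γ - 1 := by linarith
      exact mul_nonneg (mul_nonneg hg hlpos.le) hn1
    have hc : ((γ - 1) * l) ≠ 0 := by
      have : 0 < γ - 1 := by linarith
      positivity
    have hsum2 : Summable (fun n : ℕ => 1 / ((n : ℝ) + 1)) := by
      have h := hsum.mul_left (((γ - 1) * l)⁻¹)
      refine h.congr fun n => ?_
      rw [← mul_assoc, inv_mul_cancel₀ hc, one_mul]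
    have hsum3 : Summable (fun n : ℕ => 1 / ((n : ℝ))) := by
      rw [← summable_nat_add_iff 1]
      convert hsum2 using 2 with n
      all_goals push_cast
      all_goals rfl
    exact Real.not_summable_one_div_natCast hsum3
  rw [hlzero] at htend
  exact htend

private lemma stmt18F_tendsto_zero {γ : ℝ} (h1 : 1 < γ) (h2 : γ < 2) :
    Tendsto (stmt18F γ) atTop (nhds 0) := by
  have hE := stmt18E_tendsto_zero h1 h2
  have hE1 : Tendsto (fun n => stmt18E γ (n + 1)) atTop (nhds 0) :=
    hE.comp (tendsto_add_atTop_nat 1)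
  have := hE.add (hE1.div_const (γ - 1))
  rw [zero_div, add_zero] at this
  exact this

private lemma stmt18_term_eq {γ : ℝ} (h1 : 1 < γ) (h2 : γ < 2) (k : ℕ) :
    ((k : ℝ) + 2 - 1) * γ * Real.Gamma ((k : ℝ) + 2 - γ) / (((k + 2).factorial : ℕ) : ℝ)
      = stmt18F γ k - stmt18F γ (k + 1) := by
  have hfn : ((k.factorial : ℕ) : ℝ) ≠ 0 := by exact_mod_cast (k.factorial_pos).ne'
  have hG : Real.Gamma ((k : ℝ) + 2 - γ) = stmt18E γ k * (k.factorial : ℝ) := by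
    unfold stmt18E; field_simp
  have hfac : (((k + 2).factorial : ℕ) : ℝ) = ((k : ℝ) + 2) * ((k : ℝ) + 1) * (k.factorial : ℝ) := by
    show (((k + 1 + 1).factorial : ℕ) : ℝ) = _
    rw [Nat.factorial_succ, Nat.factorial_succ]
    push_cast; ring
  have hE1 : stmt18E γ (k + 1) = (((k : ℝ) + 2 - γ) / ((k : ℝ) + 1)) * stmt18E γ k :=
    stmt18E_rec h2 k
  have hE2 : stmt18E γ (k + 2) = (((k : ℝ) + 3 - γ) / ((k : ℝ) + 2)) * stmt18E γ (k + 1) := by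
    have := stmt18E_rec h2 (k + 1)
    push_cast at this ⊢
    convert this using 3 <;> push_cast <;> ring
  unfold stmt18F
  rw [hG, hfac, hE2, hE1]
  have hk1 : ((k : ℝ) + 1) ≠ 0 := by positivity
  have hk2 : ((k : ℝ) + 2) ≠ 0 := by positivity
  have hg1 : γ - 1 ≠ 0 := by intro h; linarith
  field_simp
  ring

/-- For every `γ ∈ (1,2)`,
`∑_{k=2}^∞ (k-1) γ Γ(k-γ)/k! = Γ(2-γ)/(γ-1)`, the series being convergent. -/
theorem stmt18 (γ : ℝ) (hγ : γ ∈ Set.Ioo (1 : ℝ) 2) :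
    (Summable fun k : ℕ =>
      ((k : ℝ) + 2 - 1) * γ * Real.Gamma ((k : ℝ) + 2 - γ) /
        ((k + 2).factorial : ℝ)) ∧
    ∑' k : ℕ, ((k : ℝ) + 2 - 1) * γ * Real.Gamma ((k : ℝ) + 2 - γ) /
        ((k + 2).factorial : ℝ)
      = Real.Gamma (2 - γ) / (γ - 1) := by
  obtain ⟨h1, h2⟩ := hγ
  have hterm := stmt18_term_eq h1 h2
  have hF_nonneg : ∀ n, 0 ≤ stmt18F γ n := by
    intro n
    have hg1 : (0:ℝ) < γ - 1 := by linarith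
    have := stmt18E_pos h2 n
    have := stmt18E_pos h2 (n + 1)
    have : 0 ≤ stmt18E γ (n + 1) / (γ - 1) := by positivity
    unfold stmt18F
    nlinarith [stmt18E_pos h2 n]
  have hnonneg : ∀ k : ℕ, 0 ≤ ((k : ℝ) + 2 - 1) * γ * Real.Gamma ((k : ℝ) + 2 - γ) /
      ((k + 2).factorial : ℝ) := by
    intro k
    have hG : 0 < Real.Gamma ((k : ℝ) + 2 - γ) := by
      apply Real.Gamma_pos_of_pos
      have : (0:ℝ) ≤ (k:ℝ) := Nat.cast_nonneg k
      linarith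
    have hf : (0:ℝ) < (((k + 2).factorial : ℕ) : ℝ) := by exact_mod_cast (k+2).factorial_pos
    have hk : (0:ℝ) ≤ (k:ℝ) := Nat.cast_nonneg k
    have hγ0 : (0:ℝ) < γ := by linarith
    apply div_nonneg _ hf.le
    exact mul_nonneg (mul_nonneg (by linarith) hγ0.le) hG.le
  have hpartial : ∀ n : ℕ, ∑ i ∈ Finset.range n,
      ((i : ℝ) + 2 - 1) * γ * Real.Gamma ((i : ℝ) + 2 - γ) / ((i + 2).factorial : ℝ)
      = stmt18F γ 0 - stmt18F γ n := by
    intro n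
    rw [show (∑ i ∈ Finset.range n,
        ((i : ℝ) + 2 - 1) * γ * Real.Gamma ((i : ℝ) + 2 - γ) / ((i + 2).factorial : ℝ))
      = ∑ i ∈ Finset.range n, (stmt18F γ i - stmt18F γ (i + 1)) from
        Finset.sum_congr rfl fun i _ => hterm i]
    exact Finset.sum_range_sub' (stmt18F γ) n
  have hsummable : Summable fun k : ℕ =>
      ((k : ℝ) + 2 - 1) * γ * Real.Gamma ((k : ℝ) + 2 - γ) / ((k + 2).factorial : ℝ) := by
    apply summable_of_sum_range_le (c := stmt18F γ 0) hnonneg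
    intro n
    rw [hpartial n]
    have := hF_nonneg n
    linarith
  refine ⟨hsummable, ?_⟩
  have hF0 : stmt18F γ 0 = Real.Gamma (2 - γ) / (γ - 1) := by
    have hx : (2 - γ) ≠ 0 := by intro h; linarith
    have hG3 : Real.Gamma (3 - γ) = (2 - γ) * Real.Gamma (2 - γ) := by
      rw [show (3:ℝ) - γ = (2 - γ) + 1 by ring, Real.Gamma_add_one hx]
    unfold stmt18F stmt18E
    norm_num
    rw [hG3]
    have hg1 : γ - 1 ≠ 0 := by intro h; linarith
    field_simp
    ring
  have hHasSum : HasSum (fun k : ℕ =>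
      ((k : ℝ) + 2 - 1) * γ * Real.Gamma ((k : ℝ) + 2 - γ) / ((k + 2).factorial : ℝ))
      (stmt18F γ 0) := by
    rw [hsummable.hasSum_iff_tendsto_nat]
    have : Tendsto (fun n => stmt18F γ 0 - stmt18F γ n) atTop (nhds (stmt18F γ 0 - 0)) :=
      (tendsto_const_nhds).sub (stmt18F_tendsto_zero h1 h2)
    rw [sub_zero] at this
    exact this.congr fun n => (hpartial n).symm
  rw [hHasSum.tsum_eq, hF0]
end
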